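/- arXiv:1206.4083 — 8 statements merged into one kernel-verified Lean document; each statement's English description precedes it below -/
import Mathlib

section
/- Let Ω, U ⊆ ℝⁿ be open sets, Φ : Ω → U a C² diffeomorphism, X : Ω → ℝⁿ a C¹ vector field, and h : U → ℝ a C¹ function that vanishes nowhere on U, such that the pushforward of X by Φ equals h·E, i.e. DΦ(x)·X(x) = h(Φ(x))·Φ(x) for all x ∈ Ω. Let Ȳ : U → ℝⁿ be a C¹ vector field with [E, Ȳ] = 0 on U, and define the pullback Y(x) = (DΦ(x))⁻¹·Ȳ(Φ(x)). Then Y is a Lie symmetry of X: [X, Y](x) = μ(x)·X(x) for all x ∈ Ω, where μ(x) = −(∇h(Φ(x))·Ȳ(Φ(x)))/h(Φ(x)). -/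
/-- The Lie bracket of two vector fields on `ℝⁿ`:
`[X,Y](x) = DY(x)·X(x) − DX(x)·Y(x)`. -/
noncomputable def lieBracket (n : ℕ) (X Y : (Fin n → ℝ) → (Fin n → ℝ))
    (x : Fin n → ℝ) : Fin n → ℝ :=
  fderiv ℝ Y x (X x) - fderiv ℝ X x (Y x)

/-- The Euler vector field `E(u) = u` on `ℝⁿ`. -/
def eulerVF (n : ℕ) : (Fin n → ℝ) → (Fin n → ℝ) := fun u => u

theorem stmt_0 (n : ℕ) (Ω U : Set (Fin n → ℝ)) (hΩ : IsOpen Ω) (hU : IsOpen U)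
    -- `Φ : Ω → U` is a `C²` diffeomorphism with inverse `Ψ`
    (Φ Ψ : (Fin n → ℝ) → (Fin n → ℝ))
    (hΦ : ContDiffOn ℝ 2 Φ Ω) (hΨ : ContDiffOn ℝ 2 Ψ U)
    (hΦU : Φ '' Ω = U) (hΨΩ : Set.MapsTo Ψ U Ω)
    (hinv₁ : ∀ x ∈ Ω, Ψ (Φ x) = x) (hinv₂ : ∀ u ∈ U, Φ (Ψ u) = u)
    -- `X` is a `C¹` vector field on `Ω`
    (X : (Fin n → ℝ) → (Fin n → ℝ)) (hX : ContDiffOn ℝ 1 X Ω)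
    -- `h` is a `C¹` function vanishing nowhere on `U`
    (h : (Fin n → ℝ) → ℝ) (hh : ContDiffOn ℝ 1 h U) (hh0 : ∀ u ∈ U, h u ≠ 0)
    -- the pushforward of `X` by `Φ` equals `h • E`
    (hpush : ∀ x ∈ Ω, fderiv ℝ Φ x (X x) = h (Φ x) • Φ x)
    -- `Ȳ` is a `C¹` vector field on `U` with `[E, Ȳ] = 0`
    (Ybar : (Fin n → ℝ) → (Fin n → ℝ)) (hYbar : ContDiffOn ℝ 1 Ybar U)
    (hE : ∀ u ∈ U, lieBracket n (eulerVF n) Ybar u = 0)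
    -- the pullback `Y(x) = (DΦ(x))⁻¹ · Ȳ(Φ(x)) = DΨ(Φ(x)) · Ȳ(Φ(x))`
    (Y : (Fin n → ℝ) → (Fin n → ℝ))
    (hY : ∀ x ∈ Ω, Y x = fderiv ℝ Ψ (Φ x) (Ybar (Φ x)))
    -- the scalar function `μ(x) = −(∇h(Φ(x))·Ȳ(Φ(x))) / h(Φ(x))`
    (μ : (Fin n → ℝ) → ℝ)
    (hμ : ∀ x ∈ Ω, μ x = -(fderiv ℝ h (Φ x) (Ybar (Φ x))) / h (Φ x)) :
    -- then `Y` is a Lie symmetry of `X`: `[X, Y] = μ • X` on `Ω`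
    ∀ x ∈ Ω, lieBracket n X Y x = μ x • X x := by
  intro x hx
  have hu : Φ x ∈ U := hΦU ▸ ⟨x, hx, rfl⟩
  -- basic smoothness facts
  have cΦ : ContDiffAt ℝ 2 Φ x := hΦ.contDiffAt (hΩ.mem_nhds hx)
  have cΨ : ContDiffAt ℝ 2 Ψ (Φ x) := hΨ.contDiffAt (hU.mem_nhds hu)
  have dΦ : DifferentiableAt ℝ Φ x := cΦ.differentiableAt (by norm_num)
  have dΨ : DifferentiableAt ℝ Ψ (Φ x) := cΨ.differentiableAt (by norm_num)
  have dX : DifferentiableAt ℝ X x :=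
    (hX.contDiffAt (hΩ.mem_nhds hx)).differentiableAt one_ne_zero
  have dYb : DifferentiableAt ℝ Ybar (Φ x) :=
    (hYbar.contDiffAt (hU.mem_nhds hu)).differentiableAt one_ne_zero
  have dh : DifferentiableAt ℝ h (Φ x) :=
    (hh.contDiffAt (hU.mem_nhds hu)).differentiableAt one_ne_zero
  have ddΦ : DifferentiableAt ℝ (fderiv ℝ Φ) x :=
    (cΦ.fderiv_right (by norm_num)).differentiableAt one_ne_zero
  have ddΨ : DifferentiableAt ℝ (fderiv ℝ Ψ) (Φ x) :=
    (cΨ.fderiv_right (by norm_num)).differentiableAt one_ne_zero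
  -- left inverse of the differential
  have lid : (fderiv ℝ Ψ (Φ x)).comp (fderiv ℝ Φ x) = ContinuousLinearMap.id ℝ _ := by
    have hev : (Ψ ∘ Φ) =ᶠ[nhds x] id := by
      filter_upwards [hΩ.mem_nhds hx] with y hy using hinv₁ y hy
    have h1 : fderiv ℝ (Ψ ∘ Φ) x = (fderiv ℝ Ψ (Φ x)).comp (fderiv ℝ Φ x) :=
      fderiv_comp x dΨ dΦ
    rw [← h1, hev.fderiv_eq, fderiv_id]
  have linj : ∀ v, fderiv ℝ Ψ (Φ x) (fderiv ℝ Φ x v) = v := fun v => by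
    have := ContinuousLinearMap.ext_iff.mp lid v
    simpa using this
  -- right inverse at any point of U
  have rid : ∀ v ∈ U, ∀ w, fderiv ℝ Φ (Ψ v) (fderiv ℝ Ψ v w) = w := by
    intro v hv w
    have hvΩ : Ψ v ∈ Ω := hΨΩ hv
    have dΨv : DifferentiableAt ℝ Ψ v :=
      (hΨ.contDiffAt (hU.mem_nhds hv)).differentiableAt (by norm_num)
    have dΦv : DifferentiableAt ℝ Φ (Ψ v) :=
      (hΦ.contDiffAt (hΩ.mem_nhds hvΩ)).differentiableAt (by norm_num)
    have hev : (Φ ∘ Ψ) =ᶠ[nhds v] id := by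
      filter_upwards [hU.mem_nhds hv] with z hz using hinv₂ z hz
    have h1 : fderiv ℝ (Φ ∘ Ψ) v = (fderiv ℝ Φ (Ψ v)).comp (fderiv ℝ Ψ v) :=
      fderiv_comp v dΦv dΨv
    have h2 : (fderiv ℝ Φ (Ψ v)).comp (fderiv ℝ Ψ v) = ContinuousLinearMap.id ℝ _ := by
      rw [← h1, hev.fderiv_eq, fderiv_id]
    have := ContinuousLinearMap.ext_iff.mp h2 w
    simpa using this
  -- key identity A : DΦ(y)(Y y) = Ybar (Φ y) on Ω
  have keyA : ∀ y ∈ Ω, fderiv ℝ Φ y (Y y) = Ybar (Φ y) := by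
    intro y hy
    have hΦy : Φ y ∈ U := hΦU ▸ ⟨y, hy, rfl⟩
    rw [hY y hy]
    have := rid (Φ y) hΦy (Ybar (Φ y))
    rwa [hinv₁ y hy] at this
  have keyAx : fderiv ℝ Φ x (Y x) = Ybar (Φ x) := keyA x hx
  -- differentiability of Y at x
  have dG : DifferentiableAt ℝ (fun v => fderiv ℝ Ψ v (Ybar v)) (Φ x) := ddΨ.clm_apply dYb
  have hYev : Y =ᶠ[nhds x] ((fun v => fderiv ℝ Ψ v (Ybar v)) ∘ Φ) := by
    filter_upwards [hΩ.mem_nhds hx] with y hy using hY y hy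
  have dY : DifferentiableAt ℝ Y x := (dG.comp x dΦ).congr_of_eventuallyEq hYev
  -- Euler identity: D Ybar(u) u = Ybar u
  have hEu : fderiv ℝ Ybar (Φ x) (Φ x) = Ybar (Φ x) := by
    have h0 := hE (Φ x) hu
    have hid : fderiv ℝ (eulerVF n) (Φ x) = ContinuousLinearMap.id ℝ (Fin n → ℝ) :=
      fderiv_id'
    simp only [lieBracket, eulerVF, hid] at h0
    have := sub_eq_zero.mp h0
    simpa using this
  -- eq1 : differentiate keyA at x in direction X x
  have eq1 : fderiv ℝ Φ x (fderiv ℝ Y x (X x)) + fderiv ℝ (fderiv ℝ Φ) x (X x) (Y x)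
      = h (Φ x) • Ybar (Φ x) := by
    have hev : (fun y => fderiv ℝ Φ y (Y y)) =ᶠ[nhds x] (fun y => Ybar (Φ y)) := by
      filter_upwards [hΩ.mem_nhds hx] with y hy using keyA y hy
    have hL : fderiv ℝ (fun y => fderiv ℝ Φ y (Y y)) x
        = (fderiv ℝ Φ x).comp (fderiv ℝ Y x) + (fderiv ℝ (fderiv ℝ Φ) x).flip (Y x) :=
      fderiv_clm_apply ddΦ dY
    have hR : fderiv ℝ (fun y => Ybar (Φ y)) x = (fderiv ℝ Ybar (Φ x)).comp (fderiv ℝ Φ x) :=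
      fderiv_comp x dYb dΦ
    have e := congrArg (fun L : (Fin n → ℝ) →L[ℝ] (Fin n → ℝ) => L (X x)) (hL.symm.trans (hev.fderiv_eq.trans hR))
    simp only [ContinuousLinearMap.add_apply, ContinuousLinearMap.comp_apply,
      ContinuousLinearMap.flip_apply] at e
    rw [e, hpush x hx, map_smul, hEu]
  -- eq2 : differentiate hpush at x in direction Y x
  have eq2 : fderiv ℝ Φ x (fderiv ℝ X x (Y x)) + fderiv ℝ (fderiv ℝ Φ) x (Y x) (X x)
      = h (Φ x) • Ybar (Φ x) + (fderiv ℝ h (Φ x) (Ybar (Φ x))) • Φ x := by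
    have hev : (fun y => fderiv ℝ Φ y (X y)) =ᶠ[nhds x] (fun y => h (Φ y) • Φ y) := by
      filter_upwards [hΩ.mem_nhds hx] with y hy using hpush y hy
    have hL : fderiv ℝ (fun y => fderiv ℝ Φ y (X y)) x
        = (fderiv ℝ Φ x).comp (fderiv ℝ X x) + (fderiv ℝ (fderiv ℝ Φ) x).flip (X x) :=
      fderiv_clm_apply ddΦ dX
    have dhΦ : DifferentiableAt ℝ (fun y => h (Φ y)) x := dh.comp x dΦ
    have hR : fderiv ℝ (fun y => h (Φ y) • Φ y) x
        = h (Φ x) • fderiv ℝ Φ x + (fderiv ℝ (fun y => h (Φ y)) x).smulRight (Φ x) :=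
      fderiv_smul dhΦ dΦ
    have hhc : fderiv ℝ (fun y => h (Φ y)) x = (fderiv ℝ h (Φ x)).comp (fderiv ℝ Φ x) :=
      fderiv_comp x dh dΦ
    have e := congrArg (fun L : (Fin n → ℝ) →L[ℝ] (Fin n → ℝ) => L (Y x)) (hL.symm.trans (hev.fderiv_eq.trans hR))
    simp only [ContinuousLinearMap.add_apply, ContinuousLinearMap.comp_apply,
      ContinuousLinearMap.flip_apply, ContinuousLinearMap.smul_apply,
      ContinuousLinearMap.smulRight_apply, hhc] at e
    rw [e, keyAx]
  -- symmetry of the second derivative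
  have symm : fderiv ℝ (fderiv ℝ Φ) x (X x) (Y x) = fderiv ℝ (fderiv ℝ Φ) x (Y x) (X x) :=
    (cΦ.isSymmSndFDerivAt (by norm_num)) (X x) (Y x)
  -- combine
  have key : fderiv ℝ Φ x (lieBracket n X Y x)
      = (-(fderiv ℝ h (Φ x) (Ybar (Φ x)))) • Φ x := by
    rw [lieBracket, map_sub]
    have e3 := congrArg₂ (fun a b : Fin n → ℝ => a - b) eq1 eq2
    rw [symm] at e3
    try simp only at e3
    have e4 : fderiv ℝ Φ x (fderiv ℝ Y x (X x)) - fderiv ℝ Φ x (fderiv ℝ X x (Y x))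
        = h (Φ x) • Ybar (Φ x)
          - (h (Φ x) • Ybar (Φ x) + (fderiv ℝ h (Φ x) (Ybar (Φ x))) • Φ x) := by
      rw [← e3]; abel
    rw [e4]; module
  have key2 : fderiv ℝ Φ x (μ x • X x) = (-(fderiv ℝ h (Φ x) (Ybar (Φ x)))) • Φ x := by
    rw [map_smul, hpush x hx, hμ x hx, smul_smul, div_mul_cancel₀ _ (hh0 _ hu)]
  have e := congrArg (fderiv ℝ Ψ (Φ x)) (key.trans key2.symm)
  rwa [linj, linj] at e
end

section
/- Let n ≥ 3, let Ω ⊆ ℝⁿ be open, let C₁,…,C_{n−2}, H : Ω → ℝ be C² functions, let ν : Ω → ℝ be a nowhere-vanishing C¹ function, and let X = ν·V where V is the Nambu vector field associated to C₁,…,C_{n−2}, H. Define Φ : Ω → ℝⁿ by Φ = (1/ν, C₁/ν, C₂/ν, …, C_{n−2}/ν, H/ν). Then for every x ∈ Ω, DΦ(x)·X(x) = −div X(x)·Φ(x). (In particular, after the time reparametrization ds = −div X dt, the transformed system becomes the linear system u′ᵢ = uᵢ, i = 1,…,n.) -/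
/-- Jacobian determinant `∂(f₁,…,fₙ)/∂(x₁,…,xₙ)(x)` of a family of `n` scalar
functions on `ℝⁿ`: the determinant of the matrix with `(i,j)` entry `∂fᵢ/∂xⱼ(x)`. -/
noncomputable def jacDet (n : ℕ) (f : Fin n → (Fin n → ℝ) → ℝ) (x : Fin n → ℝ) : ℝ :=
  (Matrix.of fun i j => fderiv ℝ (f i) x (Pi.single j 1)).det

/-- The Nambu vector field associated to `C₁,…,C_{n−2}, H`:
`Vᵢ(x) = ∂(C₁,…,C_{n−2}, πᵢ, H)/∂(x₁,…,xₙ)(x)`. -/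
noncomputable def nambuVF (n : ℕ) (C : Fin (n - 2) → (Fin n → ℝ) → ℝ)
    (H : (Fin n → ℝ) → ℝ) (x : Fin n → ℝ) (i : Fin n) : ℝ :=
  jacDet n (fun k => if hk : (k : ℕ) < n - 2 then C ⟨k, hk⟩
    else if (k : ℕ) = n - 2 then (fun y => y i) else H) x

/-- The divergence of a vector field: `div X(x) = trace (DX(x))`. -/
noncomputable def divergence (n : ℕ) (X : (Fin n → ℝ) → (Fin n → ℝ))
    (x : Fin n → ℝ) : ℝ :=
  LinearMap.trace ℝ (Fin n → ℝ) (fderiv ℝ X x).toLinearMap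

/-- The map `Φ = (1/ν, C₁/ν, …, C_{n−2}/ν, H/ν) : ℝⁿ → ℝⁿ`. -/
noncomputable def phiMap (n : ℕ) (C : Fin (n - 2) → (Fin n → ℝ) → ℝ)
    (H ν : (Fin n → ℝ) → ℝ) (x : Fin n → ℝ) (k : Fin n) : ℝ :=
  (if (k : ℕ) = 0 then 1
    else if hk : (k : ℕ) - 1 < n - 2 then C ⟨(k : ℕ) - 1, hk⟩ x else H x) / ν x

open Function Matrix

noncomputable def detCM (n : ℕ) : ContinuousMultilinearMap ℝ (fun _ : Fin n => (Fin n → ℝ)) ℝ :=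
  { (Matrix.detRowAlternating : (Fin n → ℝ) [⋀^Fin n]→ₗ[ℝ] ℝ).toMultilinearMap with
    cont := by exact (continuous_id (X := Matrix (Fin n) (Fin n) ℝ)).matrix_det }

lemma detCM_apply (n : ℕ) (v : Fin n → Fin n → ℝ) : detCM n v = Matrix.det (Matrix.of v) := rfl
lemma detCM_alt (n : ℕ) (v : Fin n → Fin n → ℝ) : detCM n v = Matrix.detRowAlternating v := rfl

lemma fderiv_coord (n : ℕ) (i : Fin n) (x : Fin n → ℝ) :
    fderiv ℝ (fun y : Fin n → ℝ => y i) x = ContinuousLinearMap.proj i :=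
  (ContinuousLinearMap.proj (R := ℝ) (φ := fun _ : Fin n => ℝ) i).fderiv

lemma pi_repr {n : ℕ} (v : Fin n → ℝ) : ∑ i, v i • (Pi.single i (1:ℝ) : Fin n → ℝ) = v := by
  funext j; simp [Pi.single_apply]

section
variable {n : ℕ} (C : Fin (n - 2) → (Fin n → ℝ) → ℝ) (H : (Fin n → ℝ) → ℝ)

/-- the family of functions whose jacobian gives `nambuVF _ _ _ _ i`. -/
noncomputable def nambuFam (i : Fin n) : Fin n → (Fin n → ℝ) → ℝ :=
  fun k => if hk : (k : ℕ) < n - 2 then C ⟨k, hk⟩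
    else if (k : ℕ) = n - 2 then (fun y => y i) else H

lemma nambuVF_eq_detCM (x : Fin n → ℝ) (i : Fin n) :
    nambuVF n C H x i = detCM n (fun k j => fderiv ℝ (nambuFam C H i k) x (Pi.single j 1)) :=
  rfl

/-- rows of the jacobian matrices that do not depend on `i`; row `n-2` set to `0`. -/
noncomputable def baseRows (x : Fin n → ℝ) : Fin n → Fin n → ℝ :=
  fun k j => if hk : (k : ℕ) < n - 2 then fderiv ℝ (C ⟨k, hk⟩) x (Pi.single j 1)
    else if (k : ℕ) = n - 2 then 0 else fderiv ℝ H x (Pi.single j 1)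

lemma row_of_ne (hn : 3 ≤ n) {k : Fin n} (hk : k ≠ ⟨n - 2, by omega⟩) (i : Fin n)
    (x : Fin n → ℝ) (j : Fin n) :
    fderiv ℝ (nambuFam C H i k) x (Pi.single j 1) = baseRows C H x k j := by
  have hk' : (k : ℕ) ≠ n - 2 := fun h => hk (Fin.ext h)
  by_cases h2 : (k : ℕ) < n - 2 <;> simp [nambuFam, baseRows, h2, hk']

lemma rows_eq (hn : 3 ≤ n) (x : Fin n → ℝ) (i : Fin n) :
    (fun k j => fderiv ℝ (nambuFam C H i k) x (Pi.single j 1))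
      = Function.update (baseRows C H x) ⟨n - 2, by omega⟩ (Pi.single i 1) := by
  funext k
  rcases eq_or_ne k ⟨n - 2, by omega⟩ with rfl | hk
  · rw [Function.update_self]
    funext j
    have : nambuFam C H i ⟨n - 2, by omega⟩ = fun y => y i := by
      simp [nambuFam]
    rw [this, fderiv_coord]
    simp [Pi.single_apply, eq_comm]
  · rw [Function.update_of_ne hk]
    funext j
    exact row_of_ne C H hn hk i x j

lemma nambu_eq (hn : 3 ≤ n) (x : Fin n → ℝ) (i : Fin n) :
    nambuVF n C H x i
      = detCM n (Function.update (baseRows C H x) ⟨n - 2, by omega⟩ (Pi.single i 1)) := by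
  rw [nambuVF_eq_detCM, rows_eq C H hn]

/-- Step A: directional derivative of any `f` along the Nambu field is a determinant
with the gradient of `f` in row `n-2`. -/
lemma annihilate (hn : 3 ≤ n) (x : Fin n → ℝ) (f : (Fin n → ℝ) → ℝ) :
    fderiv ℝ f x (nambuVF n C H x)
      = detCM n (Function.update (baseRows C H x) ⟨n - 2, by omega⟩
          (fun j => fderiv ℝ f x (Pi.single j 1))) := by
  have h1 : nambuVF n C H x = ∑ i, nambuVF n C H x i • (Pi.single i (1:ℝ) : Fin n → ℝ) :=
    (pi_repr _).symm
  have h2 : (fun j => fderiv ℝ f x (Pi.single j 1))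
      = ∑ i, fderiv ℝ f x (Pi.single i 1) • (Pi.single i (1:ℝ) : Fin n → ℝ) :=
    (pi_repr _).symm
  rw [h2, show ⇑(detCM n) = ⇑(detCM n).toMultilinearMap from rfl,
    (detCM n).toMultilinearMap.map_update_sum]
  simp only [MultilinearMap.map_update_smul, ContinuousMultilinearMap.coe_coe]
  conv_lhs => rw [h1, map_sum]
  simp only [_root_.map_smul, smul_eq_mul]
  refine Finset.sum_congr rfl fun i _ => ?_
  rw [← nambu_eq C H hn x i]
  ring

lemma annC (hn : 3 ≤ n) (x : Fin n → ℝ) (j : Fin (n - 2)) :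
    fderiv ℝ (C j) x (nambuVF n C H x) = 0 := by
  rw [annihilate C H hn x (C j), detCM_apply]
  refine Matrix.det_zero_of_row_eq (M := Matrix.of _)
    (i := ⟨n - 2, by omega⟩) (j := ⟨(j : ℕ), by omega⟩) ?_ ?_
  · intro h
    have := Fin.mk.injEq .. ▸ h
    have hj := j.2
    omega
  · funext j'
    show Function.update (baseRows C H x) ⟨n - 2, by omega⟩ _ _ j' = _
    rw [Function.update_self]
    have hne : (⟨(j : ℕ), by omega⟩ : Fin n) ≠ ⟨n - 2, by omega⟩ := by
      intro h
      have hj := j.2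
      have := Fin.mk.injEq .. ▸ h
      omega
    show _ = Function.update (baseRows C H x) ⟨n - 2, by omega⟩ _ _ j'
    rw [Function.update_of_ne hne]
    have hj : ((⟨(j : ℕ), by omega⟩ : Fin n) : ℕ) < n - 2 := j.2
    simp only [baseRows, dif_pos hj]

lemma annH (hn : 3 ≤ n) (x : Fin n → ℝ) :
    fderiv ℝ H x (nambuVF n C H x) = 0 := by
  rw [annihilate C H hn x H, detCM_apply]
  refine Matrix.det_zero_of_row_eq (M := Matrix.of _)
    (i := ⟨n - 2, by omega⟩) (j := ⟨n - 1, by omega⟩) ?_ ?_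
  · intro h
    have := Fin.mk.injEq .. ▸ h
    omega
  · funext j'
    show Function.update (baseRows C H x) ⟨n - 2, by omega⟩ _ _ j' = _
    rw [Function.update_self]
    have hne : (⟨n - 1, by omega⟩ : Fin n) ≠ ⟨n - 2, by omega⟩ := by
      intro h
      have := Fin.mk.injEq .. ▸ h
      omega
    show _ = Function.update (baseRows C H x) ⟨n - 2, by omega⟩ _ _ j'
    rw [Function.update_of_ne hne]
    simp only [baseRows]
    rw [dif_neg (by omega), if_neg (by omega)]

end

section
variable {n : ℕ} (C : Fin (n - 2) → (Fin n → ℝ) → ℝ) (H : (Fin n → ℝ) → ℝ)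

/-- the function occupying row `k ≠ n-2`. -/
noncomputable def auxF (k : Fin n) : (Fin n → ℝ) → ℝ :=
  if hk : (k : ℕ) < n - 2 then C ⟨k, hk⟩ else H

lemma nambuFam_of_ne {k : Fin n} (hk' : (k : ℕ) ≠ n - 2) (i : Fin n) :
    nambuFam C H i k = auxF C H k := by
  by_cases h2 : (k : ℕ) < n - 2 <;> simp [nambuFam, auxF, h2, hk']

lemma auxF_contDiffAt {x : Fin n → ℝ} (hC2 : ∀ j, ContDiffAt ℝ 2 (C j) x)
    (hH2 : ContDiffAt ℝ 2 H x) (k : Fin n) : ContDiffAt ℝ 2 (auxF C H k) x := by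
  unfold auxF
  split
  · exact hC2 _
  · exact hH2

/-- the Hessian of `f` at `x`, as a continuous linear map giving rows. -/
noncomputable def hessCLM (f : (Fin n → ℝ) → ℝ) (x : Fin n → ℝ) :
    (Fin n → ℝ) →L[ℝ] (Fin n → ℝ) :=
  ContinuousLinearMap.pi fun j =>
    (ContinuousLinearMap.apply ℝ ℝ (Pi.single j 1)).comp (fderiv ℝ (fderiv ℝ f) x)

lemma row_hasFDerivAt (f : (Fin n → ℝ) → ℝ) (x : Fin n → ℝ) (hf : ContDiffAt ℝ 2 f x) :
    HasFDerivAt (fun y => fun j : Fin n => fderiv ℝ f y (Pi.single j 1))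
      (hessCLM (n := n) f x) x := by
  apply hasFDerivAt_pi.2
  intro j
  have hdiff : DifferentiableAt ℝ (fderiv ℝ f) x :=
    (hf.fderiv_right (m := 1) (by norm_num)).differentiableAt one_ne_zero
  exact ((ContinuousLinearMap.apply ℝ ℝ (Pi.single j 1)).hasFDerivAt).comp x hdiff.hasFDerivAt

/-- the derivative of row `k` of the Nambu jacobian matrix at `x`. -/
noncomputable def Acl (x : Fin n → ℝ) : Fin n → ((Fin n → ℝ) →L[ℝ] (Fin n → ℝ)) :=
  fun k => if (k : ℕ) = n - 2 then 0 else hessCLM (auxF C H k) x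

lemma rowFam_hasFDerivAt {x : Fin n → ℝ} (hC2 : ∀ j, ContDiffAt ℝ 2 (C j) x)
    (hH2 : ContDiffAt ℝ 2 H x) (i k : Fin n) :
    HasFDerivAt (fun y => fun j : Fin n => fderiv ℝ (nambuFam C H i k) y (Pi.single j 1))
      (Acl C H x k) x := by
  rcases eq_or_ne ((k : ℕ)) (n - 2) with hk | hk
  · have hfam : nambuFam C H i k = fun y => y i := by
      simp [nambuFam, hk]
    rw [hfam]
    have hconst : (fun y : Fin n → ℝ => fun j : Fin n =>
        fderiv ℝ (fun z : Fin n → ℝ => z i) y (Pi.single j 1))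
        = fun _ => fun j : Fin n => (Pi.single j (1:ℝ) : Fin n → ℝ) i := by
      funext y j; rw [fderiv_coord]; rfl
    rw [hconst, show Acl C H x k = 0 from if_pos hk]
    exact hasFDerivAt_const _ _
  · simp only [nambuFam_of_ne C H hk i]
    rw [show Acl C H x k = hessCLM (auxF C H k) x from if_neg hk]
    exact row_hasFDerivAt (auxF C H k) x (auxF_contDiffAt C H hC2 hH2 k)

lemma nambu_comp_hasFDerivAt {x : Fin n → ℝ} (hC2 : ∀ j, ContDiffAt ℝ 2 (C j) x)
    (hH2 : ContDiffAt ℝ 2 H x) (i : Fin n) :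
    HasFDerivAt (fun y => nambuVF n C H y i)
      (∑ k, ((detCM n).toContinuousLinearMap
        (fun k j => fderiv ℝ (nambuFam C H i k) x (Pi.single j 1)) k).comp (Acl C H x k)) x :=
  HasFDerivAt.multilinear_comp (detCM n) (fun k => rowFam_hasFDerivAt C H hC2 hH2 i k)

end

section
variable {n : ℕ} (C : Fin (n - 2) → (Fin n → ℝ) → ℝ) (H : (Fin n → ℝ) → ℝ)

lemma divV_zero (hn : 3 ≤ n) {x : Fin n → ℝ} (hC2 : ∀ j, ContDiffAt ℝ 2 (C j) x)
    (hH2 : ContDiffAt ℝ 2 H x) :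
    ∑ i, fderiv ℝ (fun y => nambuVF n C H y i) x (Pi.single i 1) = 0 := by
  have hD := fun i => (nambu_comp_hasFDerivAt C H hC2 hH2 i).fderiv
  simp only [hD, ContinuousLinearMap.coe_sum', Finset.sum_apply,
    ContinuousLinearMap.coe_comp', Function.comp_apply,
    ContinuousMultilinearMap.toContinuousLinearMap_apply]
  rw [Finset.sum_comm]
  refine Finset.sum_eq_zero fun k _ => ?_
  rcases eq_or_ne ((k : ℕ)) (n - 2) with hk | hk
  · refine Finset.sum_eq_zero fun i _ => ?_
    rw [show Acl C H x k = 0 from if_pos hk]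
    rw [ContinuousLinearMap.zero_apply]
    exact (detCM n).map_coord_zero k (Function.update_self k 0 _)
  · -- the symmetric-Hessian cancellation
    have hkp : k ≠ (⟨n - 2, by omega⟩ : Fin n) := fun h => hk (by rw [h])
    set f := auxF C H k with hf_def
    have hf : ContDiffAt ℝ 2 f x := auxF_contDiffAt C H hC2 hH2 k
    have hsymm := hf.isSymmSndFDerivAt (by simp)
    set p : Fin n := ⟨n - 2, by omega⟩ with hp
    set base := baseRows C H x with hbase
    set h : Fin n → Fin n → ℝ := fun i j =>
      fderiv ℝ (fderiv ℝ f) x (Pi.single i 1) (Pi.single j 1) with hh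
    set Dm : Fin n → Fin n → ℝ := fun i j =>
      detCM n (Function.update (Function.update base p (Pi.single i 1)) k (Pi.single j 1))
      with hDm
    have hterm : ∀ i : Fin n,
        detCM n (Function.update
          (fun k j => fderiv ℝ (nambuFam C H i k) x (Pi.single j 1)) k
          ((Acl C H x k) (Pi.single i 1)))
        = ∑ j, h i j * Dm i j := by
      intro i
      rw [rows_eq C H hn x i]
      have hAcl : (Acl C H x k) (Pi.single i 1)
          = ∑ j, h i j • (Pi.single j (1:ℝ) : Fin n → ℝ) := by
        rw [show Acl C H x k = hessCLM (auxF C H k) x from if_neg hk]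
        rw [pi_repr]
        rfl
      rw [hAcl, show ⇑(detCM n) = ⇑(detCM n).toMultilinearMap from rfl,
        (detCM n).toMultilinearMap.map_update_sum]
      simp only [MultilinearMap.map_update_smul, ContinuousMultilinearMap.coe_coe,
        smul_eq_mul]
      rfl
    simp only [hterm]
    -- antisymmetry of Dm
    have hanti : ∀ i j : Fin n, Dm j i = - Dm i j := by
      intro i j
      have hkey : Function.update (Function.update base p (Pi.single j 1)) k (Pi.single i 1)
          = (Function.update (Function.update base p (Pi.single i 1)) k (Pi.single j 1))
            ∘ Equiv.swap p k := by
        funext r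
        simp only [Function.comp_apply]
        rcases eq_or_ne r p with rfl | hrp
        · rw [Function.update_of_ne (Ne.symm hkp), Function.update_self,
            Equiv.swap_apply_left, Function.update_self]
        · rcases eq_or_ne r k with rfl | hrk
          · rw [Function.update_self, Equiv.swap_apply_right,
              Function.update_of_ne (Ne.symm hkp), Function.update_self]
          · rw [Function.update_of_ne hrk, Function.update_of_ne hrp,
              Equiv.swap_apply_of_ne_of_ne hrp hrk, Function.update_of_ne hrk,
              Function.update_of_ne hrp]
      rw [hDm]
      show detCM n _ = - detCM n _
      rw [hkey, detCM_alt, detCM_alt]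
      exact (Matrix.detRowAlternating : (Fin n → ℝ) [⋀^Fin n]→ₗ[ℝ] ℝ).map_swap _ (Ne.symm hkp)
    -- symmetry of h
    have hsym : ∀ i j : Fin n, h i j = h j i := fun i j =>
      hsymm (Pi.single i 1) (Pi.single j 1)
    -- conclude
    have key : (∑ i, ∑ j, h i j * Dm i j) = - ∑ i, ∑ j, h i j * Dm i j := by
      conv_lhs => rw [Finset.sum_comm]
      rw [← Finset.sum_neg_distrib]
      refine Finset.sum_congr rfl fun i _ => ?_
      rw [← Finset.sum_neg_distrib]
      refine Finset.sum_congr rfl fun j _ => ?_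
      rw [hsym j i, hanti i j]
      ring
    linarith [key]

end

lemma trace_eq_sum {n : ℕ} (f : (Fin n → ℝ) →L[ℝ] (Fin n → ℝ)) :
    LinearMap.trace ℝ (Fin n → ℝ) f.toLinearMap = ∑ i, f (Pi.single i 1) i := by
  rw [LinearMap.trace_eq_matrix_trace ℝ (Pi.basisFun ℝ (Fin n))]
  simp [Matrix.trace, LinearMap.toMatrix_apply]

theorem stmt_3 (n : ℕ) (hn : 3 ≤ n) (Ω : Set (Fin n → ℝ)) (hΩ : IsOpen Ω)
    (C : Fin (n - 2) → (Fin n → ℝ) → ℝ) (H : (Fin n → ℝ) → ℝ)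
    (hC : ∀ j, ContDiffOn ℝ 2 (C j) Ω) (hH : ContDiffOn ℝ 2 H Ω)
    (ν : (Fin n → ℝ) → ℝ) (hν : ContDiffOn ℝ 1 ν Ω) (hν0 : ∀ x ∈ Ω, ν x ≠ 0)
    -- `X = ν · V`, the rescaled Nambu vector field
    (X : (Fin n → ℝ) → (Fin n → ℝ)) (hX : ∀ x, X x = ν x • nambuVF n C H x) :
    ∀ x ∈ Ω, fderiv ℝ (phiMap n C H ν) x (X x)
      = (-(divergence n X x)) • phiMap n C H ν x := by
  intro x hx
  have hmem := hΩ.mem_nhds hx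
  have hC2 : ∀ j, ContDiffAt ℝ 2 (C j) x := fun j => (hC j).contDiffAt hmem
  have hH2 : ContDiffAt ℝ 2 H x := hH.contDiffAt hmem
  have hν' : ν x ≠ 0 := hν0 x hx
  set N := fderiv ℝ ν x with hN
  have hνd : HasFDerivAt ν N x :=
    ((hν.contDiffAt hmem).differentiableAt one_ne_zero).hasFDerivAt
  set V := nambuVF n C H x with hV
  set D : Fin n → ((Fin n → ℝ) →L[ℝ] ℝ) :=
    fun i => fderiv ℝ (fun y => nambuVF n C H y i) x with hDdef
  have hVd : ∀ i, HasFDerivAt (fun y => nambuVF n C H y i) (D i) x :=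
    fun i => (nambu_comp_hasFDerivAt C H hC2 hH2 i).differentiableAt.hasFDerivAt
  -- derivative of X
  have hXfun : X = fun y => fun i => ν y * nambuVF n C H y i := by
    funext y i; rw [hX y]; rfl
  have hXd : HasFDerivAt X (ContinuousLinearMap.pi fun i =>
      ν x • D i + nambuVF n C H x i • N) x := by
    rw [hXfun]
    exact hasFDerivAt_pi.2 fun i => (hνd.mul (hVd i))
  -- the divergence equals `N V`
  have hNV : ∀ c : ℝ, N (c • V) = c * N V := fun c => by rw [ContinuousLinearMap.map_smul]; rfl
  have hdiv : divergence n X x = N V := by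
    unfold divergence
    rw [hXd.fderiv, trace_eq_sum]
    simp only [ContinuousLinearMap.pi_apply, ContinuousLinearMap.add_apply,
      ContinuousLinearMap.smul_apply, smul_eq_mul]
    rw [Finset.sum_add_distrib, ← Finset.mul_sum]
    have hzero : ∑ i, D i (Pi.single i 1) = 0 := divV_zero C H hn hC2 hH2
    rw [hzero, mul_zero, zero_add]
    have hrepr : V = ∑ i, V i • (Pi.single i (1:ℝ) : Fin n → ℝ) := (pi_repr V).symm
    conv_rhs => rw [hrepr, map_sum]
    refine Finset.sum_congr rfl fun i _ => ?_
    rw [ContinuousLinearMap.map_smul]; rfl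
  -- the numerators of `phiMap`
  set g : Fin n → (Fin n → ℝ) → ℝ := fun k => if (k : ℕ) = 0 then (fun _ => 1)
    else if hk : (k : ℕ) - 1 < n - 2 then C ⟨(k : ℕ) - 1, hk⟩ else H with hg
  have hphi : phiMap n C H ν = fun y k => g k y * (ν y)⁻¹ := by
    funext y k
    simp only [phiMap, hg, div_eq_mul_inv]
    by_cases h0 : (k : ℕ) = 0
    · simp [h0]
    · by_cases h1 : (k : ℕ) - 1 < n - 2 <;> simp [h0, h1]
  have hgd : ∀ k, DifferentiableAt ℝ (g k) x := by
    intro k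
    simp only [hg]
    split_ifs with h0 h1
    · exact differentiableAt_const 1
    · exact (hC2 _).differentiableAt two_ne_zero
    · exact hH2.differentiableAt two_ne_zero
  have hgV : ∀ k, fderiv ℝ (g k) x V = 0 := by
    intro k
    simp only [hg]
    split_ifs with h0 h1
    · simp
    · exact annC C H hn x _
    · exact annH C H hn x
  -- derivative of the inverse of ν
  set Dinv : (Fin n → ℝ) →L[ℝ] ℝ :=
    (-ContinuousLinearMap.mulLeftRight ℝ ℝ (ν x)⁻¹ (ν x)⁻¹).comp N with hDinv
  have hinv : HasFDerivAt (fun y => (ν y)⁻¹) Dinv x := (hasFDerivAt_inv' hν').comp x hνd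
  have hDinvV : ∀ c : ℝ, Dinv (c • V) = -((ν x)⁻¹ * (c * N V) * (ν x)⁻¹) := by
    intro c
    rw [hDinv]
    simp only [ContinuousLinearMap.comp_apply, ContinuousLinearMap.neg_apply,
      ContinuousLinearMap.mulLeftRight_apply]
    rw [hNV]
  -- derivative of phiMap
  have hΦd : HasFDerivAt (phiMap n C H ν) (ContinuousLinearMap.pi fun k =>
      g k x • Dinv + (ν x)⁻¹ • fderiv ℝ (g k) x) x := by
    rw [hphi]
    exact hasFDerivAt_pi.2 fun k => ((hgd k).hasFDerivAt.mul hinv)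
  rw [hΦd.fderiv]
  funext k
  simp only [ContinuousLinearMap.pi_apply, ContinuousLinearMap.add_apply,
    ContinuousLinearMap.smul_apply, smul_eq_mul, Pi.smul_apply]
  rw [hX x, ← hV, hDinvV, hdiv]
  have : fderiv ℝ (g k) x (ν x • V) = 0 := by rw [ContinuousLinearMap.map_smul, hgV k, smul_zero]
  rw [this, hphi]
  simp only [mul_zero, add_zero]
  rw [show (ν x)⁻¹ * (ν x * N V) * (ν x)⁻¹ = N V * (ν x)⁻¹ by
    rw [← mul_assoc, inv_mul_cancel₀ hν', one_mul]]
  ring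
end

section
/- Let n ≥ 3, let Ω ⊆ ℝⁿ be open, let C₁,…,C_{n−2}, H : Ω → ℝ be C² functions, let ν : Ω → ℝ be a nowhere-vanishing C¹ function, let X = ν·V where V is the Nambu vector field associated to C₁,…,C_{n−2}, H, and set Φ = (1/ν, C₁/ν, …, C_{n−2}/ν, H/ν). If x : I → Ω is a C¹ solution of the differential equation x′(t) = X(x(t)) on an interval I and t₀ ∈ I, then for all t ∈ I, Φ(x(t)) = exp(−∫_{t₀}^{t} div X(x(τ)) dτ) · Φ(x(t₀)). -/
noncomputable def gfun (n : ℕ) (C : Fin (n - 2) → (Fin n → ℝ) → ℝ)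
    (H : (Fin n → ℝ) → ℝ) (k : Fin n) : (Fin n → ℝ) → ℝ :=
  if hk : (k : ℕ) < n - 2 then C ⟨k, hk⟩ else H

lemma auxRowSum {n : ℕ} (M : Matrix (Fin n) (Fin n) ℝ) (r : Fin n) (a : Fin n → ℝ) :
    ∑ j, a j * (M.updateRow r (Pi.single j 1)).det = (M.updateRow r a).det := by
  have ha : a = ∑ j, a j • (Pi.single j (1:ℝ) : Fin n → ℝ) := by
    funext l
    simp [Pi.single_apply]
  have hup : ∀ v : Fin n → ℝ, (M.updateRow r v).det
      = Matrix.detRowAlternating (Function.update (Matrix.of.symm M) r v) := fun v => rfl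
  conv_rhs => rw [ha]
  simp_rw [hup]
  rw [AlternatingMap.map_update_sum]
  refine Finset.sum_congr rfl fun j _ => ?_
  rw [AlternatingMap.map_update_smul]
  simp

lemma auxConserve {n : ℕ} (M : Matrix (Fin n) (Fin n) ℝ) (r m : Fin n) (hm : m ≠ r) :
    ∑ j, M m j * (M.updateRow r (Pi.single j 1)).det = 0 := by
  rw [auxRowSum]
  exact Matrix.det_updateRow_eq_zero hm

/-- Nambu vector field written via the Leibniz formula. -/
lemma nambu_formula {n : ℕ} (hn : 3 ≤ n) (C : Fin (n - 2) → (Fin n → ℝ) → ℝ)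
    (H : (Fin n → ℝ) → ℝ) (x : Fin n → ℝ) (i : Fin n) :
    nambuVF n C H x i = ∑ σ : Equiv.Perm (Fin n), ((Equiv.Perm.sign σ : ℤ) : ℝ) *
      ∏ k, (if σ k = (⟨n - 2, by omega⟩ : Fin n) then (Pi.single i (1:ℝ)) k
        else fderiv ℝ (gfun n C H (σ k)) x (Pi.single k 1)) := by
  rw [nambuVF, jacDet, Matrix.det_apply']
  refine Finset.sum_congr rfl fun σ _ => ?_
  congr 1
  refine Finset.prod_congr rfl fun k _ => ?_
  simp only [Matrix.of_apply]
  by_cases h1 : ((σ k : Fin n) : ℕ) < n - 2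
  · have hne : σ k ≠ (⟨n - 2, by omega⟩ : Fin n) := by
      intro hh
      rw [hh] at h1
      simp at h1
    rw [dif_pos h1, if_neg hne, gfun, dif_pos h1]
  · by_cases h2 : ((σ k : Fin n) : ℕ) = n - 2
    · have heq : σ k = (⟨n - 2, by omega⟩ : Fin n) := Fin.ext h2
      rw [dif_neg h1, if_pos h2, if_pos heq]
      have : fderiv ℝ (fun y : Fin n → ℝ => y i) x
          = ContinuousLinearMap.proj (R := ℝ) (φ := fun _ : Fin n => ℝ) i :=
        (ContinuousLinearMap.proj (R := ℝ) (φ := fun _ : Fin n => ℝ) i).fderiv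
      rw [this]
      simp [Pi.single_apply, eq_comm]
    · have hne : σ k ≠ (⟨n - 2, by omega⟩ : Fin n) := by
        intro hh
        exact h2 (by rw [hh])
      rw [dif_neg h1, if_neg h2, if_neg hne, gfun, dif_neg h1]

lemma auxTrace {n : ℕ} (L : (Fin n → ℝ) →L[ℝ] (Fin n → ℝ)) :
    LinearMap.trace ℝ (Fin n → ℝ) L.toLinearMap = ∑ i, L (Pi.single i 1) i := by
  rw [LinearMap.trace_eq_matrix_trace ℝ (Pi.basisFun ℝ (Fin n))]
  simp [Matrix.trace, LinearMap.toMatrix_apply, Matrix.diag]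

open Finset Equiv in
lemma auxPiola {n : ℕ} (r : Fin n) (D : Fin n → Fin n → ℝ) (h : Fin n → Fin n → Fin n → ℝ)
    (hsymm : ∀ m j i, h m j i = h m i j) :
    ∑ i : Fin n, ∑ σ : Equiv.Perm (Fin n), ((Equiv.Perm.sign σ : ℤ) : ℝ) *
      ∑ k₀ : Fin n, (∏ k ∈ Finset.univ.erase k₀,
          (if σ k = r then (Pi.single i (1:ℝ)) k else D (σ k) k)) *
        (if σ k₀ = r then 0 else h (σ k₀) k₀ i) = 0 := by
  -- swap sums and collapse the i-sum
  rw [Finset.sum_comm]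
  have key : ∀ σ : Equiv.Perm (Fin n),
      ∑ i : Fin n, ((Equiv.Perm.sign σ : ℤ) : ℝ) *
      ∑ k₀ : Fin n, (∏ k ∈ Finset.univ.erase k₀,
          (if σ k = r then (Pi.single i (1:ℝ)) k else D (σ k) k)) *
        (if σ k₀ = r then 0 else h (σ k₀) k₀ i)
      = ∑ k₀ : Fin n, (if σ k₀ = r then 0 else
          ((Equiv.Perm.sign σ : ℤ) : ℝ) *
          (∏ k ∈ (Finset.univ.erase k₀).erase (σ⁻¹ r), D (σ k) k) * h (σ k₀) k₀ (σ⁻¹ r)) := by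
    intro σ
    simp_rw [Finset.mul_sum]
    rw [Finset.sum_comm]
    refine Finset.sum_congr rfl fun k₀ _ => ?_
    by_cases hk : σ k₀ = r
    · simp [hk]
    · simp only [if_neg hk]
      set c := σ⁻¹ r with hc
      have hcr : σ c = r := by simp [hc]
      have hck : c ≠ k₀ := fun hh => hk (hh ▸ hcr)
      have hmem : c ∈ Finset.univ.erase k₀ := by simp [hck]
      have hprod : ∀ i : Fin n, (∏ k ∈ Finset.univ.erase k₀,
          (if σ k = r then (Pi.single i (1:ℝ)) k else D (σ k) k))
          = (Pi.single i (1:ℝ) : Fin n → ℝ) c * ∏ k ∈ (Finset.univ.erase k₀).erase c, D (σ k) k := by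
        intro i
        rw [← Finset.mul_prod_erase _ _ hmem, if_pos hcr]
        congr 1
        refine Finset.prod_congr rfl fun k hkmem => ?_
        have hkc : k ≠ c := (Finset.mem_erase.mp hkmem).1
        have : σ k ≠ r := fun hh => hkc (σ.injective (hh.trans hcr.symm))
        rw [if_neg this]
      simp_rw [hprod]
      rw [Fintype.sum_eq_single c (by
        intro i hi
        have : ¬ (c = i) := fun hh => hi hh.symm
        simp [Pi.single_apply, this])]
      simp [Pi.single_apply]
      ring
  simp_rw [key]
  rw [← Finset.sum_product']
  refine Finset.sum_involution
    (fun p _ => if p.1 p.2 = r then p else (p.1 * Equiv.swap (p.1⁻¹ r) p.2, p.1⁻¹ r))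
    ?_ ?_ (fun p hp => Finset.mem_univ _) ?_
  · -- f a + f (g a) = 0
    rintro ⟨σ, k₀⟩ -
    by_cases hk : σ k₀ = r
    · simp [hk]
    · set c := σ⁻¹ r with hc
      have hcr : σ c = r := by simp [hc]
      have hck : c ≠ k₀ := fun hh => hk (hh ▸ hcr)
      simp only [if_neg hk]
      set σ' := σ * Equiv.swap c k₀ with hσ'
      have hval : ∀ k, σ' k = σ (Equiv.swap c k₀ k) := fun k => rfl
      have hσ'c : σ' c = σ k₀ := by rw [hval, Equiv.swap_apply_left]
      have hinv : σ'⁻¹ r = k₀ := by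
        rw [hσ', mul_inv_rev, Equiv.Perm.mul_apply, ← hc, Equiv.swap_inv, Equiv.swap_apply_left]
      have hcond : ¬ σ' c = r := by rw [hσ'c]; exact hk
      simp only [hinv, hcond, if_neg, if_false]
      have hsign : ((Equiv.Perm.sign σ' : ℤ) : ℝ) = -((Equiv.Perm.sign σ : ℤ) : ℝ) := by
        rw [hσ', Equiv.Perm.sign_mul, Equiv.Perm.sign_swap hck]
        simp
      have hprodeq : (∏ k ∈ (Finset.univ.erase c).erase k₀, D (σ' k) k)
          = ∏ k ∈ (Finset.univ.erase k₀).erase c, D (σ k) k := by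
        rw [Finset.erase_right_comm]
        refine Finset.prod_congr rfl fun k hkmem => ?_
        have h1 : k ≠ c := (Finset.mem_erase.mp hkmem).1
        have h2 : k ≠ k₀ := (Finset.mem_erase.mp (Finset.mem_erase.mp hkmem).2).1
        rw [hval, Equiv.swap_apply_of_ne_of_ne h1 h2]
      have hh : h (σ' c) c k₀ = h (σ k₀) k₀ c := by rw [hσ'c, hsymm]
      rw [hsign, hprodeq, hh]
      ring
  · -- g a ≠ a when f a ≠ 0
    rintro ⟨σ, k₀⟩ - hfa
    by_cases hk : σ k₀ = r
    · exfalso; apply hfa; simp [hk]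
    · have hcr : σ (σ⁻¹ r) = r := by simp
      have hck : σ⁻¹ r ≠ k₀ := fun hh => hk (hh ▸ hcr)
      simp only [if_neg hk]
      intro hcon
      exact hck (congrArg Prod.snd hcon)
  · -- involution
    rintro ⟨σ, k₀⟩ -
    by_cases hk : σ k₀ = r
    · simp [hk]
    · set c := σ⁻¹ r with hc
      have hcr : σ c = r := by simp [hc]
      set σ' := σ * Equiv.swap c k₀ with hσ'
      have hσ'c : σ' c = σ k₀ := by
        rw [hσ', Equiv.Perm.mul_apply, Equiv.swap_apply_left]
      have hinv : σ'⁻¹ r = k₀ := by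
        rw [hσ', mul_inv_rev, Equiv.Perm.mul_apply, ← hc, Equiv.swap_inv, Equiv.swap_apply_left]
      have hcond : ¬ σ' c = r := by rw [hσ'c]; exact hk
      simp only [if_neg hk, if_neg hcond, hinv]
      have : σ' * Equiv.swap k₀ c = σ := by
        rw [hσ', mul_assoc, Equiv.swap_comm k₀ c, Equiv.swap_mul_self, mul_one]
      rw [Prod.ext_iff]
      exact ⟨this, rfl⟩

lemma auxConst {I : Set ℝ} (hI : Convex ℝ I) {f : ℝ → ℝ}
    (hf : ∀ t ∈ I, HasDerivWithinAt f 0 I t) {a b : ℝ} (ha : a ∈ I) (hb : b ∈ I) :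
    f a = f b := by
  have e0 : ContinuousLinearMap.toSpanSingleton ℝ (0 : ℝ) = 0 := by ext; simp
  have h0 : ∀ t ∈ I, HasFDerivWithinAt f (0 : ℝ →L[ℝ] ℝ) I t := by
    intro t ht
    have := (hf t ht).hasFDerivWithinAt
    rwa [e0] at this
  have hb' := hI.norm_image_sub_le_of_norm_hasFDerivWithin_le (C := 0)
    (fun t ht => h0 t ht) (fun t ht => by simp) hb ha
  have h1 : ‖f a - f b‖ ≤ 0 := by simpa using hb'
  have h2 : ‖f a - f b‖ = 0 := le_antisymm h1 (norm_nonneg _)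
  simpa [sub_eq_zero] using norm_eq_zero.mp h2

section main

variable {n : ℕ} (hn : 3 ≤ n) {Ω : Set (Fin n → ℝ)} (hΩ : IsOpen Ω)
  (C : Fin (n - 2) → (Fin n → ℝ) → ℝ) (H : (Fin n → ℝ) → ℝ)
  (hC : ∀ j, ContDiffOn ℝ 2 (C j) Ω) (hH : ContDiffOn ℝ 2 H Ω)

include hC hH in
lemma hgm : ∀ m, ContDiffOn ℝ 2 (gfun n C H m) Ω := by
  intro m
  rw [gfun]
  split
  · exact hC _
  · exact hH

include hn hΩ hC hH in
/-- derivative of the entry functions -/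
lemma aux_entry {x : Fin n → ℝ} (hx : x ∈ Ω) (m k : Fin n) :
    HasFDerivAt (fun y => fderiv ℝ (gfun n C H m) y (Pi.single k 1))
      ((fderiv ℝ (fderiv ℝ (gfun n C H m)) x).flip (Pi.single k 1)) x := by
  have hd : DifferentiableAt ℝ (fderiv ℝ (gfun n C H m)) x :=
    (((hgm C H hC hH m).fderiv_of_isOpen (m := 1) hΩ (by norm_num)).differentiableOn
      one_ne_zero).differentiableAt (hΩ.mem_nhds hx)
  have h := hd.hasFDerivAt.clm_apply (hasFDerivAt_const (Pi.single k (1:ℝ)) x)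
  simpa using h

include hn hΩ hC hH in
/-- derivative of the components of the Nambu vector field -/
lemma aux_nambu_deriv {x : Fin n → ℝ} (hx : x ∈ Ω) (i : Fin n) :
    HasFDerivAt (fun y => nambuVF n C H y i)
      (∑ σ : Equiv.Perm (Fin n), ((Equiv.Perm.sign σ : ℤ) : ℝ) •
        ∑ k₀ : Fin n, (∏ k ∈ Finset.univ.erase k₀,
            (if σ k = (⟨n - 2, by omega⟩ : Fin n) then (Pi.single i (1:ℝ)) k
              else fderiv ℝ (gfun n C H (σ k)) x (Pi.single k 1))) •
          (if σ k₀ = (⟨n - 2, by omega⟩ : Fin n) then (0 : (Fin n → ℝ) →L[ℝ] ℝ)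
            else (fderiv ℝ (fderiv ℝ (gfun n C H (σ k₀))) x).flip (Pi.single k₀ 1))) x := by
  set r : Fin n := (⟨n - 2, by omega⟩ : Fin n) with hr
  have hfun : (fun y => nambuVF n C H y i)
      = fun y => ∑ σ : Equiv.Perm (Fin n), ((Equiv.Perm.sign σ : ℤ) : ℝ) *
        ∏ k, (if σ k = r then (Pi.single i (1:ℝ)) k
          else fderiv ℝ (gfun n C H (σ k)) y (Pi.single k 1)) :=
    funext fun y => nambu_formula hn C H y i
  rw [hfun]
  refine HasFDerivAt.fun_sum fun σ _ => ?_
  have hprod : HasFDerivAt (fun y => ∏ k,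
      (if σ k = r then (Pi.single i (1:ℝ)) k
        else fderiv ℝ (gfun n C H (σ k)) y (Pi.single k 1)))
      (∑ k₀ : Fin n, (∏ k ∈ Finset.univ.erase k₀,
          (if σ k = r then (Pi.single i (1:ℝ)) k
            else fderiv ℝ (gfun n C H (σ k)) x (Pi.single k 1))) •
        (if σ k₀ = r then (0 : (Fin n → ℝ) →L[ℝ] ℝ)
          else (fderiv ℝ (fderiv ℝ (gfun n C H (σ k₀))) x).flip (Pi.single k₀ 1))) x := by
    refine HasFDerivAt.finset_prod fun k _ => ?_
    by_cases hk : σ k = r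
    · simp only [if_pos hk]
      exact hasFDerivAt_const _ x
    · simp only [if_neg hk]
      exact aux_entry hn hΩ C H hC hH hx (σ k) k
  exact hprod.const_mul _

include hn hΩ hC hH in
/-- key pointwise identity: `X` is differentiable and `div X = ∇ν ⬝ V`. -/
lemma aux_div (ν : (Fin n → ℝ) → ℝ) (hν : ContDiffOn ℝ 1 ν Ω)
    (X : (Fin n → ℝ) → (Fin n → ℝ)) (hX : ∀ x, X x = ν x • nambuVF n C H x)
    {x : Fin n → ℝ} (hx : x ∈ Ω) :
    DifferentiableAt ℝ X x ∧
      divergence n X x = fderiv ℝ ν x (nambuVF n C H x) := by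
  set r : Fin n := (⟨n - 2, by omega⟩ : Fin n) with hr
  set e : Fin n → (Fin n → ℝ) := fun j => Pi.single j 1 with he
  have hνd : DifferentiableAt ℝ ν x :=
    ((hν.differentiableOn one_ne_zero).differentiableAt (hΩ.mem_nhds hx))
  set W : Fin n → (Fin n → ℝ) →L[ℝ] ℝ := fun i =>
    (∑ σ : Equiv.Perm (Fin n), ((Equiv.Perm.sign σ : ℤ) : ℝ) •
        ∑ k₀ : Fin n, (∏ k ∈ Finset.univ.erase k₀,
            (if σ k = r then (Pi.single i (1:ℝ)) k
              else fderiv ℝ (gfun n C H (σ k)) x (Pi.single k 1))) •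
          (if σ k₀ = r then (0 : (Fin n → ℝ) →L[ℝ] ℝ)
            else (fderiv ℝ (fderiv ℝ (gfun n C H (σ k₀))) x).flip (Pi.single k₀ 1))) with hW
  have hVd : ∀ i, HasFDerivAt (fun y => nambuVF n C H y i) (W i) x := fun i =>
    aux_nambu_deriv hn hΩ C H hC hH hx i
  have hXi : ∀ i : Fin n, (fun y => X y i) = fun y => ν y * nambuVF n C H y i := by
    intro i
    funext y
    rw [hX y]
    simp
  have hXd : ∀ i, HasFDerivAt (fun y => X y i)
      (ν x • W i + nambuVF n C H x i • fderiv ℝ ν x) x := by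
    intro i
    rw [hXi i]
    exact hνd.hasFDerivAt.mul (hVd i)
  have hXdiff : DifferentiableAt ℝ X x := by
    rw [show X = fun y i => X y i from rfl, differentiableAt_pi]
    exact fun i => (hXd i).differentiableAt
  refine ⟨hXdiff, ?_⟩
  have hfd : fderiv ℝ X x = ContinuousLinearMap.pi fun i =>
      (ν x • W i + nambuVF n C H x i • fderiv ℝ ν x) := by
    have := fderiv_pi (𝕜 := ℝ) (φ := fun i => (fun y => X y i)) (x := x)
      (fun i => (hXd i).differentiableAt)
    rw [show X = fun y i => X y i from rfl, this]
    congr 1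
    funext i
    exact (hXd i).fderiv
  rw [divergence, auxTrace, hfd]
  have hterm : ∀ i : Fin n, (ContinuousLinearMap.pi fun i =>
        (ν x • W i + nambuVF n C H x i • fderiv ℝ ν x)) (Pi.single i 1) i
      = ν x * (W i (Pi.single i 1))
        + nambuVF n C H x i * fderiv ℝ ν x (Pi.single i 1) := by
    intro i
    simp
  simp_rw [hterm]
  rw [Finset.sum_add_distrib, ← Finset.mul_sum]
  have hzero : ∑ i : Fin n, W i (Pi.single i 1) = 0 := by
    have := auxPiola r (fun m k => fderiv ℝ (gfun n C H m) x (Pi.single k 1))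
      (fun m j i => fderiv ℝ (fderiv ℝ (gfun n C H m)) x (Pi.single i 1) (Pi.single j 1))
      (fun m j i => by
        have hsym : IsSymmSndFDerivAt ℝ (gfun n C H m) x :=
          ((hgm C H hC hH m).contDiffAt (hΩ.mem_nhds hx)).isSymmSndFDerivAt (by simp)
        exact hsym _ _)
    rw [← this]
    refine Finset.sum_congr rfl fun i _ => ?_
    rw [hW]
    simp only [ContinuousLinearMap.coe_sum', Finset.sum_apply,
      ContinuousLinearMap.coe_smul', Pi.smul_apply, smul_eq_mul]
    refine Finset.sum_congr rfl fun σ _ => ?_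
    simp only [apply_ite (fun (L : (Fin n → ℝ) →L[ℝ] ℝ) => L (Pi.single i 1)),
      ContinuousLinearMap.zero_apply, ContinuousLinearMap.flip_apply]
  rw [hzero, mul_zero, zero_add]
  have hVsum : nambuVF n C H x = ∑ i, nambuVF n C H x i • (Pi.single i (1:ℝ) : Fin n → ℝ) := by
    funext l
    simp [Pi.single_apply]
  conv_rhs => rw [hVsum]
  rw [map_sum]
  refine Finset.sum_congr rfl fun i _ => ?_
  rw [map_smul]
  simp [mul_comm]

end main

lemma aux_nambu_matrix {n : ℕ} (hn : 3 ≤ n) (C : Fin (n - 2) → (Fin n → ℝ) → ℝ)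
    (H : (Fin n → ℝ) → ℝ) (x : Fin n → ℝ) (i : Fin n) :
    nambuVF n C H x i = ((Matrix.of fun m j => fderiv ℝ (gfun n C H m) x
      (Pi.single j 1)).updateRow (⟨n - 2, by omega⟩ : Fin n) (Pi.single i 1)).det := by
  rw [nambu_formula hn, Matrix.det_apply']
  refine Finset.sum_congr rfl fun σ _ => ?_
  congr 1
  refine Finset.prod_congr rfl fun k _ => ?_
  rw [Matrix.updateRow_apply]
  by_cases hk : σ k = (⟨n - 2, by omega⟩ : Fin n)
  · rw [if_pos hk, if_pos hk]
  · rw [if_neg hk, if_neg hk, Matrix.of_apply]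

lemma aux_gradV {n : ℕ} (hn : 3 ≤ n) (C : Fin (n - 2) → (Fin n → ℝ) → ℝ)
    (H : (Fin n → ℝ) → ℝ) (x : Fin n → ℝ) (m : Fin n)
    (hm : m ≠ (⟨n - 2, by omega⟩ : Fin n)) :
    ∑ j, fderiv ℝ (gfun n C H m) x (Pi.single j 1) * nambuVF n C H x j = 0 := by
  have : ∀ j, nambuVF n C H x j = ((Matrix.of fun m j => fderiv ℝ (gfun n C H m) x
      (Pi.single j 1)).updateRow (⟨n - 2, by omega⟩ : Fin n) (Pi.single j 1)).det :=
    fun j => aux_nambu_matrix hn C H x j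
  simp_rw [this]
  have h2 := auxConserve (Matrix.of fun m j => fderiv ℝ (gfun n C H m) x (Pi.single j 1))
    (⟨n - 2, by omega⟩ : Fin n) m hm
  simpa using h2

lemma aux_nambu_cont {n : ℕ} (hn : 3 ≤ n) {Ω : Set (Fin n → ℝ)} (hΩ : IsOpen Ω)
    (C : Fin (n - 2) → (Fin n → ℝ) → ℝ) (H : (Fin n → ℝ) → ℝ)
    (hC : ∀ j, ContDiffOn ℝ 2 (C j) Ω) (hH : ContDiffOn ℝ 2 H Ω) :
    ContinuousOn (fun x => nambuVF n C H x) Ω := by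
  rw [continuousOn_pi]
  intro i
  have hform : ∀ x, nambuVF n C H x i = ∑ σ : Equiv.Perm (Fin n),
      ((Equiv.Perm.sign σ : ℤ) : ℝ) * ∏ k,
        (if σ k = (⟨n - 2, by omega⟩ : Fin n) then (Pi.single i (1:ℝ)) k
          else fderiv ℝ (gfun n C H (σ k)) x (Pi.single k 1)) :=
    fun x => nambu_formula hn C H x i
  simp_rw [hform]
  apply continuousOn_finset_sum
  intro σ _
  apply ContinuousOn.mul continuousOn_const
  apply continuousOn_finset_prod
  intro k _
  by_cases hk : σ k = (⟨n - 2, by omega⟩ : Fin n)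
  · simp only [if_pos hk]; exact continuousOn_const
  · simp only [if_neg hk]
    exact (((hgm C H hC hH (σ k)).fderiv_of_isOpen (m := 1) hΩ
      (by norm_num)).continuousOn).clm_apply continuousOn_const


theorem stmt_4 (n : ℕ) (hn : 3 ≤ n) (Ω : Set (Fin n → ℝ)) (hΩ : IsOpen Ω)
    (C : Fin (n - 2) → (Fin n → ℝ) → ℝ) (H : (Fin n → ℝ) → ℝ)
    (hC : ∀ j, ContDiffOn ℝ 2 (C j) Ω) (hH : ContDiffOn ℝ 2 H Ω)
    (ν : (Fin n → ℝ) → ℝ) (hν : ContDiffOn ℝ 1 ν Ω) (hν0 : ∀ x ∈ Ω, ν x ≠ 0)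
    -- `X = ν · V`, the rescaled Nambu vector field
    (X : (Fin n → ℝ) → (Fin n → ℝ)) (hX : ∀ x, X x = ν x • nambuVF n C H x)
    -- `γ : I → Ω` is a `C¹` solution of `x′(t) = X(x(t))` on an interval `I`
    (I : Set ℝ) (hI : I.OrdConnected) (γ : ℝ → (Fin n → ℝ))
    (hγΩ : ∀ t ∈ I, γ t ∈ Ω)
    (hode : ∀ t ∈ I, HasDerivWithinAt γ (X (γ t)) I t)
    (t₀ : ℝ) (ht₀ : t₀ ∈ I) :
    ∀ t ∈ I, phiMap n C H ν (γ t)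
      = Real.exp (-∫ τ in t₀..t, divergence n X (γ τ)) • phiMap n C H ν (γ t₀) := by
  intro t ht
  have hconv : Convex ℝ I := convex_iff_ordConnected.mpr hI
  have hγcont : ContinuousOn γ I := fun s hs => (hode s hs).continuousWithinAt
  set u : ℝ → ℝ := fun s => ν (γ s) with hu
  set d : ℝ → ℝ := fun s => divergence n X (γ s) with hd
  have hu0 : ∀ s ∈ I, u s ≠ 0 := fun s hs => hν0 _ (hγΩ s hs)
  have hucont : ContinuousOn u I :=
    (hν.continuousOn).comp hγcont (fun s hs => hγΩ s hs)
  have hdivP : ∀ x ∈ Ω, divergence n X x = fderiv ℝ ν x (nambuVF n C H x) :=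
    fun x hx => (aux_div hn hΩ C H hC hH ν hν X hX hx).2
  -- derivative of u along the flow
  have hu' : ∀ s ∈ I, HasDerivWithinAt u (u s * d s) I s := by
    intro s hs
    have hxΩ := hγΩ s hs
    have hνd : DifferentiableAt ℝ ν (γ s) :=
      (hν.differentiableOn one_ne_zero).differentiableAt (hΩ.mem_nhds hxΩ)
    have hcomp := hνd.hasFDerivAt.comp_hasDerivWithinAt s (hode s hs)
    have heq : fderiv ℝ ν (γ s) (X (γ s)) = u s * d s := by
      rw [hX (γ s), map_smul,
        show d s = divergence n X (γ s) from rfl, hdivP _ hxΩ,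
        show u s = ν (γ s) from rfl, smul_eq_mul]
    rw [heq] at hcomp
    exact hcomp
  -- conservation of the defining functions
  have hcons : ∀ m : Fin n, m ≠ (⟨n - 2, by omega⟩ : Fin n) → ∀ s ∈ I,
      gfun n C H m (γ s) = gfun n C H m (γ t₀) := by
    intro m hm s hs
    refine auxConst (f := fun s => gfun n C H m (γ s)) hconv ?_ hs ht₀
    intro τ hτ
    have hxΩ := hγΩ τ hτ
    have hgd : DifferentiableAt ℝ (gfun n C H m) (γ τ) :=
      ((hgm C H hC hH m).differentiableOn (by norm_num)).differentiableAt (hΩ.mem_nhds hxΩ)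
    have hcomp := hgd.hasFDerivAt.comp_hasDerivWithinAt τ (hode τ hτ)
    have hz : fderiv ℝ (gfun n C H m) (γ τ) (X (γ τ)) = 0 := by
      rw [hX, map_smul]
      have hVexp : nambuVF n C H (γ τ)
          = ∑ j, nambuVF n C H (γ τ) j • (Pi.single j (1:ℝ) : Fin n → ℝ) := by
        funext l
        simp [Pi.single_apply]
      rw [hVexp, map_sum]
      have hzz : ∑ j, fderiv ℝ (gfun n C H m) (γ τ)
          (nambuVF n C H (γ τ) j • (Pi.single j (1:ℝ) : Fin n → ℝ)) = 0 := by
        have hg0 := aux_gradV hn C H (γ τ) m hm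
        rw [← hg0]
        refine Finset.sum_congr rfl fun j _ => ?_
        rw [map_smul, smul_eq_mul, mul_comm]
      rw [hzz, smul_zero]
    rw [hz] at hcomp
    exact hcomp
  -- continuity of divergence along the flow
  have hdc : ContinuousOn d I := by
    have h1 : ContinuousOn (fun x => fderiv ℝ ν x (nambuVF n C H x)) Ω :=
      (hν.continuousOn_fderiv_of_isOpen hΩ le_rfl).clm_apply
        (aux_nambu_cont hn hΩ C H hC hH)
    have h2 : ContinuousOn (divergence n X) Ω := h1.congr (fun x hx => hdivP x hx)
    exact h2.comp hγcont (fun s hs => hγΩ s hs)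
  -- FTC
  set w : ℝ → ℝ := fun s => Real.log (u s) with hw
  have hw' : ∀ s ∈ I, HasDerivWithinAt w (d s) I s := by
    intro s hs
    have hcomp := (Real.hasDerivAt_log (hu0 s hs)).comp_hasDerivWithinAt s (hu' s hs)
    convert hcomp using 1
    all_goals first | rfl | rw [← mul_assoc, inv_mul_cancel₀ (hu0 s hs), one_mul]
  have husub : Set.uIcc t₀ t ⊆ I := hI.uIcc_subset ht₀ ht
  have hIcc : Set.Icc (min t₀ t) (max t₀ t) ⊆ I := husub
  have hint : ∫ τ in t₀..t, d τ = w t - w t₀ := by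
    refine intervalIntegral.integral_eq_sub_of_hasDeriv_right ?_ ?_ ?_
    · exact ((hucont.mono husub).log (fun s hs => hu0 s (husub hs)))
    · intro τ hτ
      have hτI : τ ∈ I := hIcc (Set.Ioo_subset_Icc_self hτ)
      refine (hw' τ hτI).mono_of_mem_nhdsWithin ?_
      refine Filter.mem_of_superset
        (Ioc_mem_nhdsGT_of_mem ⟨le_refl τ, hτ.2⟩) ?_
      intro z hz
      exact hIcc ⟨le_trans (le_of_lt hτ.1) (le_of_lt hz.1), hz.2⟩
    · exact (hdc.mono husub).intervalIntegrable
  -- sign constancy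
  have hsign : ∀ s ∈ I, 0 < u s * u t₀ := by
    intro s hs
    rcases lt_trichotomy (u s * u t₀) 0 with hneg | hzero | hpos
    · exfalso
      have hsub : Set.uIcc s t₀ ⊆ I := hI.uIcc_subset hs ht₀
      have hcont : ContinuousOn u (Set.uIcc s t₀) := hucont.mono hsub
      have h0mem : (0:ℝ) ∈ Set.uIcc (u s) (u t₀) := by
        rcases mul_neg_iff.mp hneg with ⟨h1, h2⟩ | ⟨h1, h2⟩
        · exact Set.mem_uIcc.mpr (Or.inr ⟨le_of_lt h2, le_of_lt h1⟩)
        · exact Set.mem_uIcc.mpr (Or.inl ⟨le_of_lt h1, le_of_lt h2⟩)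
      obtain ⟨c, hc, hc0⟩ := intermediate_value_uIcc hcont h0mem
      exact hu0 c (hsub hc) hc0
    · exact absurd hzero (mul_ne_zero (hu0 s hs) (hu0 t₀ ht₀))
    · exact hpos
  have hexp : Real.exp (-∫ τ in t₀..t, d τ) = u t₀ / u t := by
    rw [hint, neg_sub, Real.exp_sub]
    have hwt : w t = Real.log (u t) := rfl
    have hwt0 : w t₀ = Real.log (u t₀) := rfl
    rw [hwt, hwt0]
    rcases lt_or_gt_of_ne (hu0 t₀ ht₀) with hneg | hpos
    · have hut : u t < 0 := by nlinarith [hsign t ht]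
      rw [← Real.log_neg_eq_log (u t₀), ← Real.log_neg_eq_log (u t),
        Real.exp_log (by linarith), Real.exp_log (by linarith), neg_div_neg_eq]
    · have hut : 0 < u t := by nlinarith [hsign t ht]
      rw [Real.exp_log hpos, Real.exp_log hut]
  -- conclusion
  funext k
  rw [Pi.smul_apply, smul_eq_mul, phiMap, phiMap, hexp]
  have hFk : (if (k : ℕ) = 0 then (1:ℝ)
      else if hk : (k : ℕ) - 1 < n - 2 then C ⟨(k : ℕ) - 1, hk⟩ (γ t) else H (γ t))
      = (if (k : ℕ) = 0 then (1:ℝ)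
      else if hk : (k : ℕ) - 1 < n - 2 then C ⟨(k : ℕ) - 1, hk⟩ (γ t₀) else H (γ t₀)) := by
    by_cases hk0 : (k : ℕ) = 0
    · simp [hk0]
    · by_cases hk1 : (k : ℕ) - 1 < n - 2
      · simp only [if_neg hk0, dif_pos hk1]
        have hm : (⟨(k : ℕ) - 1, by omega⟩ : Fin n) ≠ (⟨n - 2, by omega⟩ : Fin n) := by
          intro hh
          have := congrArg Fin.val hh
          simp at this
          omega
        have := hcons ⟨(k : ℕ) - 1, by omega⟩ hm t ht
        rw [gfun, dif_pos (show ((⟨(k : ℕ) - 1, by omega⟩ : Fin n) : ℕ) < n - 2 from hk1)] at this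
        exact this
      · simp only [if_neg hk0, dif_neg hk1]
        have hm : (⟨n - 1, by omega⟩ : Fin n) ≠ (⟨n - 2, by omega⟩ : Fin n) := by
          intro hh
          have := congrArg Fin.val hh
          simp at this
          omega
        have := hcons ⟨n - 1, by omega⟩ hm t ht
        rw [gfun, dif_neg (show ¬ ((⟨n - 1, by omega⟩ : Fin n) : ℕ) < n - 2 by simp; omega)] at this
        exact this
  rw [hFk]
  have h1 : u t ≠ 0 := hu0 t ht
  have h2 : u t₀ ≠ 0 := hu0 t₀ ht₀
  rw [show ν (γ t) = u t from rfl, show ν (γ t₀) = u t₀ from rfl]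
  generalize (if (k : ℕ) = 0 then (1:ℝ)
      else if hk : (k : ℕ) - 1 < n - 2 then C ⟨(k : ℕ) - 1, hk⟩ (γ t₀) else H (γ t₀)) = A
  field_simp
end

section
/- Let n ≥ 3, let Ω ⊆ ℝⁿ be open, and let C₁,…,C_{n−2}, H : Ω → ℝ be C² functions. Then the associated Nambu vector field V is divergence-free on Ω: div V(x) = Σᵢ ∂Vᵢ/∂xᵢ(x) = 0 for all x ∈ Ω. -/
open Finset in
theorem stmt_5 (n : ℕ) (hn : 3 ≤ n) (Ω : Set (Fin n → ℝ)) (hΩ : IsOpen Ω)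
    (C : Fin (n - 2) → (Fin n → ℝ) → ℝ) (H : (Fin n → ℝ) → ℝ)
    (hC : ∀ j, ContDiffOn ℝ 2 (C j) Ω) (hH : ContDiffOn ℝ 2 H Ω) :
    ∀ x ∈ Ω, divergence n (nambuVF n C H) x = 0 := by
  intro x hx
  classical
  have hn2 : n - 2 < n := by omega
  set p : Fin n := ⟨n - 2, hn2⟩ with hp
  -- the family of functions giving the non-special rows of the Jacobian matrix
  set g : Fin n → (Fin n → ℝ) → ℝ :=
    fun k => if hk : (k : ℕ) < n - 2 then C ⟨k, hk⟩ else H with hgdef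
  have hgC : ∀ k, ContDiffAt ℝ 2 (g k) x := by
    intro k
    simp only [hgdef]
    split
    · exact (hC _).contDiffAt (hΩ.mem_nhds hx)
    · exact hH.contDiffAt (hΩ.mem_nhds hx)
  -- second derivatives
  set A : Fin n → (Fin n → ℝ) →L[ℝ] (Fin n → ℝ) →L[ℝ] ℝ :=
    fun k => fderiv ℝ (fderiv ℝ (g k)) x with hA
  have hsymm : ∀ k v w, A k v w = A k w v :=
    fun k => (hgC k).isSymmSndFDerivAt (by norm_num)
  have hD1 : ∀ k v, HasFDerivAt (fun y => fderiv ℝ (g k) y v)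
      ((ContinuousLinearMap.apply ℝ ℝ v).comp (A k)) x := by
    intro k v
    have h1 : ContDiffAt ℝ 1 (fderiv ℝ (g k)) x := (hgC k).fderiv_right (by norm_num)
    exact ((ContinuousLinearMap.apply ℝ ℝ v).hasFDerivAt).comp x
      (h1.differentiableAt (by norm_num)).hasFDerivAt
  -- Leibniz formula for the Nambu vector field, valid at every point
  have hdet : ∀ (y : Fin n → ℝ) (i : Fin n),
      nambuVF n C H y i =
        ∑ σ : Equiv.Perm (Fin n), ((Equiv.Perm.sign σ : ℤ) : ℝ) *
          ((Pi.single (σ p) (1 : ℝ) : Fin n → ℝ) i *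
            ∏ j ∈ univ.erase p, fderiv ℝ (g j) y (Pi.single (σ j) 1)) := by
    intro y i
    rw [nambuVF, jacDet, ← Matrix.det_transpose, Matrix.det_apply']
    refine Finset.sum_congr rfl fun σ _ => ?_
    congr 1
    rw [← Finset.mul_prod_erase univ _ (mem_univ p)]
    congr 1
    · -- the special row
      simp only [Matrix.transpose_apply, Matrix.of_apply]
      rw [dif_neg (lt_irrefl _), if_pos rfl]
      rw [show fderiv ℝ (fun z : Fin n → ℝ => z i) y = ContinuousLinearMap.proj i from
        (ContinuousLinearMap.proj i : (Fin n → ℝ) →L[ℝ] ℝ).fderiv]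
      rfl
    · refine Finset.prod_congr rfl fun j hj => ?_
      have hjp : j ≠ p := (Finset.mem_erase.mp hj).1
      have hval : ¬ ((j : Fin n) : ℕ) < n - 2 → ((j : Fin n) : ℕ) ≠ n - 2 := by
        intro _ hcontra
        exact hjp (Fin.ext (by simp [hp, hcontra]))
      simp only [Matrix.transpose_apply, Matrix.of_apply, hgdef]
      congr 1
      by_cases hlt : ((j : Fin n) : ℕ) < n - 2
      · rw [dif_pos hlt, dif_pos hlt]
      · rw [dif_neg hlt, dif_neg hlt, if_neg (hval hlt)]
  -- derivative of the product of the non-special entries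
  set P' : Equiv.Perm (Fin n) → (Fin n → ℝ) →L[ℝ] ℝ :=
    fun σ => ∑ m ∈ univ.erase p,
      (∏ j ∈ (univ.erase p).erase m, fderiv ℝ (g j) x (Pi.single (σ j) 1)) •
        ((ContinuousLinearMap.apply ℝ ℝ (Pi.single (σ m) 1)).comp (A m)) with hP'
  have hPd : ∀ σ : Equiv.Perm (Fin n),
      HasFDerivAt (fun y => ∏ j ∈ univ.erase p, fderiv ℝ (g j) y (Pi.single (σ j) 1))
        (P' σ) x :=
    fun σ => HasFDerivAt.finset_prod (fun m _ => hD1 m (Pi.single (σ m) 1))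
  -- derivative of each component of the vector field
  have hVi : ∀ i : Fin n, HasFDerivAt (fun y => nambuVF n C H y i)
      (∑ σ : Equiv.Perm (Fin n),
        (((Equiv.Perm.sign σ : ℤ) : ℝ) * (Pi.single (σ p) (1 : ℝ) : Fin n → ℝ) i) • P' σ) x := by
    intro i
    have h1 : HasFDerivAt (fun y => ∑ σ : Equiv.Perm (Fin n),
        (((Equiv.Perm.sign σ : ℤ) : ℝ) * (Pi.single (σ p) (1 : ℝ) : Fin n → ℝ) i) *
          ∏ j ∈ univ.erase p, fderiv ℝ (g j) y (Pi.single (σ j) 1))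
        (∑ σ : Equiv.Perm (Fin n),
          (((Equiv.Perm.sign σ : ℤ) : ℝ) * (Pi.single (σ p) (1 : ℝ) : Fin n → ℝ) i) • P' σ) x :=
      HasFDerivAt.fun_sum (fun σ _ => (hPd σ).const_mul _)
    have h2 : (fun y => nambuVF n C H y i) = (fun y => ∑ σ : Equiv.Perm (Fin n),
        (((Equiv.Perm.sign σ : ℤ) : ℝ) * (Pi.single (σ p) (1 : ℝ) : Fin n → ℝ) i) *
          ∏ j ∈ univ.erase p, fderiv ℝ (g j) y (Pi.single (σ j) 1)) := by
      funext y
      rw [hdet y i]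
      exact Finset.sum_congr rfl fun σ _ => by ring
    rw [h2]
    exact h1
  -- the divergence as a sum of directional derivatives of the components
  have hdiffVi : ∀ i, DifferentiableAt ℝ (fun y => nambuVF n C H y i) x :=
    fun i => (hVi i).differentiableAt
  have hfP : fderiv ℝ (nambuVF n C H) x =
      ContinuousLinearMap.pi (fun i => fderiv ℝ (fun y => nambuVF n C H y i) x) :=
    fderiv_pi hdiffVi
  have hdiv : divergence n (nambuVF n C H) x =
      ∑ i, fderiv ℝ (fun y => nambuVF n C H y i) x (Pi.single i 1) := by
    rw [divergence, LinearMap.trace_eq_matrix_trace ℝ (Pi.basisFun ℝ (Fin n)), hfP]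
    simp [Matrix.trace, Matrix.diag, LinearMap.toMatrix_apply]
  rw [hdiv]
  have hstep : ∀ i : Fin n, fderiv ℝ (fun y => nambuVF n C H y i) x (Pi.single i 1) =
      ∑ σ : Equiv.Perm (Fin n),
        (((Equiv.Perm.sign σ : ℤ) : ℝ) * (Pi.single (σ p) (1 : ℝ) : Fin n → ℝ) i) *
          P' σ (Pi.single i 1) := by
    intro i
    rw [(hVi i).fderiv]
    simp [ContinuousLinearMap.sum_apply]
  simp only [hstep]
  rw [Finset.sum_comm]
  have hone : ∀ σ : Equiv.Perm (Fin n),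
      (∑ i, (((Equiv.Perm.sign σ : ℤ) : ℝ) * (Pi.single (σ p) (1 : ℝ) : Fin n → ℝ) i) *
          P' σ (Pi.single i 1))
        = ((Equiv.Perm.sign σ : ℤ) : ℝ) * P' σ (Pi.single (σ p) 1) := by
    intro σ
    rw [Finset.sum_eq_single (σ p)
      (fun i _ hne => by simp [Pi.single_eq_of_ne hne])
      (fun h => absurd (mem_univ _) h)]
    simp
  rw [Finset.sum_congr rfl fun σ _ => hone σ]
  have hexp : ∀ σ : Equiv.Perm (Fin n),
      ((Equiv.Perm.sign σ : ℤ) : ℝ) * P' σ (Pi.single (σ p) 1) =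
        ∑ m ∈ univ.erase p, ((Equiv.Perm.sign σ : ℤ) : ℝ) *
          ((∏ j ∈ (univ.erase p).erase m, fderiv ℝ (g j) x (Pi.single (σ j) 1)) *
            A m (Pi.single (σ p) 1) (Pi.single (σ m) 1)) := by
    intro σ
    rw [hP']
    rw [ContinuousLinearMap.sum_apply, Finset.mul_sum]
    refine Finset.sum_congr rfl fun m _ => ?_
    simp [mul_assoc]
  rw [Finset.sum_congr rfl fun σ _ => hexp σ]
  rw [Finset.sum_comm]
  refine Finset.sum_eq_zero fun m hm => ?_
  have hmp : m ≠ p := (Finset.mem_erase.mp hm).1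
  set F : Equiv.Perm (Fin n) → ℝ := fun σ =>
    ((Equiv.Perm.sign σ : ℤ) : ℝ) *
      ((∏ j ∈ (univ.erase p).erase m, fderiv ℝ (g j) x (Pi.single (σ j) 1)) *
        A m (Pi.single (σ p) 1) (Pi.single (σ m) 1)) with hF
  have hkey : ∀ σ : Equiv.Perm (Fin n), F σ = - F (σ * Equiv.swap p m) := by
    intro σ
    have hsign : ((Equiv.Perm.sign (σ * Equiv.swap p m) : ℤ) : ℝ)
        = -((Equiv.Perm.sign σ : ℤ) : ℝ) := by
      rw [Equiv.Perm.sign_mul, Equiv.Perm.sign_swap hmp.symm]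
      push_cast
      ring
    have h2 : (∏ j ∈ (univ.erase p).erase m,
          fderiv ℝ (g j) x (Pi.single ((σ * Equiv.swap p m) j) 1))
        = ∏ j ∈ (univ.erase p).erase m, fderiv ℝ (g j) x (Pi.single (σ j) 1) := by
      refine Finset.prod_congr rfl fun j hj => ?_
      have hj1 : j ≠ m := (Finset.mem_erase.mp hj).1
      have hj2 : j ≠ p := (Finset.mem_erase.mp (Finset.mem_erase.mp hj).2).1
      rw [Equiv.Perm.mul_apply, Equiv.swap_apply_of_ne_of_ne hj2 hj1]
    have h3 : (σ * Equiv.swap p m) p = σ m := by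
      rw [Equiv.Perm.mul_apply, Equiv.swap_apply_left]
    have h4 : (σ * Equiv.swap p m) m = σ p := by
      rw [Equiv.Perm.mul_apply, Equiv.swap_apply_right]
    have : F (σ * Equiv.swap p m) = - F σ := by
      simp only [hF]
      rw [hsign, h2, h3, h4, hsymm m (Pi.single (σ m) 1) (Pi.single (σ p) 1)]
      ring
    rw [this]; ring
  have hsum : ∑ σ : Equiv.Perm (Fin n), F σ = ∑ σ : Equiv.Perm (Fin n), - F σ := by
    refine Fintype.sum_equiv (Equiv.mulRight (Equiv.swap p m)) F (fun σ => - F σ) ?_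
    intro σ
    simpa using hkey σ
  have hzero : ∑ σ : Equiv.Perm (Fin n), F σ = 0 := by
    rw [Finset.sum_neg_distrib] at hsum
    linarith
  exact hzero
end

section
/- Let n ≥ 3, let Ω ⊆ ℝⁿ be open, let X : Ω → ℝⁿ be a vector field, and let C₁,…,C_{n−2}, H : Ω → ℝ be C¹ first integrals of X (i.e. ∇Cⱼ(x)·X(x) = 0 for j = 1,…,n−2 and ∇H(x)·X(x) = 0 for all x ∈ Ω) whose gradients ∇C₁(x),…,∇C_{n−2}(x), ∇H(x) are linearly independent at every point x ∈ Ω. Then the associated Nambu vector field V satisfies V(x) ≠ 0 for all x ∈ Ω, and there exists a unique function ν : Ω → ℝ such that X(x) = ν(x)·V(x) for all x ∈ Ω. -/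
/-- The gradient vector `∇f(x) = (∂f/∂x₁(x), …, ∂f/∂xₙ(x))`. -/
noncomputable def gradVec (n : ℕ) (f : (Fin n → ℝ) → ℝ) (x : Fin n → ℝ) :
    Fin n → ℝ :=
  fun i => fderiv ℝ f x (Pi.single i 1)

open Matrix in
lemma aux_single_smul {n : ℕ} (v : Fin n → ℝ) (i : Fin n) :
    Pi.single i (v i) = v i • (Pi.single i 1 : Fin n → ℝ) := by
  funext j
  rcases eq_or_ne j i with h | h <;> simp [Pi.single_apply, h]

lemma aux_clm_apply {n : ℕ} (L : (Fin n → ℝ) →L[ℝ] ℝ) (v : Fin n → ℝ) :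
    L v = ∑ i, v i * L (Pi.single i 1) := by
  conv_lhs => rw [← Finset.univ_sum_single v]
  rw [map_sum]
  refine Finset.sum_congr rfl fun i _ => ?_
  rw [aux_single_smul, _root_.map_smul, smul_eq_mul]

open Matrix in
lemma aux_lin {n : ℕ} (A : Matrix (Fin n) (Fin n) ℝ) (p : Fin n) (w : Fin n → ℝ) :
    (A.updateRow p w).det = ∑ i, w i * (A.updateRow p (Pi.single i 1)).det := by
  let L : (Fin n → ℝ) →ₗ[ℝ] ℝ :=
    { toFun := fun v => (A.updateRow p v).det
      map_add' := fun u v => Matrix.det_updateRow_add A p u v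
      map_smul' := fun s v => Matrix.det_updateRow_smul A p s v }
  have : (A.updateRow p w).det = L w := rfl
  rw [this]
  conv_lhs => rw [← Finset.univ_sum_single w]
  rw [map_sum]
  refine Finset.sum_congr rfl fun i _ => ?_
  rw [aux_single_smul, _root_.map_smul, smul_eq_mul]
  rfl

open Matrix in
lemma key_alg {n : ℕ} (hn : 3 ≤ n) (g : Fin (n - 1) → Fin n → ℝ)
    (hg : LinearIndependent ℝ g) (A : Matrix (Fin n) (Fin n) ℝ) (p : Fin n)
    (e : Fin (n - 1) → Fin n) (he : ∀ j, e j ≠ p) (heinj : Function.Injective e)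
    (hrow : ∀ j, A (e j) = g j)
    (hcover : ∀ k, k ≠ p → ∃ j, e j = k)
    (V : Fin n → ℝ) (hV : ∀ w, (A.updateRow p w).det = w ⬝ᵥ V)
    (Xv : Fin n → ℝ) (hX : ∀ j, g j ⬝ᵥ Xv = 0) :
    V ≠ 0 ∧ Xv = ((Xv ⬝ᵥ V) / (V ⬝ᵥ V)) • V := by
  classical
  -- V is orthogonal to each g j
  have hVg : ∀ j, g j ⬝ᵥ V = 0 := by
    intro j
    rw [← hV (g j)]
    refine Matrix.det_zero_of_row_eq (he j) ?_
    rw [Matrix.updateRow_ne (he j), Matrix.updateRow_self, hrow]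
  -- the dot-with-V functional
  let φ : (Fin n → ℝ) →ₗ[ℝ] ℝ :=
    { toFun := fun u => u ⬝ᵥ V
      map_add' := fun u v => add_dotProduct u v V
      map_smul' := fun s u => smul_dotProduct s u V }
  -- anything in the span of g is orthogonal to V
  have hspanV : ∀ u ∈ Submodule.span ℝ (Set.range g), u ⬝ᵥ V = 0 := by
    intro u hu
    have : φ u = 0 := by
      refine Submodule.span_induction ?_ ?_ ?_ ?_ hu
      · rintro _ ⟨j, rfl⟩; exact hVg j
      · simp [φ]
      · intro a b _ _ ha hb; simp [φ, map_add] at ha hb ⊢; simp [ha, hb]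
      · intro a u' _ h; simp [φ] at h ⊢; simp [h]
    exact this
  -- rows independence for any w outside the span of g
  have hBindep : ∀ w : Fin n → ℝ, w ∉ Submodule.span ℝ (Set.range g) →
      LinearIndependent ℝ (fun k => A.updateRow p w k) := by
    intro w hw
    rw [Fintype.linearIndependent_iff]
    intro c hc
    have hsplit : ∑ k, c k • A.updateRow p w k
        = c p • w + ∑ k ∈ Finset.univ.erase p, c k • A.updateRow p w k := by
      rw [← Finset.add_sum_erase _ _ (Finset.mem_univ p), Matrix.updateRow_self]
    have hmem : ∑ k ∈ Finset.univ.erase p, c k • A.updateRow p w k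
        ∈ Submodule.span ℝ (Set.range g) := by
      refine Submodule.sum_mem _ fun k hk => ?_
      have hkp : k ≠ p := Finset.ne_of_mem_erase hk
      obtain ⟨j, rfl⟩ := hcover k hkp
      rw [Matrix.updateRow_ne hkp, hrow]
      exact Submodule.smul_mem _ _ (Submodule.subset_span ⟨j, rfl⟩)
    have hcp : c p = 0 := by
      by_contra hcp
      apply hw
      have : c p • w = -(∑ k ∈ Finset.univ.erase p, c k • A.updateRow p w k) := by
        rw [hsplit] at hc; linear_combination (norm := module) hc
      have hmem' : c p • w ∈ Submodule.span ℝ (Set.range g) := by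
        rw [this]; exact Submodule.neg_mem _ hmem
      have := Submodule.smul_mem _ (c p)⁻¹ hmem'
      rwa [inv_smul_smul₀ hcp] at this
    have hrest : ∑ k ∈ Finset.univ.erase p, c k • A.updateRow p w k = 0 := by
      rw [hsplit, hcp, zero_smul, zero_add] at hc; exact hc
    -- rewrite the erase-sum as a sum over the index set of g
    have himg : Finset.univ.erase p = Finset.univ.image e := by
      ext k
      simp only [Finset.mem_erase, Finset.mem_univ, and_true, Finset.mem_image, true_and]
      constructor
      · intro hk; obtain ⟨j, rfl⟩ := hcover k hk; exact ⟨j, rfl⟩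
      · rintro ⟨j, rfl⟩; exact he j
    have hsum2 : ∑ j, c (e j) • g j = 0 := by
      rw [himg, Finset.sum_image (fun a _ b _ h => heinj h)] at hrest
      rw [← hrest]
      refine Finset.sum_congr rfl fun j _ => ?_
      rw [Matrix.updateRow_ne (he j), hrow]
    have hce : ∀ j, c (e j) = 0 :=
      Fintype.linearIndependent_iff.mp hg _ hsum2
    intro k
    rcases eq_or_ne k p with rfl | hk
    · exact hcp
    · obtain ⟨j, rfl⟩ := hcover k hk; exact hce j
  -- V ≠ 0
  have hspan_ne_top : Submodule.span ℝ (Set.range g) ≠ ⊤ := by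
    intro htop
    have h1 : Module.finrank ℝ (Submodule.span ℝ (Set.range g)) = n - 1 := by
      rw [finrank_span_eq_card hg, Fintype.card_fin]
    rw [htop] at h1
    have h2 : Module.finrank ℝ (⊤ : Submodule ℝ (Fin n → ℝ)) = n := by
      rw [finrank_top, Module.finrank_pi, Fintype.card_fin]
    omega
  obtain ⟨w, hw⟩ : ∃ w, w ∉ Submodule.span ℝ (Set.range g) := by
    by_contra h
    push_neg at h
    exact hspan_ne_top (Submodule.eq_top_iff'.mpr h)
  have hVne : V ≠ 0 := by
    intro hV0
    have hdet := hBindep w hw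
    have : IsUnit (A.updateRow p w) := Matrix.linearIndependent_rows_iff_isUnit.mp hdet
    have hdetne : (A.updateRow p w).det ≠ 0 := by
      have := Matrix.isUnit_iff_isUnit_det _ |>.mp this
      exact this.ne_zero
    apply hdetne
    rw [hV w, hV0, dotProduct_zero]
  refine ⟨hVne, ?_⟩
  -- V itself is outside the span of g
  have hVnospan : V ∉ Submodule.span ℝ (Set.range g) := by
    intro hmem
    exact hVne (dotProduct_self_eq_zero.mp (hspanV V hmem))
  haveI : Nonempty (Fin n) := ⟨⟨0, by omega⟩⟩
  have hFindep := hBindep V hVnospan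
  have hcard : Fintype.card (Fin n) = Module.finrank ℝ (Fin n → ℝ) := by
    rw [Fintype.card_fin, Module.finrank_pi]; simp
  let b := basisOfLinearIndependentOfCardEqFinrank hFindep hcard
  have hb : ∀ k, b k = A.updateRow p V k := fun k =>
    congrFun (coe_basisOfLinearIndependentOfCardEqFinrank hFindep hcard) k
  -- Y := Xv - c • V is orthogonal to every row
  set cc : ℝ := (Xv ⬝ᵥ V) / (V ⬝ᵥ V) with hcc
  set Y : Fin n → ℝ := Xv - cc • V with hY
  have hVV : V ⬝ᵥ V ≠ 0 := fun h => hVne (dotProduct_self_eq_zero.mp h)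
  have hrowY : ∀ k, A.updateRow p V k ⬝ᵥ Y = 0 := by
    intro k
    rcases eq_or_ne k p with rfl | hk
    · rw [Matrix.updateRow_self, hY, dotProduct_sub, dotProduct_smul]
      rw [dotProduct_comm V Xv, hcc, smul_eq_mul]
      field_simp
      ring
    · obtain ⟨j, rfl⟩ := hcover k hk
      rw [Matrix.updateRow_ne hk, hrow, hY, dotProduct_sub, dotProduct_smul,
        hX j, hVg j, smul_eq_mul, mul_zero, sub_zero]
  -- hence Y ⬝ᵥ Y = 0
  have hYY : Y ⬝ᵥ Y = 0 := by
    let ψ : (Fin n → ℝ) →ₗ[ℝ] ℝ :=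
      { toFun := fun u => u ⬝ᵥ Y
        map_add' := fun u v => add_dotProduct u v Y
        map_smul' := fun s u => smul_dotProduct s u Y }
    have hrepr : Y = ∑ k, b.repr Y k • b k := (b.sum_repr Y).symm
    have : Y ⬝ᵥ Y = ψ (∑ k, b.repr Y k • b k) := by rw [← hrepr]; rfl
    rw [this, map_sum]
    refine Finset.sum_eq_zero fun k _ => ?_
    rw [_root_.map_smul]
    have : ψ (b k) = 0 := by show b k ⬝ᵥ Y = 0; rw [hb k]; exact hrowY k
    rw [this, smul_zero]
  have : Y = 0 := dotProduct_self_eq_zero.mp hYY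
  have := sub_eq_zero.mp this
  exact this

open Matrix in
theorem stmt_8 (n : ℕ) (hn : 3 ≤ n) (Ω : Set (Fin n → ℝ)) (hΩ : IsOpen Ω)
    (X : (Fin n → ℝ) → (Fin n → ℝ))
    (C : Fin (n - 2) → (Fin n → ℝ) → ℝ) (H : (Fin n → ℝ) → ℝ)
    (hC : ∀ j, ContDiffOn ℝ 1 (C j) Ω) (hH : ContDiffOn ℝ 1 H Ω)
    -- `C₁,…,C_{n−2}, H` are first integrals of `X`
    (hCint : ∀ j, ∀ x ∈ Ω, fderiv ℝ (C j) x (X x) = 0)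
    (hHint : ∀ x ∈ Ω, fderiv ℝ H x (X x) = 0)
    -- with gradients linearly independent at every point of `Ω`
    (hindep : ∀ x ∈ Ω, LinearIndependent ℝ
      (fun j : Fin (n - 1) => if hj : (j : ℕ) < n - 2
        then gradVec n (C ⟨j, hj⟩) x else gradVec n H x)) :
    -- then `V` vanishes nowhere on `Ω` and `X = ν · V` for a unique `ν` on `Ω`
    (∀ x ∈ Ω, nambuVF n C H x ≠ 0) ∧
    ∃ ν : (Fin n → ℝ) → ℝ,
      (∀ x ∈ Ω, X x = ν x • nambuVF n C H x) ∧
      ∀ ν' : (Fin n → ℝ) → ℝ,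
        (∀ x ∈ Ω, X x = ν' x • nambuVF n C H x) → ∀ x ∈ Ω, ν' x = ν x := by
  classical
  have hn2 : n - 2 < n := by omega
  have hn2' : n - 2 < n - 1 := by omega
  have key : ∀ x ∈ Ω, nambuVF n C H x ≠ 0 ∧
      X x = ((X x ⬝ᵥ nambuVF n C H x) /
        (nambuVF n C H x ⬝ᵥ nambuVF n C H x)) • nambuVF n C H x := by
    intro x hx
    let g : Fin (n - 1) → Fin n → ℝ := fun j => if hj : (j : ℕ) < n - 2
      then gradVec n (C ⟨j, hj⟩) x else gradVec n H x
    have hg : LinearIndependent ℝ g := hindep x hx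
    let p : Fin n := ⟨n - 2, hn2⟩
    let A : Matrix (Fin n) (Fin n) ℝ := Matrix.of fun k j =>
      if hk : (k : ℕ) < n - 2 then g ⟨(k : ℕ), by omega⟩ j else g ⟨n - 2, hn2'⟩ j
    let e : Fin (n - 1) → Fin n := fun j =>
      if (j : ℕ) < n - 2 then ⟨(j : ℕ), by omega⟩ else ⟨n - 1, by omega⟩
    have he : ∀ j, e j ≠ p := by
      intro j
      simp only [e, p]
      split <;> (intro h; rw [Fin.ext_iff] at h; simp at h; omega)
    have heinj : Function.Injective e := by
      intro a b hab
      have ha := a.isLt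
      have hb := b.isLt
      simp only [e] at hab
      rw [Fin.ext_iff]
      split at hab <;> split at hab <;>
        rw [Fin.mk.injEq] at hab <;> omega
    have hrow : ∀ j, A (e j) = g j := by
      intro j
      funext jj
      by_cases hj : (j : ℕ) < n - 2
      · have h1 : e j = ⟨(j : ℕ), by omega⟩ := if_pos hj
        simp only [A, Matrix.of_apply, h1, dif_pos hj]
        all_goals simp only [g, dif_pos hj]
        all_goals rfl
      · have h1 : e j = ⟨n - 1, by omega⟩ := if_neg hj
        have h2 : ¬ (n - 1 < n - 2) := by omega
        simp only [A, Matrix.of_apply, h1]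
        simp only [dif_neg h2]
        simp only [g, dif_neg hj, dif_neg (lt_irrefl (n - 2))]
    have hcover : ∀ k, k ≠ p → ∃ j, e j = k := by
      intro k hk
      by_cases h : (k : ℕ) < n - 2
      · refine ⟨⟨(k : ℕ), by omega⟩, ?_⟩
        simp only [e, if_pos h]
      · have hk' : (k : ℕ) ≠ n - 2 := fun hh => hk (Fin.ext hh)
        have : (k : ℕ) = n - 1 := by omega
        refine ⟨⟨n - 2, hn2'⟩, ?_⟩
        simp only [e, if_neg (lt_irrefl (n - 2))]
        exact Fin.ext this.symm
    -- identification of nambuVF with determinants of updated rows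
    have hnam : ∀ i, nambuVF n C H x i = (A.updateRow p (Pi.single i 1)).det := by
      intro i
      show jacDet n _ x = _
      unfold jacDet
      congr 1
      ext k j
      by_cases hk : (k : ℕ) < n - 2
      · have hkp : k ≠ p := by
          intro h; rw [Fin.ext_iff] at h; simp [p] at h; omega
        rw [Matrix.updateRow_ne hkp]
        simp only [Matrix.of_apply, dif_pos hk, A]
        simp only [g, dif_pos hk]
        rfl
      · by_cases hk2 : (k : ℕ) = n - 2
        · have hkp : k = p := Fin.ext hk2
          subst hkp
          rw [Matrix.updateRow_self]
          simp only [Matrix.of_apply]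
          rw [dif_neg hk]
          split
          · have hproj : (fun y : Fin n → ℝ => y i) =
                ⇑(ContinuousLinearMap.proj (R := ℝ) (φ := fun _ : Fin n => ℝ) i) := rfl
            rw [hproj, ContinuousLinearMap.fderiv]
            simp [Pi.single_apply, eq_comm]
          · next h => simp [hk2] at h
        · have hkp : k ≠ p := fun h => hk2 (by rw [h])
          rw [Matrix.updateRow_ne hkp]
          simp only [Matrix.of_apply, dif_neg hk, if_neg hk2, A]
          simp only [g, dif_neg (lt_irrefl (n - 2))]
          rfl
    have hV : ∀ w, (A.updateRow p w).det = w ⬝ᵥ nambuVF n C H x := by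
      intro w
      rw [aux_lin,
        show w ⬝ᵥ nambuVF n C H x = ∑ i, w i * nambuVF n C H x i from rfl]
      refine Finset.sum_congr rfl fun i _ => ?_
      rw [hnam i]
    have hX : ∀ j, g j ⬝ᵥ X x = 0 := by
      intro j
      by_cases hj : (j : ℕ) < n - 2
      · have h1 : g j = gradVec n (C ⟨(j : ℕ), hj⟩) x := dif_pos hj
        rw [h1]
        have h2 := hCint ⟨(j : ℕ), hj⟩ x hx
        rw [aux_clm_apply (fderiv ℝ (C ⟨(j : ℕ), hj⟩) x) (X x)] at h2
        rw [← h2]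
        exact Finset.sum_congr rfl fun i _ => mul_comm _ _
      · have h1 : g j = gradVec n H x := dif_neg hj
        rw [h1]
        have h2 := hHint x hx
        rw [aux_clm_apply (fderiv ℝ H x) (X x)] at h2
        rw [← h2]
        exact Finset.sum_congr rfl fun i _ => mul_comm _ _
    exact key_alg hn g hg A p e he heinj hrow hcover _ hV _ hX
  refine ⟨fun x hx => (key x hx).1,
    ⟨fun x => (X x ⬝ᵥ nambuVF n C H x) / (nambuVF n C H x ⬝ᵥ nambuVF n C H x),
      fun x hx => (key x hx).2, ?_⟩⟩
  intro ν' hν' x hx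
  have h1 := hν' x hx
  have h2 := (key x hx).2
  have hVne := (key x hx).1
  have h3 : (ν' x - (X x ⬝ᵥ nambuVF n C H x) / (nambuVF n C H x ⬝ᵥ nambuVF n C H x)) •
      nambuVF n C H x = 0 := by
    rw [sub_smul, ← h1, ← h2, sub_self]
  rcases smul_eq_zero.mp h3 with h | h
  · linarith [sub_eq_zero.mp h]
  · exact absurd h hVne
end

section
/- Let n ≥ 3, let Ω ⊆ ℝⁿ be open, let C₁,…,C_{n−2}, H : Ω → ℝ be C² functions, let ν : Ω → ℝ be a nowhere-vanishing C¹ function, let X = ν·V be the rescaled Nambu vector field, and set Φ = (1/ν, C₁/ν, …, C_{n−2}/ν, H/ν). If at a point x ∈ Ω one has div X(x)·∂(1/ν, C₁, …, C_{n−2}, H)/∂(x₁,…,xₙ)(x) ≠ 0, then the derivative DΦ(x) is invertible; consequently Φ is a local C¹ diffeomorphism in a neighborhood of x. -/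
theorem stmt_11 (n : ℕ) (hn : 3 ≤ n) (Ω : Set (Fin n → ℝ)) (hΩ : IsOpen Ω)
    (C : Fin (n - 2) → (Fin n → ℝ) → ℝ) (H : (Fin n → ℝ) → ℝ)
    (hC : ∀ j, ContDiffOn ℝ 2 (C j) Ω) (hH : ContDiffOn ℝ 2 H Ω)
    (ν : (Fin n → ℝ) → ℝ) (hν : ContDiffOn ℝ 1 ν Ω) (hν0 : ∀ x ∈ Ω, ν x ≠ 0)
    -- `X = ν · V`, the rescaled Nambu vector field
    (X : (Fin n → ℝ) → (Fin n → ℝ)) (hX : ∀ x, X x = ν x • nambuVF n C H x)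
    (x : Fin n → ℝ) (hx : x ∈ Ω)
    -- `div X(x) · ∂(1/ν, C₁, …, C_{n−2}, H)/∂(x₁,…,xₙ)(x) ≠ 0`
    (hnz : divergence n X x *
      jacDet n (fun k => if (k : ℕ) = 0 then (fun y => (ν y)⁻¹)
        else if hk : (k : ℕ) - 1 < n - 2 then C ⟨(k : ℕ) - 1, hk⟩ else H) x ≠ 0) :
    -- then `DΦ(x)` is invertible, and `Φ` is a local `C¹` diffeomorphism near `x`
    Function.Bijective (fderiv ℝ (phiMap n C H ν) x) ∧
    ∃ s : Set (Fin n → ℝ), IsOpen s ∧ x ∈ s ∧ s ⊆ Ω ∧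
      IsOpen (phiMap n C H ν '' s) ∧
      ContDiffOn ℝ 1 (phiMap n C H ν) s ∧
      ∃ Ψ : (Fin n → ℝ) → (Fin n → ℝ),
        ContDiffOn ℝ 1 Ψ (phiMap n C H ν '' s) ∧
        (∀ y ∈ s, Ψ (phiMap n C H ν y) = y) ∧
        (∀ u ∈ phiMap n C H ν '' s, phiMap n C H ν (Ψ u) = u) := by
  classical
  have hn0 : 0 < n := by omega
  set F : Fin n → (Fin n → ℝ) → ℝ := fun k => if (k : ℕ) = 0 then (fun y => (ν y)⁻¹)
        else if hk : (k : ℕ) - 1 < n - 2 then C ⟨(k : ℕ) - 1, hk⟩ else H with hF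
  have hJ : jacDet n F x ≠ 0 := right_ne_zero_of_mul hnz
  set Φ : (Fin n → ℝ) → (Fin n → ℝ) := phiMap n C H ν with hΦdef
  -- the open set where everything is nice
  set U : Set (Fin n → ℝ) := Ω ∩ ν ⁻¹' {0}ᶜ with hUdef
  have hU : IsOpen U := hν.continuousOn.isOpen_inter_preimage hΩ isOpen_compl_singleton
  have hUΩ : U ⊆ Ω := Set.inter_subset_left
  have hxU : x ∈ U := ⟨hx, by simp [hν0 x hx]⟩
  -- identification of components of Φ
  have hcomp0 : ∀ k : Fin n, (k : ℕ) = 0 → (fun z => Φ z k) = F k := by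
    intro k hk
    funext z
    simp [hΦdef, phiMap, hF, hk, one_div]
  have hcompk : ∀ k : Fin n, (k : ℕ) ≠ 0 →
      (fun z => Φ z k) = fun z => F k z * (ν z)⁻¹ := by
    intro k hk
    funext z
    by_cases h : (k : ℕ) - 1 < n - 2 <;>
      simp [hΦdef, phiMap, hF, hk, h, div_eq_mul_inv]
  have hFc : ∀ k : Fin n, (k : ℕ) ≠ 0 → ContDiffOn ℝ 1 (F k) Ω := by
    intro k hk
    rw [hF]
    simp only [hk, if_false]
    split_ifs with h
    · exact (hC _).of_le (by norm_num)
    · exact hH.of_le (by norm_num)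
  have hinv : ContDiffOn ℝ 1 (fun y => (ν y)⁻¹) U :=
    (hν.mono hUΩ).inv (fun y hy => hy.2)
  have hΦU : ContDiffOn ℝ 1 Φ U := by
    rw [contDiffOn_pi]
    intro i
    by_cases hi : (i : ℕ) = 0
    · rw [hcomp0 i hi, hF]; simpa [hi] using hinv
    · rw [hcompk i hi]
      exact ((hFc i hi).mono hUΩ).mul hinv
  have hdΦ : ∀ y ∈ U, DifferentiableAt ℝ Φ y := fun y hy =>
    (hΦU.differentiableOn one_ne_zero).differentiableAt (hU.mem_nhds hy)
  -- derivatives at x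
  have hBν : HasFDerivAt ν (fderiv ℝ ν x) x :=
    ((hν.differentiableOn one_ne_zero).differentiableAt (hΩ.mem_nhds hx)).hasFDerivAt
  have hD0 : HasFDerivAt (fun y => (ν y)⁻¹)
      ((-((ν x) ^ 2)⁻¹) • fderiv ℝ ν x) x :=
    (hasDerivAt_inv (hν0 x hx)).comp_hasFDerivAt x hBν
  set D0 : (Fin n → ℝ) →L[ℝ] ℝ := (-((ν x) ^ 2)⁻¹) • fderiv ℝ ν x with hD0def
  have hFdiff : ∀ k : Fin n, (k : ℕ) ≠ 0 →
      HasFDerivAt (F k) (fderiv ℝ (F k) x) x := fun k hk =>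
    (((hFc k hk).differentiableOn one_ne_zero).differentiableAt (hΩ.mem_nhds hx)).hasFDerivAt
  have hrow : ∀ k : Fin n, HasFDerivAt (fun z => Φ z k)
      (if (k : ℕ) = 0 then D0 else (F k x • D0 + (ν x)⁻¹ • fderiv ℝ (F k) x)) x := by
    intro k
    by_cases hk : (k : ℕ) = 0
    · rw [if_pos hk, hcomp0 k hk, show F k = fun y => (ν y)⁻¹ by rw [hF]; simp [hk]]
      exact hD0
    · rw [if_neg hk, hcompk k hk]
      exact (hFdiff k hk).mul hD0
  -- the matrices
  set N : Matrix (Fin n) (Fin n) ℝ :=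
    Matrix.of fun i j => fderiv ℝ (F i) x (Pi.single j 1) with hN
  have hNdet : N.det ≠ 0 := hJ
  set k0 : Fin n := ⟨0, hn0⟩ with hk0def
  have hFk0 : F k0 = fun y => (ν y)⁻¹ := by rw [hF]; simp [hk0def]
  have hN0 : ∀ j, N k0 j = D0 (Pi.single j 1) := by
    intro j
    show fderiv ℝ (F k0) x (Pi.single j 1) = D0 (Pi.single j 1)
    rw [hFk0, hD0.fderiv]
  set M : Matrix (Fin n) (Fin n) ℝ :=
    Matrix.of fun i j => fderiv ℝ (fun z => Φ z i) x (Pi.single j 1) with hM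
  have hMentry : ∀ i j, M i j =
      if (i : ℕ) = 0 then N k0 j else ((ν x)⁻¹ * N i j + F i x * N k0 j) := by
    intro i j
    show fderiv ℝ (fun z => Φ z i) x (Pi.single j 1) = _
    rw [(hrow i).fderiv]
    by_cases hi : (i : ℕ) = 0
    · rw [if_pos hi, if_pos hi, hN0 j]
    · rw [if_neg hi, if_neg hi, hN0 j]
      show (F i x • D0 + (ν x)⁻¹ • fderiv ℝ (F i) x) (Pi.single j 1) = _
      have : N i j = fderiv ℝ (F i) x (Pi.single j 1) := rfl
      rw [this]
      simp [ContinuousLinearMap.add_apply, ContinuousLinearMap.smul_apply, smul_eq_mul]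
      ring
  set L : Matrix (Fin n) (Fin n) ℝ := Matrix.of fun i j =>
    if j = i then (if (i : ℕ) = 0 then 1 else (ν x)⁻¹)
    else if (j : ℕ) = 0 then F i x else 0 with hL
  have hML : M = L * N := by
    ext i j
    rw [Matrix.mul_apply, hMentry i j]
    by_cases hi : (i : ℕ) = 0
    · have hik : i = k0 := Fin.ext hi
      rw [if_pos hi]
      have hsum : ∀ m, L i m * N m j = if m = i then N i j else 0 := by
        intro m
        by_cases hm : m = i
        · subst hm; simp [hL, hi]
        · have hm0 : (m : ℕ) ≠ 0 := fun h => hm (by rw [hik]; exact Fin.ext h)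
          simp [hL, hm, hm0]
      rw [Finset.sum_congr rfl fun m _ => hsum m, Finset.sum_ite_eq' Finset.univ i]
      simp [hik]
    · rw [if_neg hi]
      have hik : i ≠ k0 := fun h => hi (by rw [h])
      have hsum : ∀ m, L i m * N m j =
          (if m = i then (ν x)⁻¹ * N i j else 0) +
          (if m = k0 then F i x * N k0 j else 0) := by
        intro m
        by_cases hmi : m = i
        · subst hmi
          simp [hL, hi, hik]
        · by_cases hmk : m = k0
          · subst hmk
            simp [hL, hmi]; exact fun h => absurd rfl h
          · have hm0 : (m : ℕ) ≠ 0 := fun h => hmk (Fin.ext h)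
            simp [hL, hmi, hm0, hmk]
      rw [Finset.sum_congr rfl fun m _ => hsum m, Finset.sum_add_distrib,
        Finset.sum_ite_eq' Finset.univ i, Finset.sum_ite_eq' Finset.univ k0]
      simp
  have hLtri : L.BlockTriangular OrderDual.toDual := by
    intro i j hij
    have hij' : i < j := hij
    have h1 : j ≠ i := ne_of_gt hij'
    have h2 : (j : ℕ) ≠ 0 := by
      have : (i : ℕ) < (j : ℕ) := hij'
      omega
    simp [hL, h1, h2]
  have hLdet : L.det ≠ 0 := by
    rw [Matrix.det_of_lowerTriangular L hLtri]
    apply Finset.prod_ne_zero_iff.2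
    intro i _
    by_cases hi : (i : ℕ) = 0 <;>
      simp [hL, hi, inv_ne_zero (hν0 x hx)]
  have hMdet : M.det ≠ 0 := by
    rw [hML, Matrix.det_mul]
    exact mul_ne_zero hLdet hNdet
  -- determinant of the derivative
  have hpi : fderiv ℝ Φ x =
      ContinuousLinearMap.pi (fun i => fderiv ℝ (fun z => Φ z i) x) :=
    fderiv_pi fun i => (hrow i).differentiableAt
  have hdet : (fderiv ℝ Φ x).det = M.det := by
    rw [show (fderiv ℝ Φ x).det
        = LinearMap.det ((fderiv ℝ Φ x) : (Fin n → ℝ) →ₗ[ℝ] (Fin n → ℝ)) from rfl]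
    rw [← LinearMap.det_toMatrix (Pi.basisFun ℝ (Fin n))]
    congr 1
    ext i j
    rw [LinearMap.toMatrix_apply, Pi.basisFun_repr, Pi.basisFun_apply]
    rw [ContinuousLinearMap.coe_coe, hpi]
    simp [ContinuousLinearMap.pi_apply, hM]
  have hdet0 : (fderiv ℝ Φ x).det ≠ 0 := by rw [hdet]; exact hMdet
  -- the set where the derivative stays invertible
  have hfc : ContinuousOn (fun y => fderiv ℝ Φ y) U :=
    hΦU.continuousOn_fderiv_of_isOpen hU le_rfl
  have hρ : ContinuousOn (fun y => (fderiv ℝ Φ y).det) U :=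
    ContinuousLinearMap.continuous_det.comp_continuousOn hfc
  set U' : Set (Fin n → ℝ) := U ∩ (fun y => (fderiv ℝ Φ y).det) ⁻¹' {0}ᶜ with hU'def
  have hU' : IsOpen U' := hρ.isOpen_inter_preimage hU isOpen_compl_singleton
  have hxU' : x ∈ U' := ⟨hxU, by simpa using hdet0⟩
  have hU'det : ∀ y ∈ U', (fderiv ℝ Φ y).det ≠ 0 := fun y hy => by simpa using hy.2
  -- inverse function theorem
  have hΦx : ContDiffAt ℝ 1 Φ x := hΦU.contDiffAt (hU.mem_nhds hxU)
  have hdx : HasFDerivAt Φ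
      (((fderiv ℝ Φ x).toContinuousLinearEquivOfDetNeZero hdet0 :
        (Fin n → ℝ) ≃L[ℝ] (Fin n → ℝ)) : (Fin n → ℝ) →L[ℝ] (Fin n → ℝ)) x := by
    rw [ContinuousLinearMap.coe_toContinuousLinearEquivOfDetNeZero]
    exact (hdΦ x hxU).hasFDerivAt
  set P := hΦx.toOpenPartialHomeomorph Φ hdx one_ne_zero with hP
  have hPcoe : ⇑P = Φ := ContDiffAt.toOpenPartialHomeomorph_coe hΦx hdx one_ne_zero
  constructor
  · have hb := ((fderiv ℝ Φ x).toContinuousLinearEquivOfDetNeZero hdet0).bijective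
    have hc : ⇑((fderiv ℝ Φ x).toContinuousLinearEquivOfDetNeZero hdet0)
        = ⇑(fderiv ℝ Φ x) := by
      funext z
      exact ContinuousLinearMap.toContinuousLinearEquivOfDetNeZero_apply _ _ z
    rwa [hc] at hb
  · refine ⟨P.source ∩ U', P.open_source.inter hU',
      ⟨ContDiffAt.mem_toOpenPartialHomeomorph_source hΦx hdx one_ne_zero, hxU'⟩,
      fun y hy => hUΩ hy.2.1, ?_, hΦU.mono fun y hy => hy.2.1, P.symm, ?_, ?_, ?_⟩
    · have himg : Φ '' (P.source ∩ U') = P '' (P.source ∩ U') := by rw [hPcoe]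
      rw [himg]
      exact P.isOpen_image_of_subset_source (P.open_source.inter hU')
        Set.inter_subset_left
    · intro u hu
      rcases hu with ⟨y, hy, rfl⟩
      have hyU : y ∈ U := hy.2.1
      have hyt : Φ y ∈ P.target := by rw [← hPcoe]; exact P.map_source hy.1
      have hsy : P.symm (Φ y) = y := by
        have := P.left_inv hy.1
        rwa [hPcoe] at this
      have hdy : HasFDerivAt (⇑P)
          (((fderiv ℝ Φ y).toContinuousLinearEquivOfDetNeZero (hU'det y hy.2) :
            (Fin n → ℝ) ≃L[ℝ] (Fin n → ℝ)) : (Fin n → ℝ) →L[ℝ] (Fin n → ℝ))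
          (P.symm (Φ y)) := by
        rw [hsy, hPcoe, ContinuousLinearMap.coe_toContinuousLinearEquivOfDetNeZero]
        exact (hdΦ y hyU).hasFDerivAt
      have hcy : ContDiffAt ℝ 1 (⇑P) (P.symm (Φ y)) := by
        rw [hsy, hPcoe]
        exact hΦU.contDiffAt (hU.mem_nhds hyU)
      exact (P.contDiffAt_symm hyt hdy hcy).contDiffWithinAt
    · intro y hy
      have := P.left_inv hy.1
      rwa [hPcoe] at this
    · intro u hu
      rcases hu with ⟨y, hy, rfl⟩
      have hyt : Φ y ∈ P.target := by rw [← hPcoe]; exact P.map_source hy.1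
      have := P.right_inv hyt
      rwa [hPcoe] at this
end

section
/- Let Ω ⊆ ℝⁿ be open, let X, Y : Ω → ℝⁿ be C¹ vector fields, and let μ : Ω → ℝ be continuous with [X, Y] = μ·X on Ω. Suppose Y is complete with flow φ : ℝ × Ω → Ω (so ∂φ/∂ε(ε,x) = Y(φ(ε,x)) and φ(0,x) = x). Then for every ε ∈ ℝ and x ∈ Ω, Dφ_ε(x)·X(x) = exp(∫₀^ε μ(φ_σ(x)) dσ)·X(φ_ε(x)), where Dφ_ε(x) denotes the derivative of φ_ε = φ(ε,·) at x. In particular, the one-parameter group φ_ε maps trajectories of ẋ = X(x) to trajectories of the same system. -/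
open Set Metric Real Filter

variable {E : Type*} [NormedAddCommGroup E] [NormedSpace ℝ E]

lemma hasDerivWithinAt_singleton' (f : ℝ → E) (d : E) (x : ℝ) :
    HasDerivWithinAt f d {x} x := by
  rw [hasDerivWithinAt_iff_hasFDerivWithinAt]
  simp only [HasFDerivWithinAt, nhdsWithin_singleton, hasFDerivAtFilter_iff_isLittleO,
    Asymptotics.isLittleO_pure]
  simp

/-- Glue two solutions of an ODE at a common endpoint. -/
lemma ode_glue {F : ℝ → E → E} {v w : ℝ → E} {a c c' : ℝ}
    (hac : a ≤ c) (hcc' : c ≤ c')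
    (hv : ∀ σ ∈ Icc a c, HasDerivWithinAt v (F σ (v σ)) (Icc a c) σ)
    (hw : ∀ σ ∈ Icc c c', HasDerivWithinAt w (F σ (w σ)) (Icc c c') σ)
    (hvw : w c = v c) :
    ∃ u : ℝ → E, (∀ σ ∈ Icc a c, u σ = v σ) ∧
      ∀ σ ∈ Icc a c', HasDerivWithinAt u (F σ (u σ)) (Icc a c') σ := by
  classical
  set u : ℝ → E := fun σ => if σ ≤ c then v σ else w σ with hu
  have huv : ∀ σ ∈ Icc a c, u σ = v σ := fun σ hσ => if_pos hσ.2
  have huw : ∀ σ ∈ Icc c c', u σ = w σ := by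
    intro σ hσ
    by_cases h : σ ≤ c
    · have : σ = c := le_antisymm h hσ.1
      simp [u, this, hvw]
    · simp [u, h]
  refine ⟨u, huv, ?_⟩
  intro σ hσ
  rcases lt_trichotomy σ c with h | h | h
  · have hσ' : σ ∈ Icc a c := ⟨hσ.1, h.le⟩
    have base : HasDerivWithinAt u (F σ (u σ)) (Icc a c) σ := by
      rw [huv σ hσ']
      exact (hv σ hσ').congr huv (huv σ hσ')
    refine base.mono_of_mem_nhdsWithin ?_
    rw [mem_nhdsWithin]
    exact ⟨Iio c, isOpen_Iio, h, fun y hy => ⟨hy.2.1, hy.1.le⟩⟩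
  · subst h
    have h1 : HasDerivWithinAt u (F σ (u σ)) (Icc a σ) σ := by
      rw [huv σ ⟨hac, le_rfl⟩]
      exact (hv σ ⟨hac, le_rfl⟩).congr huv (huv σ ⟨hac, le_rfl⟩)
    have h2 : HasDerivWithinAt u (F σ (u σ)) (Icc σ c') σ := by
      have : u σ = w σ := huw σ ⟨le_rfl, hcc'⟩
      rw [this]
      exact (hw σ ⟨le_rfl, hcc'⟩).congr huw this
    have := h1.union h2
    rwa [Icc_union_Icc_eq_Icc hac hcc'] at this
  · have hσ' : σ ∈ Icc c c' := ⟨h.le, hσ.2⟩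
    have base : HasDerivWithinAt u (F σ (u σ)) (Icc c c') σ := by
      rw [huw σ hσ']
      exact (hw σ hσ').congr huw (huw σ hσ')
    refine base.mono_of_mem_nhdsWithin ?_
    rw [mem_nhdsWithin]
    exact ⟨Ioi c, isOpen_Ioi, h, fun y hy => ⟨le_of_lt hy.1, hy.2.2⟩⟩

/-- Global existence for a linear ODE `v' = A t v` on `[0, b]`. -/
lemma linear_ode_exists {n : ℕ} (A : ℝ → ((Fin n → ℝ) →L[ℝ] (Fin n → ℝ)))
    (hA : Continuous A) {b M : ℝ} (hb : 0 ≤ b) (hM : 0 ≤ M)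
    (hbd : ∀ t ∈ Icc 0 b, ‖A t‖ ≤ M) (ξ : Fin n → ℝ) :
    ∃ v : ℝ → (Fin n → ℝ), v 0 = ξ ∧
      ∀ σ ∈ Icc 0 b, HasDerivWithinAt v (A σ (v σ)) (Icc 0 b) σ := by
  classical
  set τ : ℝ := (2 * (M + 1))⁻¹ with hτdef
  have hτ : 0 < τ := by positivity
  have key : ∀ k : ℕ, ∃ v : ℝ → (Fin n → ℝ), v 0 = ξ ∧
      ∀ σ ∈ Icc 0 (min b (k * τ)),
        HasDerivWithinAt v (A σ (v σ)) (Icc 0 (min b (k * τ))) σ := by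
    intro k
    induction k with
    | zero =>
      refine ⟨fun _ => ξ, rfl, ?_⟩
      intro σ hσ
      have h0 : min b ((0 : ℕ) * τ) = 0 := by simp [hb]
      rw [h0] at hσ ⊢
      rw [Icc_self] at hσ ⊢
      rw [mem_singleton_iff] at hσ
      subst hσ
      exact hasDerivWithinAt_singleton' _ _ _
    | succ k ih =>
      obtain ⟨v, hv0, hv⟩ := ih
      by_cases hbk : b ≤ k * τ
      · have h1 : min b (k * τ) = b := min_eq_left hbk
        have h2 : min b ((k + 1 : ℕ) * τ) = b := by
          refine min_eq_left (hbk.trans ?_)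
          have : (k : ℝ) ≤ (k + 1 : ℕ) := by push_cast; linarith
          nlinarith [hτ.le]
        rw [h2]
        rw [h1] at hv
        exact ⟨v, hv0, hv⟩
      · push_neg at hbk
        set c : ℝ := k * τ with hc
        have hc0 : 0 ≤ c := by positivity
        have hmin : min b (k * τ) = c := min_eq_right hbk.le
        rw [hmin] at hv
        set c'' : ℝ := min b (c + τ) with hc''
        have hcc'' : c ≤ c'' := le_min hbk.le (by linarith)
        have hc''b : c'' ≤ b := min_le_left _ _
        have h2 : min b ((k + 1 : ℕ) * τ) = c'' := by
          rw [hc'']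
          congr 1
          push_cast
          ring
        rw [h2]
        -- Picard-Lindelöf on [c, c'']
        have hpl : IsPicardLindelof (fun t z => A t z) (tmin := c) (tmax := c'')
            ⟨c, le_rfl, hcc''⟩ (v c) ⟨‖v c‖ + 1, by positivity⟩ 0
            ⟨M * (2 * ‖v c‖ + 1), by positivity⟩ (M + 1).toNNReal := by
          constructor
          · intro t ht
            refine ((A t).lipschitz.weaken ?_).lipschitzOnWith
            rw [← NNReal.coe_le_coe]
            have : (0:ℝ) ≤ M + 1 := by linarith
            rw [Real.coe_toNNReal _ this]
            calc ((‖A t‖₊ : ℝ)) = ‖A t‖ := rfl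
              _ ≤ M := hbd t ⟨hc0.trans ht.1, ht.2.trans hc''b⟩
              _ ≤ M + 1 := by linarith
          · intro z _
            exact (hA.clm_apply continuous_const).continuousOn
          · intro t ht z hz
            have h1 : ‖A t z‖ ≤ ‖A t‖ * ‖z‖ := (A t).le_opNorm z
            have h2 : ‖A t‖ ≤ M := hbd t ⟨hc0.trans ht.1, ht.2.trans hc''b⟩
            have h3 : ‖z‖ ≤ 2 * ‖v c‖ + 1 := by
              have h5 := mem_closedBall_iff_norm.1 hz
              change ‖z - v c‖ ≤ ‖v c‖ + 1 at h5
              have h4 : ‖z‖ ≤ ‖z - v c‖ + ‖v c‖ := by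
                have := norm_add_le (z - v c) (v c)
                simpa using this
              linarith
            calc ‖A t z‖ ≤ ‖A t‖ * ‖z‖ := h1
              _ ≤ M * (2 * ‖v c‖ + 1) := by
                  apply mul_le_mul h2 h3 (norm_nonneg _) hM
          · show M * (2 * ‖v c‖ + 1) * max (c'' - c) (c - c) ≤ ‖v c‖ + 1 - 0
            rw [sub_zero]
            have hle : max (c'' - c) (c - c) ≤ τ := by
              apply max_le (by simp [hc'']; right; linarith) (by linarith)
            calc M * (2 * ‖v c‖ + 1) * max (c'' - c) (c - c)
                ≤ M * (2 * ‖v c‖ + 1) * τ := by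
                  apply mul_le_mul_of_nonneg_left hle (by positivity)
              _ ≤ (M + 1) * (2 * ‖v c‖ + 1) * (2 * (M + 1))⁻¹ := by
                  rw [hτdef]
                  apply mul_le_mul_of_nonneg_right _ (by positivity)
                  nlinarith [norm_nonneg (v c)]
              _ ≤ ‖v c‖ + 1 := by
                  rw [mul_inv_le_iff₀ (by positivity)]
                  nlinarith [norm_nonneg (v c)]
        obtain ⟨w, hw0, hw⟩ := hpl.exists_eq_forall_mem_Icc_hasDerivWithinAt₀
        obtain ⟨u, hueq, hu⟩ := ode_glue hc0 hcc'' hv hw hw0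
        refine ⟨u, ?_, hu⟩
        rw [hueq 0 ⟨le_rfl, hc0⟩, hv0]
  obtain ⟨k, hk⟩ := exists_nat_ge (b / τ)
  have hbk : b ≤ k * τ := by
    rw [div_le_iff₀ hτ] at hk
    linarith
  obtain ⟨v, hv0, hv⟩ := key k
  rw [min_eq_left hbk] at hv
  exact ⟨v, hv0, hv⟩
lemma aux_forward {n : ℕ} {Ω : Set (Fin n → ℝ)} (hΩ : IsOpen Ω)
    (X Y : (Fin n → ℝ) → (Fin n → ℝ))
    (hX : ContDiffOn ℝ 1 X Ω) (hY : ContDiffOn ℝ 1 Y Ω)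
    (μ : (Fin n → ℝ) → ℝ) (hμ : ContinuousOn μ Ω)
    (hbr : ∀ z ∈ Ω, fderiv ℝ Y z (X z) = μ z • X z + fderiv ℝ X z (Y z))
    (φ : ℝ → (Fin n → ℝ) → (Fin n → ℝ))
    (hφΩ : ∀ ε : ℝ, Set.MapsTo (φ ε) Ω Ω)
    (hφ0 : ∀ x ∈ Ω, φ 0 x = x)
    (hflow : ∀ (ε : ℝ), ∀ x ∈ Ω, HasDerivAt (fun e => φ e x) (Y (φ ε x)) ε)
    {b : ℝ} (hb : 0 ≤ b) {x₀ : Fin n → ℝ} (hx₀ : x₀ ∈ Ω) :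
    fderiv ℝ (φ b) x₀ (X x₀)
      = Real.exp (∫ σ in (0:ℝ)..b, μ (φ σ x₀)) • X (φ b x₀) := by
  classical
  -- the trajectory of x₀
  set γ : ℝ → (Fin n → ℝ) := fun σ => φ σ x₀ with hγdef
  have hγΩ : ∀ σ, γ σ ∈ Ω := fun σ => hφΩ σ hx₀
  have hγder : ∀ σ, HasDerivAt γ (Y (γ σ)) σ := fun σ => hflow σ x₀ hx₀
  have hγcont : Continuous γ := continuous_iff_continuousAt.2 fun σ => (hγder σ).continuousAt
  have hγ0 : γ 0 = x₀ := hφ0 x₀ hx₀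
  have htraj : ∀ x ∈ Ω, Continuous (fun σ => φ σ x) := fun x hx =>
    continuous_iff_continuousAt.2 fun σ => (hflow σ x hx).continuousAt
  -- compact tube around the trajectory
  set K : Set (Fin n → ℝ) := γ '' Icc 0 b with hKdef
  have hKcomp : IsCompact K := isCompact_Icc.image hγcont
  have hKΩ : K ⊆ Ω := by rintro _ ⟨σ, _, rfl⟩; exact hγΩ σ
  obtain ⟨δ, hδ0, hδ⟩ := hKcomp.exists_cthickening_subset_open hΩ hKΩ
  set T : Set (Fin n → ℝ) := Metric.cthickening δ K with hTdef
  have hTcomp : IsCompact T := hKcomp.cthickening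
  have hTΩ : T ⊆ Ω := hδ
  have hballT : ∀ σ ∈ Icc 0 b, closedBall (γ σ) δ ⊆ T := by
    intro σ hσ z hz
    exact Metric.mem_cthickening_of_dist_le z (γ σ) δ K ⟨σ, hσ, rfl⟩ (mem_closedBall.1 hz)
  -- bound on the derivative of Y on the tube
  have hderYcont : ContinuousOn (fderiv ℝ Y) Ω := hY.continuousOn_fderiv_of_isOpen hΩ (by norm_num)
  obtain ⟨M₀, hM₀⟩ := hTcomp.exists_bound_of_continuousOn (hderYcont.mono hTΩ)
  set M : ℝ := max M₀ 0 with hMdef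
  have hM : 0 ≤ M := le_max_right _ _
  have hMb : ∀ z ∈ T, ‖fderiv ℝ Y z‖ ≤ M := fun z hz => (hM₀ z hz).trans (le_max_left _ _)
  set M' : ℝ := M + 1 with hM'def
  have hM'1 : 1 ≤ M' := by linarith
  have hM'0 : 0 < M' := by linarith
  have hdiffY : ∀ z ∈ Ω, DifferentiableAt ℝ Y z := fun z hz =>
    (hY.differentiableOn one_ne_zero).differentiableAt (hΩ.mem_nhds hz)
  have hdiffX : ∀ z ∈ Ω, DifferentiableAt ℝ X z := fun z hz =>
    (hX.differentiableOn one_ne_zero).differentiableAt (hΩ.mem_nhds hz)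
  -- Lipschitz bound for Y on balls around the trajectory
  have hlip : ∀ σ ∈ Icc 0 b, LipschitzOnWith M'.toNNReal Y (closedBall (γ σ) δ) := by
    intro σ hσ
    apply (convex_closedBall (γ σ) δ).lipschitzOnWith_of_nnnorm_fderiv_le
      (fun z hz => hdiffY z (hTΩ (hballT σ hσ hz)))
      (fun z hz => ?_)
    rw [← NNReal.coe_le_coe, coe_nnnorm, Real.coe_toNNReal _ hM'0.le]
    exact (hMb z (hballT σ hσ hz)).trans (by linarith)
  -- clamping
  set cl : ℝ → ℝ := fun t => max 0 (min t b) with hcldef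
  have hclmem : ∀ t, cl t ∈ Icc 0 b := fun t =>
    ⟨le_max_left _ _, max_le hb (min_le_right _ _)⟩
  have hcleq : ∀ t ∈ Icc 0 b, cl t = t := fun t ht => by
    simp only [cl]
    rw [min_eq_left ht.2, max_eq_right ht.1]
  have hclcont : Continuous cl := continuous_const.max (continuous_id.min continuous_const)
  -- the tube invariance estimate
  set ρ : ℝ := (δ / 2) * Real.exp (-(M' * b)) with hρdef
  have hρ0 : 0 < ρ := by positivity
  have tube : ∀ x₁ ∈ closedBall x₀ ρ, ∀ σ ∈ Icc 0 b,
      dist (φ σ x₁) (γ σ) ≤ dist x₁ x₀ * Real.exp (M' * σ) := by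
    intro x₁ hx₁
    set D : ℝ := dist x₁ x₀ with hDdef
    have hDρ : D ≤ ρ := mem_closedBall.1 hx₁
    have hDhalf : ∀ σ ∈ Icc 0 b, D * Real.exp (M' * σ) ≤ δ / 2 := by
      intro σ hσ
      have h1 : D * Real.exp (M' * σ) ≤ (δ/2) * Real.exp (-(M' * b)) * Real.exp (M' * σ) := by
        apply mul_le_mul_of_nonneg_right (hDρ.trans_eq hρdef) (Real.exp_pos _).le
      have h2 : (δ/2) * Real.exp (-(M' * b)) * Real.exp (M' * σ)
          = (δ/2) * Real.exp (M' * σ - M' * b) := by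
        rw [mul_assoc, ← Real.exp_add]; ring_nf
      have h3 : Real.exp (M' * σ - M' * b) ≤ 1 := by
        apply Real.exp_le_one_iff.2
        have : M' * σ ≤ M' * b := by
          apply mul_le_mul_of_nonneg_left hσ.2 hM'0.le
        linarith
      calc D * Real.exp (M' * σ) ≤ (δ/2) * Real.exp (M' * σ - M' * b) := h1.trans_eq h2
        _ ≤ (δ/2) * 1 := by apply mul_le_mul_of_nonneg_left h3 (by positivity)
        _ = δ / 2 := mul_one _
    have hx₁T : x₁ ∈ closedBall (γ 0) δ := by
      rw [hγ0]
      apply closedBall_subset_closedBall _ hx₁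
      calc ρ ≤ (δ/2) * 1 := by
            apply mul_le_mul_of_nonneg_left
              (Real.exp_le_one_iff.2 (neg_nonpos.2 (by positivity))) (by positivity)
        _ ≤ δ := by linarith
    have hx₁Ω : x₁ ∈ Ω := hTΩ (hballT 0 ⟨le_rfl, hb⟩ hx₁T)
    have hφcont₁ : Continuous (fun σ => φ σ x₁) := htraj x₁ hx₁Ω
    have hgcont : Continuous (fun σ => dist (φ σ x₁) (γ σ)) := hφcont₁.dist hγcont
    -- the set of good times
    set P : ℝ → Prop := fun σ => dist (φ σ x₁) (γ σ) ≤ D * Real.exp (M' * σ) with hPdef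
    set s : Set ℝ := {t | ∀ σ ∈ Icc 0 t, P σ} with hsdef
    have hPclosed : IsClosed {t | P t} := by
      apply isClosed_le hgcont
      exact (continuous_const.mul (Real.continuous_exp.comp (continuous_const.mul continuous_id)))
    have hP0 : P 0 := by
      simp only [P, hγ0, mul_zero, Real.exp_zero, mul_one]
      rw [hφ0 x₁ hx₁Ω]
    have h0s : (0:ℝ) ∈ s := by
      intro σ hσ
      have : σ = 0 := le_antisymm hσ.2 hσ.1
      rw [this]; exact hP0
    have hcl1 : IsClosed {t : ℝ | ∀ σ ∈ Ico 0 t, P σ} := by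
      rw [← isOpen_compl_iff]
      have : {t : ℝ | ∀ σ ∈ Ico 0 t, P σ}ᶜ = ⋃ (σ : ℝ) (_ : 0 ≤ σ ∧ ¬ P σ), Ioi σ := by
        ext t
        simp only [mem_compl_iff, mem_setOf_eq, not_forall, mem_iUnion, mem_Ioi, mem_Ico,
          exists_prop]
        constructor
        · rintro ⟨σ, ⟨h1, h2⟩, h3⟩; exact ⟨σ, ⟨h1, h3⟩, h2⟩
        · rintro ⟨σ, ⟨h1, h3⟩, h2⟩; exact ⟨σ, ⟨h1, h2⟩, h3⟩
      rw [this]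
      exact isOpen_iUnion fun σ => isOpen_iUnion fun _ => isOpen_Ioi
    have hscl : IsClosed (s ∩ Icc 0 b) := by
      have hseq : s ∩ Icc 0 b = ({t : ℝ | ∀ σ ∈ Ico 0 t, P σ} ∩ {t | P t}) ∩ Icc 0 b := by
        ext t
        simp only [mem_inter_iff, mem_setOf_eq, hsdef]
        constructor
        · rintro ⟨h1, h2⟩
          exact ⟨⟨fun σ hσ => h1 σ ⟨hσ.1, hσ.2.le⟩, h1 t ⟨h2.1, le_rfl⟩⟩, h2⟩
        · rintro ⟨⟨h1, h2⟩, h3⟩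
          refine ⟨fun σ hσ => ?_, h3⟩
          rcases lt_or_eq_of_le hσ.2 with h | h
          · exact h1 σ ⟨hσ.1, h⟩
          · rw [h]; exact h2
      rw [hseq]
      exact (hcl1.inter hPclosed).inter isClosed_Icc
    have hstep : ∀ t ∈ s ∩ Ico 0 b, ∀ y ∈ Ioi t, (s ∩ Ioc t y).Nonempty := by
      rintro t ⟨hts, ht0, htb⟩ y hy
      -- up to time t we are well inside the tube
      have hhalf : ∀ σ ∈ Icc 0 t, dist (φ σ x₁) (γ σ) ≤ δ / 2 := fun σ hσ =>
        (hts σ hσ).trans (hDhalf σ ⟨hσ.1, hσ.2.trans htb.le⟩)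
      -- find a slightly later time up to which we stay in the tube
      have hopen : IsOpen {σ : ℝ | dist (φ σ x₁) (γ σ) < δ} :=
        isOpen_lt hgcont continuous_const
      have htmem : t ∈ {σ : ℝ | dist (φ σ x₁) (γ σ) < δ} := by
        have := hhalf t ⟨ht0, le_rfl⟩
        simp only [mem_setOf_eq]; linarith
      obtain ⟨η, hη0, hη⟩ := Metric.isOpen_iff.1 hopen t htmem
      set t' : ℝ := min (t + η/2) (min y b) with ht'def
      have htt' : t < t' := by
        apply lt_min (by linarith) (lt_min hy htb)
      have ht'b : t' ≤ b := le_trans (min_le_right _ _) (min_le_right _ _)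
      have ht'y : t' ≤ y := le_trans (min_le_right _ _) (min_le_left _ _)
      have ht'0 : 0 ≤ t' := ht0.trans htt'.le
      -- tube membership on [0, t']
      have hmemtube : ∀ σ ∈ Ico 0 t', φ σ x₁ ∈ closedBall (γ (cl σ)) δ := by
        intro σ hσ
        have hσb : σ ∈ Icc 0 b := ⟨hσ.1, hσ.2.le.trans ht'b⟩
        rw [hcleq σ hσb, mem_closedBall]
        by_cases h : σ ≤ t
        · have := hhalf σ ⟨hσ.1, h⟩; linarith
        · push_neg at h
          have hσball : σ ∈ ball t η := by
            rw [mem_ball, Real.dist_eq, abs_of_pos (by linarith)]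
            have : σ < t + η/2 := lt_of_lt_of_le hσ.2 (min_le_left _ _)
            linarith
          exact (hη hσball).le
      have hγtube : ∀ σ ∈ Ico 0 t', γ σ ∈ closedBall (γ (cl σ)) δ := by
        intro σ hσ
        rw [hcleq σ ⟨hσ.1, hσ.2.le.trans ht'b⟩]
        exact mem_closedBall_self hδ0.le
      -- Grönwall
      have hgron := dist_le_of_trajectories_ODE_of_mem
        (v := fun _ z => Y z) (s := fun σ => closedBall (γ (cl σ)) δ)
        (K := M'.toNNReal) (f := fun σ => φ σ x₁) (g := γ) (a := 0) (b := t')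
        (fun σ _ => hlip (cl σ) (hclmem σ))
        (hφcont₁.continuousOn)
        (fun σ hσ => (hflow σ x₁ hx₁Ω).hasDerivWithinAt)
        hmemtube
        (hγcont.continuousOn)
        (fun σ hσ => (hγder σ).hasDerivWithinAt)
        hγtube
        (le_of_eq (by show dist (φ 0 x₁) (γ 0) = D; rw [hφ0 x₁ hx₁Ω, hγ0]))
      have ht's : t' ∈ s := by
        intro σ hσ
        have h := hgron σ ⟨hσ.1, hσ.2⟩
        rw [sub_zero] at h
        rw [Real.coe_toNNReal _ hM'0.le] at h
        exact h
      exact ⟨t', ht's, ⟨htt', ht'y⟩⟩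
    have := hscl.Icc_subset_of_forall_exists_gt h0s hstep
    intro σ hσ
    exact this hσ σ ⟨hσ.1, le_rfl⟩
  -- ρ-ball facts (needed again below)
  have hρδ : ρ ≤ δ := by
    calc ρ ≤ (δ/2) * 1 := by
          apply mul_le_mul_of_nonneg_left
            (Real.exp_le_one_iff.2 (neg_nonpos.2 (by positivity))) (by positivity)
      _ ≤ δ := by linarith
  have hballΩ : closedBall x₀ ρ ⊆ Ω := fun z hz => hTΩ (hballT 0 ⟨le_rfl, hb⟩
    (by rw [hγ0]; exact closedBall_subset_closedBall hρδ hz))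
  -- the variational (linear) ODE
  set A : ℝ → ((Fin n → ℝ) →L[ℝ] (Fin n → ℝ)) := fun σ => fderiv ℝ Y (γ (cl σ)) with hAdef
  have hAcont : Continuous A :=
    hderYcont.comp_continuous (hγcont.comp hclcont) (fun t => hγΩ _)
  have hAeq : ∀ σ ∈ Icc 0 b, A σ = fderiv ℝ Y (γ σ) := by
    intro σ hσ
    simp only [A]
    rw [hcleq σ hσ]
  have hAbd : ∀ t, ‖A t‖ ≤ M := fun t =>
    hMb _ (hballT (cl t) (hclmem t) (mem_closedBall_self hδ0.le))
  choose vv hvv0 hvvd using fun i : Fin n =>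
    linear_ode_exists A hAcont hb hM (fun t _ => hAbd t) (Pi.single i 1)
  set V : ℝ → (Fin n → ℝ) → (Fin n → ℝ) := fun σ h => ∑ i, h i • vv i σ with hVdef
  have hV0 : ∀ h : Fin n → ℝ, V 0 h = h := by
    intro h
    have hs : ∀ i : Fin n, h i • (Pi.single i 1 : Fin n → ℝ) = Pi.single i (h i) := by
      intro i
      rw [← Pi.single_smul]
      norm_num
    simp only [V, hvv0, hs, Finset.univ_sum_single]
  have hVd : ∀ (h : Fin n → ℝ), ∀ σ ∈ Icc 0 b,
      HasDerivWithinAt (fun σ' => V σ' h) (A σ (V σ h)) (Icc 0 b) σ := by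
    intro h σ hσ
    have hsum : HasDerivWithinAt (fun σ' => ∑ i, h i • vv i σ')
        (∑ i, h i • A σ (vv i σ)) (Icc 0 b) σ :=
      HasDerivWithinAt.fun_sum (fun i _ => (hvvd i σ hσ).const_smul (h i))
    convert hsum using 1
    simp only [V, map_sum, map_smul]
  have hVcont : ∀ h : Fin n → ℝ, ContinuousOn (fun σ => V σ h) (Icc 0 b) :=
    fun h σ hσ => (hVd h σ hσ).continuousWithinAt
  -- the candidate derivative, as a continuous linear map
  set L : (Fin n → ℝ) →ₗ[ℝ] (Fin n → ℝ) :=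
    { toFun := fun h => V b h
      map_add' := by
        intro h h'
        simp only [V, Pi.add_apply, add_smul, Finset.sum_add_distrib]
      map_smul' := by
        intro c h
        simp only [V, Pi.smul_apply, smul_eq_mul, RingHom.id_apply, Finset.smul_sum, smul_smul] } with hLdef
  set LC : (Fin n → ℝ) →L[ℝ] (Fin n → ℝ) := LinearMap.toContinuousLinearMap L with hLCdef
  have hLC : ∀ h, LC h = V b h := by
    intro h
    rw [hLCdef]
    rw [show ⇑(LinearMap.toContinuousLinearMap L) = ⇑L from
      LinearMap.coe_toContinuousLinearMap' L]
    rfl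
  -- φ b is differentiable at x₀ with derivative LC
  have hfd : HasFDerivAt (φ b) LC x₀ := by
    rw [hasFDerivAt_iff_isLittleO_nhds_zero, Asymptotics.isLittleO_iff]
    intro c hc
    have hunif := hTcomp.uniformContinuousOn_of_continuous (hderYcont.mono hTΩ)
    rw [Metric.uniformContinuousOn_iff_le] at hunif
    set η : ℝ := c / (Real.exp (M' * b) * Real.exp (M' * b) + 1) with hηdef
    have hη0 : 0 < η := by positivity
    obtain ⟨δ₁, hδ₁0, hδ₁⟩ := hunif η hη0
    set Hb : ℝ := min ρ ((min δ₁ δ) * Real.exp (-(M' * b))) with hHbdef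
    have hHb0 : 0 < Hb := lt_min hρ0 (by positivity)
    filter_upwards [Metric.closedBall_mem_nhds (0 : Fin n → ℝ) hHb0] with h hh
    rw [mem_closedBall_zero_iff] at hh
    set x₁ : Fin n → ℝ := x₀ + h with hx₁def
    have hdist : dist x₁ x₀ = ‖h‖ := by simp [x₁, dist_eq_norm]
    have hx₁ball : x₁ ∈ closedBall x₀ ρ := by
      rw [mem_closedBall, hdist]; exact hh.trans (min_le_left _ _)
    have hx₁Ω : x₁ ∈ Ω := hballΩ hx₁ball
    have htube := tube x₁ hx₁ball
    have hhe : ‖h‖ * Real.exp (M' * b) ≤ min δ₁ δ := by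
      have h1 : ‖h‖ ≤ (min δ₁ δ) * Real.exp (-(M' * b)) := hh.trans (min_le_right _ _)
      calc ‖h‖ * Real.exp (M' * b) ≤ (min δ₁ δ) * Real.exp (-(M' * b)) * Real.exp (M' * b) :=
            mul_le_mul_of_nonneg_right h1 (Real.exp_pos _).le
        _ = min δ₁ δ := by rw [mul_assoc, ← Real.exp_add]; simp
    have hdb : ∀ σ ∈ Icc 0 b, dist (φ σ x₁) (γ σ) ≤ ‖h‖ * Real.exp (M' * b) := by
      intro σ hσ
      refine (htube σ hσ).trans ?_
      rw [hdist]
      apply mul_le_mul_of_nonneg_left _ (norm_nonneg _)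
      exact Real.exp_le_exp.2 (mul_le_mul_of_nonneg_left hσ.2 hM'0.le)
    -- the remainder function
    set r : ℝ → (Fin n → ℝ) := fun σ => φ σ x₁ - γ σ - V σ h with hrdef
    have hr0 : r 0 = 0 := by
      simp only [r, hφ0 x₁ hx₁Ω, hγ0, hV0 h, x₁]
      abel
    have hrcont : ContinuousOn r (Icc 0 b) :=
      (((htraj x₁ hx₁Ω).continuousOn).sub hγcont.continuousOn).sub (hVcont h)
    set εG : ℝ := η * (‖h‖ * Real.exp (M' * b)) with hεGdef
    have hrd : ∀ σ ∈ Ico 0 b,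
        HasDerivWithinAt r (Y (φ σ x₁) - Y (γ σ) - A σ (V σ h)) (Ici σ) σ := by
      intro σ hσ
      have h1 : HasDerivWithinAt (fun σ' => φ σ' x₁) (Y (φ σ x₁)) (Ici σ) σ :=
        (hflow σ x₁ hx₁Ω).hasDerivWithinAt
      have h2 : HasDerivWithinAt γ (Y (γ σ)) (Ici σ) σ := (hγder σ).hasDerivWithinAt
      have h3 : HasDerivWithinAt (fun σ' => V σ' h) (A σ (V σ h)) (Ici σ) σ := by
        refine (hVd h σ ⟨hσ.1, hσ.2.le⟩).mono_of_mem_nhdsWithin ?_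
        rw [mem_nhdsWithin]
        exact ⟨Iio b, isOpen_Iio, hσ.2, fun y hy => ⟨hσ.1.trans hy.2, hy.1.le⟩⟩
      exact (h1.sub h2).sub h3
    have hrbd : ∀ σ ∈ Ico 0 b,
        ‖Y (φ σ x₁) - Y (γ σ) - A σ (V σ h)‖ ≤ M' * ‖r σ‖ + εG := by
      intro σ hσ
      have hσ' : σ ∈ Icc 0 b := ⟨hσ.1, hσ.2.le⟩
      have hsplit : Y (φ σ x₁) - Y (γ σ) - A σ (V σ h)
          = (Y (φ σ x₁) - Y (γ σ) - A σ (φ σ x₁ - γ σ)) + A σ (r σ) := by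
        simp only [r, map_sub]
        abel
      have hsub : closedBall (γ σ) (min δ₁ δ) ⊆ T :=
        (closedBall_subset_closedBall (min_le_right _ _)).trans (hballT σ hσ')
      have hball' : φ σ x₁ ∈ closedBall (γ σ) (min δ₁ δ) := by
        rw [mem_closedBall]
        exact (hdb σ hσ').trans hhe
      have hbr1 : ‖Y (φ σ x₁) - Y (γ σ) - A σ (φ σ x₁ - γ σ)‖ ≤ η * ‖φ σ x₁ - γ σ‖ := by
        refine (convex_closedBall (γ σ) (min δ₁ δ)).norm_image_sub_le_of_norm_fderiv_le'
          (fun z hz => hdiffY z (hTΩ (hsub hz))) (fun z hz => ?_)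
          (mem_closedBall_self (le_min hδ₁0.le hδ0.le)) hball'
        have hγT : γ σ ∈ T := hballT σ hσ' (mem_closedBall_self hδ0.le)
        have hdz : dist z (γ σ) ≤ δ₁ := le_trans (mem_closedBall.1 hz) (min_le_left _ _)
        have hcomp := hδ₁ z (hsub hz) (γ σ) hγT hdz
        rw [hAeq σ hσ', ← dist_eq_norm]
        exact hcomp
      have hAr : ‖A σ (r σ)‖ ≤ M' * ‖r σ‖ := by
        refine ((A σ).le_opNorm _).trans ?_
        exact mul_le_mul_of_nonneg_right ((hAbd σ).trans (by linarith)) (norm_nonneg _)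
      have hbd2 : η * ‖φ σ x₁ - γ σ‖ ≤ εG := by
        rw [hεGdef]
        apply mul_le_mul_of_nonneg_left _ hη0.le
        rw [← dist_eq_norm]
        exact hdb σ hσ'
      calc ‖Y (φ σ x₁) - Y (γ σ) - A σ (V σ h)‖
          ≤ ‖Y (φ σ x₁) - Y (γ σ) - A σ (φ σ x₁ - γ σ)‖ + ‖A σ (r σ)‖ := by
            rw [hsplit]; exact norm_add_le _ _
        _ ≤ η * ‖φ σ x₁ - γ σ‖ + M' * ‖r σ‖ := add_le_add hbr1 hAr
        _ ≤ M' * ‖r σ‖ + εG := by linarith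
    -- Grönwall for the remainder
    have hgron := norm_le_gronwallBound_of_norm_deriv_right_le (δ := 0) (K := M') (ε := εG)
      hrcont hrd (by rw [hr0]; simp) hrbd b ⟨hb, le_rfl⟩
    have hexp1 : (1:ℝ) ≤ Real.exp (M' * b) := Real.one_le_exp (by positivity)
    have hεG0 : 0 ≤ εG := by positivity
    have hgb : gronwallBound 0 M' εG (b - 0) ≤ εG * Real.exp (M' * b) := by
      rw [sub_zero, gronwallBound_of_K_ne_0 (ne_of_gt hM'0)]
      have h2 : εG / M' ≤ εG := div_le_self hεG0 hM'1
      calc (0:ℝ) * Real.exp (M' * b) + εG / M' * (Real.exp (M' * b) - 1)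
          = εG / M' * (Real.exp (M' * b) - 1) := by ring
        _ ≤ εG * Real.exp (M' * b) := by
            apply mul_le_mul h2 (by linarith) (by linarith) hεG0
    -- conclusion
    have hkey : η * (Real.exp (M' * b) * Real.exp (M' * b)) ≤ c := by
      rw [hηdef, div_mul_eq_mul_div, div_le_iff₀ (by positivity)]
      nlinarith [Real.exp_pos (M' * b)]
    have hrb : ‖r b‖ ≤ c * ‖h‖ := by
      refine (hgron.trans hgb).trans ?_
      have hn : (0:ℝ) ≤ ‖h‖ := norm_nonneg h
      calc εG * Real.exp (M' * b)
          = ‖h‖ * (η * (Real.exp (M' * b) * Real.exp (M' * b))) := by rw [hεGdef]; ring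
        _ ≤ ‖h‖ * c := mul_le_mul_of_nonneg_left hkey hn
        _ = c * ‖h‖ := mul_comm _ _
    have hid : φ b (x₀ + h) - φ b x₀ - LC h = r b := by
      rw [hLC h, hrdef]
    rw [hid]
    exact hrb
  -- the candidate solution `u`
  have hμγ : Continuous fun t => μ (γ t) := hμ.comp_continuous hγcont hγΩ
  set g : ℝ → ℝ := fun σ => ∫ t in (0:ℝ)..σ, μ (γ t) with hgdef
  have hgder : ∀ σ, HasDerivAt g (μ (γ σ)) σ := by
    intro σ
    exact intervalIntegral.integral_hasDerivAt_right (hμγ.intervalIntegrable _ _)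
      (hμγ.stronglyMeasurableAtFilter _ _) hμγ.continuousAt
  have hgcont2 : Continuous g := continuous_iff_continuousAt.2 fun σ => (hgder σ).continuousAt
  set u : ℝ → (Fin n → ℝ) := fun σ => Real.exp (g σ) • X (γ σ) with hudef
  have hXγcont : Continuous fun σ => X (γ σ) := hX.continuousOn.comp_continuous hγcont hγΩ
  have hucont : Continuous u := (Real.continuous_exp.comp hgcont2).smul hXγcont
  have huder : ∀ σ ∈ Ico 0 b, HasDerivWithinAt u (A σ (u σ)) (Ici σ) σ := by
    intro σ hσ
    have hσ' : σ ∈ Icc 0 b := ⟨hσ.1, hσ.2.le⟩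
    have h1 : HasDerivAt (fun σ' => Real.exp (g σ')) (Real.exp (g σ) * μ (γ σ)) σ :=
      (hgder σ).exp
    have h2 : HasDerivAt (fun σ' => X (γ σ')) (fderiv ℝ X (γ σ) (Y (γ σ))) σ :=
      (hdiffX (γ σ) (hγΩ σ)).hasFDerivAt.comp_hasDerivAt σ (hγder σ)
    have h3 := h1.smul h2
    have heq : Real.exp (g σ) • fderiv ℝ X (γ σ) (Y (γ σ))
        + (Real.exp (g σ) * μ (γ σ)) • X (γ σ) = A σ (u σ) := by
      rw [hAeq σ hσ']
      show _ = fderiv ℝ Y (γ σ) (Real.exp (g σ) • X (γ σ))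
      rw [map_smul, hbr (γ σ) (hγΩ σ), smul_add, smul_smul, mul_comm]
      abel
    exact (heq ▸ h3).hasDerivWithinAt
  have hu0 : u 0 = X x₀ := by
    simp [u, g, hγ0]
  -- w := directional variational solution
  set w : ℝ → (Fin n → ℝ) := fun σ => V σ (X x₀) with hwdef
  have hwder : ∀ σ ∈ Ico 0 b, HasDerivWithinAt w (A σ (w σ)) (Ici σ) σ := by
    intro σ hσ
    refine (hVd (X x₀) σ ⟨hσ.1, hσ.2.le⟩).mono_of_mem_nhdsWithin ?_
    rw [mem_nhdsWithin]
    exact ⟨Iio b, isOpen_Iio, hσ.2, fun y hy => ⟨hσ.1.trans hy.2, hy.1.le⟩⟩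
  have hlipA : ∀ t : ℝ, LipschitzOnWith M'.toNNReal (fun z => A t z)
      (univ : Set (Fin n → ℝ)) := by
    intro t
    apply LipschitzWith.lipschitzOnWith
    refine (A t).lipschitz.weaken ?_
    rw [← NNReal.coe_le_coe, coe_nnnorm, Real.coe_toNNReal _ hM'0.le]
    exact (hAbd t).trans (by linarith)
  have huniq := ODE_solution_unique_of_mem_Icc_right (fun t _ => hlipA t)
    (hVcont (X x₀)) hwder (fun t _ => mem_univ _)
    hucont.continuousOn huder (fun t _ => mem_univ _)
    (by rw [hu0]; exact hV0 (X x₀))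
  have hwb : V b (X x₀) = u b := huniq ⟨hb, le_rfl⟩
  rw [hfd.fderiv, hLC, hwb]



theorem stmt_13 (n : ℕ) (Ω : Set (Fin n → ℝ)) (hΩ : IsOpen Ω)
    (X Y : (Fin n → ℝ) → (Fin n → ℝ))
    (hX : ContDiffOn ℝ 1 X Ω) (hY : ContDiffOn ℝ 1 Y Ω)
    (μ : (Fin n → ℝ) → ℝ) (hμ : ContinuousOn μ Ω)
    -- `[X, Y] = μ · X` on `Ω`
    (hbr : ∀ x ∈ Ω, lieBracket n X Y x = μ x • X x)
    -- `Y` is complete with flow `φ : ℝ × Ω → Ω`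
    (φ : ℝ → (Fin n → ℝ) → (Fin n → ℝ))
    (hφΩ : ∀ ε : ℝ, Set.MapsTo (φ ε) Ω Ω)
    (hφ0 : ∀ x ∈ Ω, φ 0 x = x)
    (hflow : ∀ (ε : ℝ), ∀ x ∈ Ω, HasDerivAt (fun e => φ e x) (Y (φ ε x)) ε) :
    -- then `Dφ_ε(x)·X(x) = exp(∫₀^ε μ(φ_σ(x)) dσ) · X(φ_ε(x))`
    ∀ (ε : ℝ), ∀ x ∈ Ω,
      fderiv ℝ (φ ε) x (X x)
        = Real.exp (∫ σ in (0 : ℝ)..ε, μ (φ σ x)) • X (φ ε x) := by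
  have hbr' : ∀ z ∈ Ω, fderiv ℝ Y z (X z) = μ z • X z + fderiv ℝ X z (Y z) := by
    intro z hz
    have h := hbr z hz
    unfold lieBracket at h
    rw [sub_eq_iff_eq_add] at h
    exact h
  intro ε x hx
  rcases le_or_gt 0 ε with hε | hε
  · exact aux_forward hΩ X Y hX hY μ hμ hbr' φ hφΩ hφ0 hflow hε hx
  · -- time reversal
    set Y' : (Fin n → ℝ) → (Fin n → ℝ) := fun z => -(Y z) with hY'def
    set μ' : (Fin n → ℝ) → ℝ := fun z => -(μ z) with hμ'def
    set ψ : ℝ → (Fin n → ℝ) → (Fin n → ℝ) := fun σ => φ (-σ) with hψdef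
    have hY' : ContDiffOn ℝ 1 Y' Ω := hY.neg
    have hμc' : ContinuousOn μ' Ω := hμ.neg
    have hbr'' : ∀ z ∈ Ω, fderiv ℝ Y' z (X z) = μ' z • X z + fderiv ℝ X z (Y' z) := by
      intro z hz
      have hneg : fderiv ℝ Y' z = -(fderiv ℝ Y z) := fderiv_neg
      rw [hneg]
      have h0 := hbr' z hz
      simp only [ContinuousLinearMap.neg_apply, μ', Y', map_neg]
      rw [h0]
      simp only [neg_add, neg_smul]
    have hψΩ : ∀ σ : ℝ, Set.MapsTo (ψ σ) Ω Ω := fun σ => hφΩ (-σ)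
    have hψ0 : ∀ y ∈ Ω, ψ 0 y = y := by
      intro y hy
      show φ (-0) y = y
      rw [neg_zero]
      exact hφ0 y hy
    have hψflow : ∀ (σ : ℝ), ∀ y ∈ Ω, HasDerivAt (fun e => ψ e y) (Y' (ψ σ y)) σ := by
      intro σ y hy
      have h1 := hflow (-σ) y hy
      have h2 : HasDerivAt (fun e : ℝ => -e) (-1 : ℝ) σ := (hasDerivAt_id σ).neg
      have h3 := h1.scomp σ h2
      convert h3 using 1
      all_goals first | rfl | (show -Y (φ (-σ) y) = _; rw [neg_one_smul])
    have hεpos : (0:ℝ) ≤ -ε := by linarith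
    have main := aux_forward hΩ X Y' hX hY' μ' hμc' hbr'' ψ hψΩ hψ0 hψflow hεpos hx
    have hψε : ψ (-ε) = φ ε := by
      show φ (-(-ε)) = φ ε
      rw [neg_neg]
    have hint : (∫ σ in (0:ℝ)..(-ε), μ' (ψ σ x)) = ∫ σ in (0:ℝ)..ε, μ (φ σ x) := by
      have h1 : (∫ σ in (0:ℝ)..(-ε), μ' (ψ σ x))
          = -∫ σ in (0:ℝ)..(-ε), μ (φ (-σ) x) := by
        rw [← intervalIntegral.integral_neg]
      rw [h1]
      have h2 : (∫ σ in (0:ℝ)..(-ε), μ (φ (-σ) x)) = ∫ σ in ε..(0:ℝ), μ (φ σ x) := by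
        have h3 := intervalIntegral.integral_comp_neg (a := (0:ℝ)) (b := -ε)
          (f := fun s => μ (φ s x))
        simpa using h3
      rw [h2, intervalIntegral.integral_symm, neg_neg]
    rw [hψε, hint] at main
    exact main
end

section
/- Let Ω ⊆ ℝⁿ be open, let X, Y : Ω → ℝⁿ be C¹ vector fields, and suppose Y is complete with flow φ : ℝ × Ω → Ω. Suppose there exists a function λ : ℝ × Ω → ℝ, differentiable in the first variable, with λ(0,x) = 1 for all x, such that Dφ_ε(x)·X(x) = λ(ε,x)·X(φ_ε(x)) for all ε ∈ ℝ and x ∈ Ω. Then Y is a Lie symmetry of X: [X, Y] = μ·X on Ω, where μ(x) = ∂λ/∂ε(0,x). -/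
open Set Metric Real MeasureTheory Filter Topology

/-- A solution of `ψ' = Z(ψ)` starting in `closedBall x (r/2)` stays in
`closedBall x (3/4 * r)` for times `s ∈ [0, s₀]` provided `s₀ * M ≤ r/4`. -/
lemma stays_in_ball {E : Type*} [NormedAddCommGroup E] [NormedSpace ℝ E]
    {Z : E → E} {ψ : ℝ → E} {x y : E} {r M s₀ : ℝ}
    (hr : 0 < r)
    (hbound : ∀ z ∈ closedBall x r, ‖Z z‖ ≤ M)
    (hψ : ∀ s : ℝ, HasDerivAt ψ (Z (ψ s)) s)
    (hψ0 : ψ 0 = y) (hy : y ∈ closedBall x (r / 2))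
    (hs₀ : 0 ≤ s₀) (hsM : s₀ * M ≤ r / 4) :
    ∀ s ∈ Icc (0:ℝ) s₀, ψ s ∈ closedBall x (3 / 4 * r) := by
  have hψc : Continuous ψ := by
    rw [continuous_iff_continuousAt]; exact fun s => (hψ s).continuousAt
  have hM0 : 0 ≤ M := le_trans (norm_nonneg _)
    (hbound y (closedBall_subset_closedBall (by linarith) hy))
  -- main estimate
  have A : ∀ t ∈ Icc (0:ℝ) s₀, (∀ u ∈ Icc (0:ℝ) t, ψ u ∈ closedBall x r) →
      ψ t ∈ closedBall x (3 / 4 * r) := by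
    intro t ht hstay
    have key := norm_le_gronwallBound_of_norm_deriv_right_le
      (f := fun u => ψ u - y) (f' := fun u => Z (ψ u)) (δ := 0) (K := 0) (ε := M)
      (a := 0) (b := t)
      ((hψc.sub continuous_const).continuousOn)
      (fun u _ => ((hψ u).sub_const y).hasDerivWithinAt)
      (by simp [hψ0])
      (fun u hu => by
        have := hbound (ψ u) (hstay u ⟨hu.1, hu.2.le⟩)
        simpa using this)
    have h1 : ‖ψ t - y‖ ≤ M * t := by
      simpa [gronwallBound_K0, sub_zero] using key t ⟨ht.1, le_rfl⟩
    have h2 : dist (ψ t) x ≤ dist (ψ t) y + dist y x := dist_triangle _ _ _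
    have h3 : dist (ψ t) y ≤ r / 4 := by
      rw [dist_eq_norm]
      calc ‖ψ t - y‖ ≤ M * t := h1
        _ ≤ M * s₀ := by nlinarith [ht.2, ht.1]
        _ ≤ r / 4 := by linarith [hsM]
    have h4 : dist y x ≤ r / 2 := hy
    exact mem_closedBall.2 (by linarith)
  -- continuous induction
  set S : Set ℝ := {t : ℝ | ∀ u ∈ Icc (0:ℝ) t, ψ u ∈ closedBall x (3 / 4 * r)} with hS
  have hsub : Icc (0:ℝ) s₀ ⊆ S := by
    apply IsClosed.Icc_subset_of_forall_exists_gt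
    · -- closedness
      refine IsSeqClosed.isClosed (fun f t hf hft => ?_)
      have htI : t ∈ Icc (0:ℝ) s₀ :=
        isClosed_Icc.mem_of_tendsto hft (Eventually.of_forall fun k => (hf k).2)
      refine ⟨fun u hu => ?_, htI⟩
      have hmin : Tendsto (fun k => ψ (min u (f k))) atTop (𝓝 (ψ u)) := by
        have h1 : Tendsto (fun k => min u (f k)) atTop (𝓝 (min u t)) :=
          tendsto_const_nhds.min hft
        rw [min_eq_left hu.2] at h1
        exact (hψc.tendsto u).comp h1
      exact (isClosed_closedBall (x := x) (ε := 3 / 4 * r)).mem_of_tendsto hmin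
        (Eventually.of_forall fun k => (hf k).1 _ ⟨le_min hu.1 (hf k).2.1, min_le_right _ _⟩)
    · -- 0 ∈ S
      intro u hu
      have : u = 0 := le_antisymm hu.2 hu.1
      subst this
      rw [hψ0]
      exact closedBall_subset_closedBall (by linarith) hy
    · -- extension
      rintro t ⟨htS, ht0, hts⟩ y' hy'
      have hψt : ψ t ∈ closedBall x (3 / 4 * r) := htS t ⟨ht0, le_rfl⟩
      obtain ⟨δ, hδ0, hδ⟩ := Metric.continuousAt_iff.1 (hψc.continuousAt (x := t)) (r / 4)
        (by linarith)
      set t₂ := min (t + δ / 2) (min y' s₀) with ht₂def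
      have ht₂ : t < t₂ := lt_min (by linarith) (lt_min hy' hts)
      have hstay : ∀ u ∈ Icc (0:ℝ) t₂, ψ u ∈ closedBall x r := by
        intro u hu
        rcases le_or_gt u t with h | h
        · exact closedBall_subset_closedBall (by linarith) (htS u ⟨hu.1, h⟩)
        · have hdist : dist u t < δ := by
            rw [Real.dist_eq, abs_of_nonneg (by linarith)]
            have : u ≤ t + δ / 2 := hu.2.trans (min_le_left _ _)
            linarith
          have h5 : dist (ψ u) (ψ t) < r / 4 := hδ hdist
          have h6 : dist (ψ u) x ≤ dist (ψ u) (ψ t) + dist (ψ t) x := dist_triangle _ _ _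
          have h7 : dist (ψ t) x ≤ 3 / 4 * r := hψt
          exact mem_closedBall.2 (by linarith)
      refine ⟨t₂, ⟨?_, ht₂, (min_le_right _ _).trans (min_le_left _ _)⟩⟩
      intro u hu
      exact A u ⟨hu.1, hu.2.trans ((min_le_right _ _).trans (min_le_right _ _))⟩
        (fun w hw => hstay w ⟨hw.1, hw.2.trans hu.2⟩)
  exact fun s hs => hsub hs s ⟨hs.1, le_rfl⟩

/-- Grönwall: two trajectories of the same Lipschitz field diverge at most exponentially. -/
lemma traj_dist {E : Type*} [NormedAddCommGroup E] [NormedSpace ℝ E]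
    {Z : E → E} {ψ₁ ψ₂ : ℝ → E} {x : E} {r : ℝ} {L : NNReal} {s₀ : ℝ}
    (hLip : LipschitzOnWith L Z (closedBall x r))
    (h₁ : ∀ s : ℝ, HasDerivAt ψ₁ (Z (ψ₁ s)) s) (h₂ : ∀ s : ℝ, HasDerivAt ψ₂ (Z (ψ₂ s)) s)
    (m₁ : ∀ s ∈ Icc (0:ℝ) s₀, ψ₁ s ∈ closedBall x r)
    (m₂ : ∀ s ∈ Icc (0:ℝ) s₀, ψ₂ s ∈ closedBall x r) :
    ∀ s ∈ Icc (0:ℝ) s₀, dist (ψ₁ s) (ψ₂ s) ≤ dist (ψ₁ 0) (ψ₂ 0) * Real.exp (L * s) := by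
  have hc₁ : Continuous ψ₁ := by
    rw [continuous_iff_continuousAt]; exact fun s => (h₁ s).continuousAt
  have hc₂ : Continuous ψ₂ := by
    rw [continuous_iff_continuousAt]; exact fun s => (h₂ s).continuousAt
  intro s hs
  have := dist_le_of_trajectories_ODE_of_mem (v := fun _ z => Z z)
    (s := fun _ => closedBall x r) (K := L) (a := 0) (b := s₀)
    (fun _ _ => hLip)
    hc₁.continuousOn (fun u _ => (h₁ u).hasDerivWithinAt)
    (fun u hu => m₁ u ⟨hu.1, hu.2.le⟩)
    hc₂.continuousOn (fun u _ => (h₂ u).hasDerivWithinAt)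
    (fun u hu => m₂ u ⟨hu.1, hu.2.le⟩)
    le_rfl s hs
  simpa using this

/-- Key one-sided identity: under the push-forward hypothesis, the function
`ε ↦ λ(ε,x) • X(φ_ε(x))` satisfies an integral (variational) equation for small `ε ≥ 0`. -/
lemma key_onesided (n : ℕ) (Ω : Set (Fin n → ℝ)) (hΩ : IsOpen Ω)
    (X Y : (Fin n → ℝ) → (Fin n → ℝ))
    (hX : ContinuousOn X Ω) (hY : ContDiffOn ℝ 1 Y Ω)
    (φ : ℝ → (Fin n → ℝ) → (Fin n → ℝ))
    (hφΩ : ∀ ε : ℝ, Set.MapsTo (φ ε) Ω Ω)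
    (hφ0 : ∀ x ∈ Ω, φ 0 x = x)
    (hflow : ∀ (ε : ℝ), ∀ x ∈ Ω, HasDerivAt (fun e => φ e x) (Y (φ ε x)) ε)
    (lam : ℝ → (Fin n → ℝ) → ℝ)
    (hpush : ∀ (ε : ℝ), ∀ x ∈ Ω,
      fderiv ℝ (φ ε) x (X x) = lam ε x • X (φ ε x))
    (x : Fin n → ℝ) (hx : x ∈ Ω)
    (hlamc : Continuous (fun e => lam e x))
    (s₁ : ℝ) (hs₁ : 0 < s₁)
    (hne : ∀ s ∈ Icc (0:ℝ) s₁, lam s x • X (φ s x) ≠ 0) :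
    ∃ s₀ > 0, ∀ ε ∈ Ioc (0:ℝ) s₀,
      lam ε x • X (φ ε x) =
        X x + ∫ s in (0:ℝ)..ε, lam s x • (fderiv ℝ Y (φ s x)) (X (φ s x)) := by
  classical
  -- local radius
  obtain ⟨R, hR0, hRΩ⟩ := Metric.isOpen_iff.1 hΩ x hx
  set r := R / 2 with hrdef
  have hr0 : 0 < r := by positivity
  have hrΩ : closedBall x r ⊆ Ω := (closedBall_subset_ball (by simp [hrdef]; linarith)).trans hRΩ
  have hball : closedBall x (r / 2) ⊆ Ω :=
    (closedBall_subset_closedBall (by linarith)).trans hrΩ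
  have hcompact : IsCompact (closedBall x r) := isCompact_closedBall x r
  have hYc : ContinuousOn Y Ω := hY.continuousOn
  have hY' : ContinuousOn (fderiv ℝ Y) Ω := hY.continuousOn_fderiv_of_isOpen hΩ le_rfl
  have hYdiff : ∀ z ∈ Ω, DifferentiableAt ℝ Y z := fun z hz =>
    (hY.differentiableOn one_ne_zero).differentiableAt (hΩ.mem_nhds hz)
  -- bound on Y
  obtain ⟨M, hM⟩ := hcompact.exists_bound_of_continuousOn (hYc.mono hrΩ)
  have hM0 : 0 ≤ M := le_trans (norm_nonneg _) (hM x (mem_closedBall_self hr0.le))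
  -- Lipschitz constant of Y on the ball
  obtain ⟨C, hC⟩ := hcompact.exists_bound_of_continuousOn (hY'.mono hrΩ)
  have hC0 : 0 ≤ C := le_trans (norm_nonneg _) (hC x (mem_closedBall_self hr0.le))
  set L : NNReal := C.toNNReal with hLdef
  have hLip : LipschitzOnWith L Y (closedBall x r) := by
    apply Convex.lipschitzOnWith_of_nnnorm_hasFDerivWithin_le
      (f' := fun z => fderiv ℝ Y z)
      (fun z hz => ((hYdiff z (hrΩ hz)).hasFDerivAt).hasFDerivWithinAt)
      (fun z hz => ?_) (convex_closedBall x r)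
    · rw [← NNReal.coe_le_coe, coe_nnnorm, Real.coe_toNNReal C hC0]
      exact hC z hz
  -- time bound
  set s₀ := min s₁ (r / (4 * (M + 1))) with hs₀def
  have hs₀pos : 0 < s₀ := lt_min hs₁ (by positivity)
  have hs₀1 : s₀ ≤ s₁ := min_le_left _ _
  have hs₀M : s₀ * M ≤ r / 4 := by
    have h1 : s₀ ≤ r / (4 * (M + 1)) := min_le_right _ _
    have h2 : s₀ * M ≤ r / (4 * (M + 1)) * M := by nlinarith
    have h3 : r / (4 * (M + 1)) * M ≤ r / 4 := by
      rw [div_mul_eq_mul_div, div_le_div_iff₀ (by positivity) (by norm_num)]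
      nlinarith
    linarith
  -- trajectories
  have hψd : ∀ y ∈ Ω, ∀ s : ℝ, HasDerivAt (fun u => φ u y) (Y (φ s y)) s :=
    fun y hy s => hflow s y hy
  have hstays : ∀ y ∈ closedBall x (r / 2), ∀ s ∈ Icc (0:ℝ) s₀,
      φ s y ∈ closedBall x (3 / 4 * r) := fun y hy =>
    stays_in_ball hr0 hM (hψd y (hball hy)) (hφ0 y (hball hy)) hy hs₀pos.le hs₀M
  -- Lipschitz estimate for the flow maps
  have hgron : ∀ s ∈ Icc (0:ℝ) s₀, ∀ y ∈ closedBall x (r / 2), ∀ z ∈ closedBall x (r / 2),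
      dist (φ s y) (φ s z) ≤ dist y z * Real.exp ((L : ℝ) * s₀) := by
    intro s hs y hy z hz
    have h := traj_dist hLip (hψd y (hball hy)) (hψd z (hball hz))
      (fun u hu => closedBall_subset_closedBall (by linarith) (hstays y hy u hu))
      (fun u hu => closedBall_subset_closedBall (by linarith) (hstays z hz u hu))
      s hs
    rw [hφ0 y (hball hy), hφ0 z (hball hz)] at h
    calc dist (φ s y) (φ s z) ≤ dist y z * Real.exp ((L : ℝ) * s) := h
      _ ≤ dist y z * Real.exp ((L : ℝ) * s₀) := by
          apply mul_le_mul_of_nonneg_left _ dist_nonneg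
          exact Real.exp_le_exp.2 (mul_le_mul_of_nonneg_left hs.2 L.2)
  set K2 : NNReal := (Real.exp ((L : ℝ) * s₀)).toNNReal with hK2def
  have hφlip : ∀ s ∈ Icc (0:ℝ) s₀, LipschitzOnWith K2 (φ s) (closedBall x (r / 2)) := by
    intro s hs
    rw [lipschitzOnWith_iff_dist_le_mul]
    intro y hy z hz
    rw [hK2def, Real.coe_toNNReal _ (Real.exp_pos _).le, mul_comm]
    exact hgron s hs y hy z hz
  -- differentiability of flow maps at x
  have hdiffφ : ∀ s ∈ Icc (0:ℝ) s₁, DifferentiableAt ℝ (φ s) x := by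
    intro s hs
    by_contra h
    apply hne s hs
    rw [← hpush s x hx, fderiv_zero_of_not_differentiableAt h]
    rfl
  -- the integrand
  set d : ℝ → (Fin n → ℝ) := fun s => lam s x • (fderiv ℝ Y (φ s x)) (X (φ s x)) with hddef
  have hφxc : Continuous (fun s => φ s x) := by
    rw [continuous_iff_continuousAt]; exact fun s => (hψd x hx s).continuousAt
  have hd_cont : Continuous d := by
    have b1 : Continuous fun s => fderiv ℝ Y (φ s x) :=
      hY'.comp_continuous hφxc (fun s => hφΩ s hx)
    have b2 : Continuous fun s => X (φ s x) :=
      hX.comp_continuous hφxc (fun s => hφΩ s hx)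
    exact hlamc.smul (b1.clm_apply b2)
  refine ⟨s₀, hs₀pos, ?_⟩
  intro ε hε
  have hεIcc : ε ∈ Icc (0:ℝ) s₀ := ⟨hε.1.le, hε.2⟩
  -- integral representation of the flow
  have hrep : ∀ z ∈ closedBall x (r / 2),
      φ ε z - z = ∫ s in (0:ℝ)..ε, Y (φ s z) := by
    intro z hz
    have hcz : Continuous fun s => Y (φ s z) := by
      apply hYc.comp_continuous
      · rw [continuous_iff_continuousAt]; exact fun s => (hψd z (hball hz) s).continuousAt
      · exact fun s => hφΩ s (hball hz)
    have := intervalIntegral.integral_eq_sub_of_hasDerivAt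
      (f := fun u => φ u z) (f' := fun s => Y (φ s z))
      (fun t _ => hψd z (hball hz) t) (hcz.intervalIntegrable 0 ε)
    simpa [hφ0 z (hball hz)] using this.symm
  -- setup for parametric differentiation
  set v : Fin n → ℝ := X x with hvdef
  set c : ℝ → (Fin n → ℝ) := fun t => x + t • v with hcdef
  have hc0 : c 0 = x := by simp [hcdef]
  set δt : ℝ := (r / 2) / (‖v‖ + 1) with hδtdef
  have hδt : 0 < δt := by positivity
  have hcmap : ∀ t ∈ ball (0:ℝ) δt, c t ∈ closedBall x (r / 2) := by
    intro t ht
    rw [mem_closedBall, dist_eq_norm, hcdef]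
    simp only [add_sub_cancel_left]
    rw [norm_smul, Real.norm_eq_abs]
    have h1 : |t| ≤ δt := (mem_ball_zero_iff.1 ht).le
    calc |t| * ‖v‖ ≤ δt * ‖v‖ := mul_le_mul_of_nonneg_right h1 (norm_nonneg _)
      _ ≤ r / 2 := by
          rw [hδtdef, div_mul_eq_mul_div, div_le_iff₀ (by positivity)]
          nlinarith [norm_nonneg v, hr0]
  have hclip : LipschitzWith ‖v‖₊ c := by
    apply LipschitzWith.of_dist_le_mul
    intro a b
    rw [hcdef]
    simp only [dist_eq_norm, add_sub_add_left_eq_sub, ← sub_smul, norm_smul, Real.norm_eq_abs]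
    rw [coe_nnnorm, mul_comm]
  have hcder : HasDerivAt c v 0 := by
    have h := ((hasDerivAt_id (0:ℝ)).smul_const v).const_add x
    simpa [hcdef] using h
  -- derivative of the integrand family at t = 0
  have hDiff : ∀ s ∈ Set.uIoc (0:ℝ) ε, HasDerivAt (fun t => Y (φ s (c t))) (d s) 0 := by
    intro s hs
    have hsIcc : s ∈ Icc (0:ℝ) s₀ := by
      rw [Set.uIoc_of_le hε.1.le] at hs
      exact ⟨hs.1.le, hs.2.trans hε.2⟩
    have h2 : HasFDerivAt (φ s) (fderiv ℝ (φ s) x) x :=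
      (hdiffφ s ⟨hsIcc.1, hsIcc.2.trans hs₀1⟩).hasFDerivAt
    have h3 : HasDerivAt (fun t => φ s (c t)) (fderiv ℝ (φ s) x v) 0 := by
      refine HasFDerivAt.comp_hasDerivAt 0 ?_ hcder
      rw [hc0]; exact h2
    have h4 : HasDerivAt (fun t => Y (φ s (c t)))
        ((fderiv ℝ Y (φ s x)) (fderiv ℝ (φ s) x v)) 0 := by
      refine HasFDerivAt.comp_hasDerivAt 0 ?_ h3
      rw [hc0]; exact ((hYdiff _ (hφΩ s hx)).hasFDerivAt)
    rw [hvdef, hpush s x hx] at h4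
    simpa [hddef, _root_.map_smul] using h4
  -- Lipschitz bound for the family
  set B : NNReal := L * (K2 * ‖v‖₊) with hBdef
  have hFlip : ∀ s ∈ Set.uIoc (0:ℝ) ε,
      LipschitzOnWith (Real.nnabs ((B : ℝ))) (fun t => Y (φ s (c t))) (ball (0:ℝ) δt) := by
    intro s hs
    have hsIcc : s ∈ Icc (0:ℝ) s₀ := by
      rw [Set.uIoc_of_le hε.1.le] at hs
      exact ⟨hs.1.le, hs.2.trans hε.2⟩
    have l2 : LipschitzOnWith K2 (φ s) (closedBall x (r / 2)) := hφlip s hsIcc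
    have lc : LipschitzOnWith (K2 * ‖v‖₊) (fun t => φ s (c t)) (ball (0:ℝ) δt) :=
      l2.comp hclip.lipschitzOnWith (fun t ht => hcmap t ht)
    have l3 : LipschitzOnWith (L * (K2 * ‖v‖₊)) (fun t => Y (φ s (c t))) (ball (0:ℝ) δt) :=
      hLip.comp lc (fun t ht =>
        closedBall_subset_closedBall (by linarith) (hstays (c t) (hcmap t ht) s hsIcc))
    have hBB : Real.nnabs ((B : ℝ)) = B := Real.nnabs_coe B
    rw [hBB, hBdef]
    exact l3
  -- measurability facts
  have hF_meas : ∀ᶠ t in 𝓝 (0:ℝ), AEStronglyMeasurable (fun s => Y (φ s (c t)))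
      (MeasureTheory.volume.restrict (Set.uIoc (0:ℝ) ε)) := by
    filter_upwards [ball_mem_nhds (0:ℝ) hδt] with t ht
    have hco : Continuous fun s => Y (φ s (c t)) := by
      apply hYc.comp_continuous
      · rw [continuous_iff_continuousAt]
        exact fun s => (hψd (c t) (hball (hcmap t ht)) s).continuousAt
      · exact fun s => hφΩ s (hball (hcmap t ht))
    exact hco.aestronglyMeasurable
  have hF_int : IntervalIntegrable (fun s => Y (φ s (c 0))) MeasureTheory.volume 0 ε := by
    have hco : Continuous fun s => Y (φ s (c 0)) := by
      apply hYc.comp_continuous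
      · rw [continuous_iff_continuousAt]
        exact fun s => (hψd (c 0) (hball (hcmap 0 (mem_ball_self hδt))) s).continuousAt
      · exact fun s => hφΩ s (hball (hcmap 0 (mem_ball_self hδt)))
    exact hco.intervalIntegrable 0 ε
  obtain ⟨-, hder⟩ := intervalIntegral.hasDerivAt_integral_of_dominated_loc_of_lip
      (F := fun t s => Y (φ s (c t))) (F' := d) (x₀ := (0:ℝ)) (a := 0) (b := ε)
      (μ := MeasureTheory.volume) (bound := fun _ => ((B : ℝ)))
      (ball_mem_nhds 0 hδt) hF_meas hF_int hd_cont.aestronglyMeasurable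
      (MeasureTheory.ae_of_all _ hFlip) intervalIntegrable_const
      (MeasureTheory.ae_of_all _ hDiff)
  have heq : (fun t => φ ε (c t) - c t) =ᶠ[𝓝 (0:ℝ)]
      (fun t => ∫ s in (0:ℝ)..ε, Y (φ s (c t))) := by
    filter_upwards [ball_mem_nhds (0:ℝ) hδt] with t ht
    exact hrep (c t) (hcmap t ht)
  have hder2 : HasDerivAt (fun t => φ ε (c t) - c t) (∫ s in (0:ℝ)..ε, d s) 0 :=
    hder.congr_of_eventuallyEq heq
  have hder3 : HasDerivAt (fun t => φ ε (c t)) ((∫ s in (0:ℝ)..ε, d s) + v) 0 := by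
    have h := hder2.add hcder
    simpa [Pi.add_def] using h
  have hder4 : HasDerivAt (fun t => φ ε (c t)) (lam ε x • X (φ ε x)) 0 := by
    have h2 : HasFDerivAt (φ ε) (fderiv ℝ (φ ε) x) x :=
      (hdiffφ ε ⟨hε.1.le, hε.2.trans hs₀1⟩).hasFDerivAt
    have h2' : HasFDerivAt (φ ε) (fderiv ℝ (φ ε) x) (c 0) := by rw [hc0]; exact h2
    have h3 := h2'.comp_hasDerivAt 0 hcder
    rw [hvdef] at h3
    rw [hpush ε x hx] at h3
    exact h3
  have hkey := hder4.unique hder3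
  rw [hkey]
  exact add_comm _ _

theorem stmt_14 (n : ℕ) (Ω : Set (Fin n → ℝ)) (hΩ : IsOpen Ω)
    (X Y : (Fin n → ℝ) → (Fin n → ℝ))
    (hX : ContDiffOn ℝ 1 X Ω) (hY : ContDiffOn ℝ 1 Y Ω)
    -- `Y` is complete with flow `φ : ℝ × Ω → Ω`
    (φ : ℝ → (Fin n → ℝ) → (Fin n → ℝ))
    (hφΩ : ∀ ε : ℝ, Set.MapsTo (φ ε) Ω Ω)
    (hφ0 : ∀ x ∈ Ω, φ 0 x = x)
    (hflow : ∀ (ε : ℝ), ∀ x ∈ Ω, HasDerivAt (fun e => φ e x) (Y (φ ε x)) ε)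
    -- `λ : ℝ × Ω → ℝ` is differentiable in its first variable with `λ(0,x) = 1`
    (lam : ℝ → (Fin n → ℝ) → ℝ)
    (hlam : ∀ x ∈ Ω, ∀ ε : ℝ, DifferentiableAt ℝ (fun e => lam e x) ε)
    (hlam0 : ∀ x ∈ Ω, lam 0 x = 1)
    -- `Dφ_ε(x)·X(x) = λ(ε,x)·X(φ_ε(x))` for all `ε` and `x ∈ Ω`
    (hpush : ∀ (ε : ℝ), ∀ x ∈ Ω,
      fderiv ℝ (φ ε) x (X x) = lam ε x • X (φ ε x)) :
    -- then `Y` is a Lie symmetry of `X`: `[X, Y] = μ · X` with `μ(x) = ∂λ/∂ε(0,x)`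
    ∀ x ∈ Ω, lieBracket n X Y x = deriv (fun e => lam e x) 0 • X x := by
  intro x hx
  have hXc : ContinuousOn X Ω := hX.continuousOn
  have hXd : DifferentiableAt ℝ X x :=
    (hX.differentiableOn one_ne_zero).differentiableAt (hΩ.mem_nhds hx)
  have hφxc : Continuous (fun e => φ e x) := by
    rw [continuous_iff_continuousAt]; exact fun s => (hflow s x hx).continuousAt
  have hflow0 : HasDerivAt (fun e => φ e x) (Y x) 0 := by
    have h := hflow 0 x hx; rwa [hφ0 x hx] at h
  have hXφ : HasDerivAt (fun e => X (φ e x)) ((fderiv ℝ X x) (Y x)) 0 := by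
    have h2 : HasFDerivAt X (fderiv ℝ X x) (φ 0 x) := by
      rw [hφ0 x hx]; exact hXd.hasFDerivAt
    exact h2.comp_hasDerivAt 0 hflow0
  have hlamd : HasDerivAt (fun e => lam e x) (deriv (fun e => lam e x) 0) 0 :=
    (hlam x hx 0).hasDerivAt
  have hlamc : Continuous (fun e => lam e x) := by
    rw [continuous_iff_continuousAt]; exact fun s => (hlam x hx s).continuousAt
  by_cases hXx : X x = 0
  · -- the degenerate case `X x = 0`
    have hev : ∀ᶠ e in 𝓝 (0:ℝ), lam e x ≠ 0 := by
      apply hlamc.continuousAt.eventually_ne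
      rw [hlam0 x hx]; norm_num
    have hev2 : (fun e => X (φ e x)) =ᶠ[𝓝 (0:ℝ)] (fun _ => (0 : Fin n → ℝ)) := by
      filter_upwards [hev] with e he
      have hp := hpush e x hx
      rw [hXx] at hp
      simp only [map_zero] at hp
      rcases smul_eq_zero.1 hp.symm with h | h
      · exact absurd h he
      · exact h
    have hz : HasDerivAt (fun e => X (φ e x)) 0 0 :=
      (hasDerivAt_const (0:ℝ) (0 : Fin n → ℝ)).congr_of_eventuallyEq hev2
    have hXY0 := hXφ.unique hz
    simp [lieBracket, hXx, hXY0]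
  · -- the main case `X x ≠ 0`
    have hXφc : ContinuousAt (fun e => X (φ e x)) 0 := hXφ.continuousAt
    have hev : ∀ᶠ e in 𝓝 (0:ℝ), lam e x • X (φ e x) ≠ 0 := by
      apply (hlamc.continuousAt.smul hXφc).eventually_ne
      show lam 0 x • X (φ 0 x) ≠ 0
      rw [hlam0 x hx, hφ0 x hx, one_smul]
      exact hXx
    obtain ⟨δ, hδ0, hδ⟩ := Metric.eventually_nhds_iff.1 hev
    set s₁ := δ / 2 with hs₁def
    have hs₁ : 0 < s₁ := by positivity
    have hmem : ∀ s : ℝ, |s| ≤ s₁ → lam s x • X (φ s x) ≠ 0 := by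
      intro s hs
      apply hδ
      rw [Real.dist_eq, sub_zero]
      linarith
    obtain ⟨a, ha0, hA⟩ := key_onesided n Ω hΩ X Y hXc hY φ hφΩ hφ0 hflow lam hpush x hx
      hlamc s₁ hs₁ (fun s hs => hmem s (by rw [abs_of_nonneg hs.1]; exact hs.2))
    obtain ⟨b, hb0, hB⟩ := key_onesided n Ω hΩ X (fun z => -Y z) hXc hY.neg
      (fun e => φ (-e)) (fun e => hφΩ (-e))
      (by intro y hy; show φ (-(0:ℝ)) y = y; rw [neg_zero]; exact hφ0 y hy)
      (fun e y hy => by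
        have h := (hflow (-e) y hy).scomp e (hasDerivAt_neg e)
        simpa [Function.comp_def] using h)
      (fun e => lam (-e)) (fun e y hy => hpush (-e) y hy) x hx
      (hlamc.comp continuous_neg) s₁ hs₁
      (fun s hs => by
        have := hmem (-s) (by rw [abs_neg, abs_of_nonneg hs.1]; exact hs.2)
        simpa using this)
    set d : ℝ → (Fin n → ℝ) := fun s => lam s x • (fderiv ℝ Y (φ s x)) (X (φ s x)) with hddef
    have hBtrans : ∀ ε ∈ Ico (-b) (0:ℝ),
        lam ε x • X (φ ε x) = X x + ∫ s in (0:ℝ)..ε, d s := by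
      intro ε hε
      have hε' : -ε ∈ Ioc (0:ℝ) b := ⟨by linarith [hε.2], by linarith [hε.1]⟩
      have h := hB (-ε) hε'
      simp only [neg_neg] at h
      have hint : Set.EqOn (fun s => lam (-s) x •
          (fderiv ℝ (fun z => -Y z) (φ (-s) x)) (X (φ (-s) x))) (fun s => -d (-s))
          (Set.uIcc (0:ℝ) (-ε)) := by
        intro s _
        simp only [fderiv_fun_neg, ContinuousLinearMap.neg_apply, smul_neg, hddef]
      rw [intervalIntegral.integral_congr hint] at h
      rw [intervalIntegral.integral_neg] at h
      rw [intervalIntegral.integral_comp_neg (a := (0:ℝ)) (b := -ε) d] at h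
      rw [h, neg_neg]
      congr 1
      rw [intervalIntegral.integral_symm]
      simp
    set m := min a b with hmdef
    have hm : 0 < m := lt_min ha0 hb0
    have heq : (fun ε => lam ε x • X (φ ε x)) =ᶠ[𝓝 (0:ℝ)]
        (fun ε => X x + ∫ s in (0:ℝ)..ε, d s) := by
      filter_upwards [Ioo_mem_nhds (by linarith : -m < (0:ℝ)) hm] with ε hε
      rcases lt_trichotomy ε 0 with h | h | h
      · exact hBtrans ε ⟨by
          have := min_le_right a b
          linarith [hε.1], h⟩
      · subst h
        simp [hlam0 x hx, hφ0 x hx]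
      · exact hA ε ⟨h, le_trans hε.2.le (min_le_left a b)⟩
    have hY' : ContinuousOn (fderiv ℝ Y) Ω := hY.continuousOn_fderiv_of_isOpen hΩ le_rfl
    have hd_cont : Continuous d := by
      have b1 : Continuous fun s => fderiv ℝ Y (φ s x) :=
        hY'.comp_continuous hφxc (fun s => hφΩ s hx)
      have b2 : Continuous fun s => X (φ s x) :=
        hXc.comp_continuous hφxc (fun s => hφΩ s hx)
      exact hlamc.smul (b1.clm_apply b2)
    have hftc : HasDerivAt (fun ε => ∫ s in (0:ℝ)..ε, d s) (d 0) 0 :=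
      intervalIntegral.integral_hasDerivAt_right (hd_cont.intervalIntegrable 0 0)
        (hd_cont.stronglyMeasurableAtFilter _ _) hd_cont.continuousAt
    have hd0 : d 0 = (fderiv ℝ Y x) (X x) := by
      simp [hddef, hφ0 x hx, hlam0 x hx]
    have hR : HasDerivAt (fun ε => X x + ∫ s in (0:ℝ)..ε, d s) ((fderiv ℝ Y x) (X x)) 0 := by
      have h := hftc.const_add (X x)
      rwa [hd0] at h
    have hL2 : HasDerivAt (fun ε => lam ε x • X (φ ε x)) ((fderiv ℝ Y x) (X x)) 0 :=
      hR.congr_of_eventuallyEq heq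
    have hL : HasDerivAt (fun ε => lam ε x • X (φ ε x))
        (lam 0 x • ((fderiv ℝ X x) (Y x)) + deriv (fun e => lam e x) 0 • X (φ 0 x)) 0 :=
      hlamd.smul hXφ
    rw [hlam0 x hx, hφ0 x hx, one_smul] at hL
    have hfinal := hL.unique hL2
    show lieBracket n X Y x = deriv (fun e => lam e x) 0 • X x
    rw [lieBracket, ← hfinal]
    abel
end
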